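/- arXiv:2004.02469 — 4 statements merged into one kernel-verified Lean document; each statement's English description precedes it below -/
import Mathlib

section
/- (Existence for the fixed-horizon problem.) Assume M > m* and T ≥ T*. The set of measurable controls u : [0,T] → [0,M] whose associated state satisfies p_u(T) ≥ θ is nonempty, and the infimum of ∫₀^T u(t) dt over this set is attained by some admissible control. -/
open MeasureTheory intervalIntegral Set Filter
set_option maxHeartbeats 1000000

lemma abs_intervalIntegral_le {φ : ℝ → ℝ} (hφ : Integrable φ) (a b : ℝ) :
    |∫ x in a..b, φ x| ≤ ∫ x, |φ x| := by
  rw [← Real.norm_eq_abs]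
  calc ‖∫ x in a..b, φ x‖ ≤ ∫ x in Set.uIoc a b, ‖φ x‖ :=
        intervalIntegral.norm_integral_le_integral_norm_uIoc
    _ ≤ ∫ x, ‖φ x‖ := setIntegral_le_integral hφ.norm (ae_of_all _ fun x => norm_nonneg _)
    _ = ∫ x, |φ x| := by simp [Real.norm_eq_abs]

lemma primitive_hasDerivAt {φ : ℝ → ℝ} (hφc : Continuous φ) (t : ℝ) :
    HasDerivAt (fun u => ∫ x in (0:ℝ)..u, φ x) (φ t) t :=
  intervalIntegral.integral_hasDerivAt_right (hφc.intervalIntegrable _ _)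
    (hφc.stronglyMeasurableAtFilter _ _) hφc.continuousAt

/-- Chain rule / change of variables for primitives of integrable functions,
with a globally bounded continuous `h`. -/
lemma chain_rule_primitive {w h : ℝ → ℝ} (hw : Integrable w) (hh : Continuous h)
    {C : ℝ} (hC : ∀ x, |h x| ≤ C) (T : ℝ) (hT : 0 ≤ T) :
    ∫ s in (0:ℝ)..T, h (∫ r in (0:ℝ)..s, w r) * w s
      = ∫ x in (0:ℝ)..(∫ r in (0:ℝ)..T, w r), h x := by
  set F : ℝ → ℝ := fun t => ∫ r in (0:ℝ)..t, w r with hF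
  set Φ : ℝ → ℝ := fun x => ∫ y in (0:ℝ)..x, h y with hΦ
  have hC0 : 0 ≤ C := le_trans (abs_nonneg _) (hC 0)
  -- approximating sequence
  have Happrox : ∀ n : ℕ, ∃ g : ℝ → ℝ, Continuous g ∧ Integrable g ∧
      ∫ x, ‖w x - g x‖ ≤ 1 / (n + 1) := by
    intro n
    obtain ⟨g, _, hint, hcont, hgint⟩ :=
      hw.exists_hasCompactSupport_integral_sub_le (ε := 1 / (n + 1)) (by positivity)
    exact ⟨g, hcont, hgint, hint⟩
  choose g hgc hgi hgapp using Happrox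
  set q : ℕ → ℝ → ℝ := fun n t => ∫ r in (0:ℝ)..t, g n r with hq
  have hqF : ∀ n t, |q n t - F t| ≤ 1 / (n + 1) := by
    intro n t
    have : q n t - F t = ∫ r in (0:ℝ)..t, (g n r - w r) :=
      (intervalIntegral.integral_sub ((hgi n).intervalIntegrable)
        (hw.intervalIntegrable)).symm
    rw [this]
    calc |∫ r in (0:ℝ)..t, (g n r - w r)| ≤ ∫ x, |g n x - w x| :=
          abs_intervalIntegral_le ((hgi n).sub hw) _ _
      _ = ∫ x, ‖w x - g n x‖ := by
          simp only [Real.norm_eq_abs, abs_sub_comm]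
      _ ≤ 1 / (n + 1) := hgapp n
  have htend0 : Tendsto (fun n : ℕ => 1 / ((n : ℝ) + 1)) atTop (nhds 0) :=
    tendsto_one_div_add_atTop_nhds_zero_nat
  have hqFt : ∀ t, Tendsto (fun n => q n t) atTop (nhds (F t)) := by
    intro t
    rw [tendsto_iff_dist_tendsto_zero]
    refine squeeze_zero (fun n => dist_nonneg) (fun n => ?_) htend0
    rw [Real.dist_eq]; exact hqF n t
  -- the identity for smooth approximations
  have key : ∀ n, ∫ s in (0:ℝ)..T, h (q n s) * g n s = Φ (q n T) := by
    intro n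
    have hqd : ∀ t, HasDerivAt (q n) (g n t) t := primitive_hasDerivAt (hgc n)
    have hqcont : Continuous (q n) := by
      rw [continuous_iff_continuousAt]; exact fun t => (hqd t).continuousAt
    have hcomp : ∀ t ∈ uIcc (0:ℝ) T, HasDerivAt (fun x => Φ (q n x))
        (h (q n t) * g n t) t := by
      intro t _
      exact (primitive_hasDerivAt hh (q n t)).comp t (hqd t)
    have := intervalIntegral.integral_eq_sub_of_hasDerivAt hcomp
      (((hh.comp hqcont).mul (hgc n)).intervalIntegrable _ _)
    rw [this]
    have : q n 0 = 0 := intervalIntegral.integral_same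
    simp [this, hΦ]
  -- limits
  have hΦlip : ∀ a b : ℝ, |Φ b - Φ a| ≤ C * |b - a| := by
    intro a b
    have : Φ b - Φ a = ∫ y in a..b, h y := by
      rw [hΦ]
      exact (intervalIntegral.integral_interval_sub_left (hh.intervalIntegrable _ _)
        (hh.intervalIntegrable _ _))
    rw [this, ← Real.norm_eq_abs]
    exact intervalIntegral.norm_integral_le_of_norm_le_const
      (fun x _ => by rw [Real.norm_eq_abs]; exact hC x)
  have hlim1 : Tendsto (fun n => Φ (q n T)) atTop (nhds (Φ (F T))) := by
    rw [tendsto_iff_dist_tendsto_zero]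
    have hb := htend0.const_mul C
    rw [mul_zero] at hb
    refine squeeze_zero (fun n => dist_nonneg) (fun n => ?_) hb
    rw [Real.dist_eq]
    calc |Φ (q n T) - Φ (F T)| ≤ C * |q n T - F T| := hΦlip _ _
      _ ≤ C * (1 / (↑n + 1)) := mul_le_mul_of_nonneg_left (hqF n T) hC0
  -- limit of the integrals
  have hbm : ∀ n, Integrable (fun s => h (q n s) * w s) := by
    intro n
    have hqcont : Continuous (q n) := by
      rw [continuous_iff_continuousAt]
      exact fun t => (primitive_hasDerivAt (hgc n) t).continuousAt
    exact hw.bdd_mul (hh.comp hqcont).aestronglyMeasurable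
      (ae_of_all _ fun x => by rw [Real.norm_eq_abs]; exact hC _)
  have hFcont : Continuous F :=
    intervalIntegral.continuous_primitive (fun a b => hw.intervalIntegrable) 0
  have hbF : Integrable (fun s => h (F s) * w s) :=
    hw.bdd_mul (hh.comp hFcont).aestronglyMeasurable
      (ae_of_all _ fun x => by rw [Real.norm_eq_abs]; exact hC _)
  have hsplit : ∀ n, (∫ s in (0:ℝ)..T, h (q n s) * g n s)
      - (∫ s in (0:ℝ)..T, h (F s) * w s)
      = (∫ s in (0:ℝ)..T, h (q n s) * (g n s - w s))
        + ∫ s in (0:ℝ)..T, (h (q n s) - h (F s)) * w s := by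
    intro n
    have hqcont : Continuous (q n) := by
      rw [continuous_iff_continuousAt]
      exact fun t => (primitive_hasDerivAt (hgc n) t).continuousAt
    have h1 : IntervalIntegrable (fun s => h (q n s) * (g n s - w s)) volume 0 T := by
      refine (Integrable.bdd_mul ((hgi n).sub hw) (hh.comp hqcont).aestronglyMeasurable
        (ae_of_all _ fun x => by rw [Real.norm_eq_abs]; exact hC _)).intervalIntegrable
    have h2 : IntervalIntegrable (fun s => (h (q n s) - h (F s)) * w s) volume 0 T :=
      (((hbm n).sub hbF).congr (Filter.Eventually.of_forall (fun s => by simp only [Pi.sub_apply]; ring))).intervalIntegrable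
    have hgm : IntervalIntegrable (fun s => h (q n s) * g n s) volume 0 T :=
      ((hh.comp hqcont).mul (hgc n)).intervalIntegrable _ _
    rw [← intervalIntegral.integral_sub hgm hbF.intervalIntegrable,
      ← intervalIntegral.integral_add h1 h2]
    apply intervalIntegral.integral_congr
    intro s _
    ring
  -- the two error terms tend to zero
  have hA : Tendsto (fun n => ∫ s in (0:ℝ)..T, h (q n s) * (g n s - w s)) atTop (nhds 0) := by
    have hb := htend0.const_mul C
    rw [mul_zero] at hb
    refine squeeze_zero_norm (fun n => ?_) hb
    have hqcont : Continuous (q n) := by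
      rw [continuous_iff_continuousAt]
      exact fun t => (primitive_hasDerivAt (hgc n) t).continuousAt
    have hint : Integrable (fun s => h (q n s) * (g n s - w s)) :=
      Integrable.bdd_mul ((hgi n).sub hw) (hh.comp hqcont).aestronglyMeasurable
        (ae_of_all _ fun x => by rw [Real.norm_eq_abs]; exact hC _)
    rw [Real.norm_eq_abs]
    calc |∫ s in (0:ℝ)..T, h (q n s) * (g n s - w s)|
        ≤ ∫ s, |h (q n s) * (g n s - w s)| := abs_intervalIntegral_le hint _ _
      _ ≤ ∫ s, C * |g n s - w s| := by
          refine integral_mono_of_nonneg (Filter.Eventually.of_forall fun s => abs_nonneg _)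
            (((hgi n).sub hw).abs.const_mul C) (Filter.Eventually.of_forall fun s => ?_)
          show |h (q n s) * (g n s - w s)| ≤ C * |g n s - w s|
          rw [abs_mul]
          exact mul_le_mul_of_nonneg_right (hC _) (abs_nonneg _)
      _ = C * ∫ s, |g n s - w s| := integral_const_mul C _
      _ ≤ C * (1 / (↑n + 1)) := by
          refine mul_le_mul_of_nonneg_left ?_ hC0
          calc (∫ s, |g n s - w s|) = ∫ s, ‖w s - g n s‖ := by
                simp only [Real.norm_eq_abs, abs_sub_comm]
            _ ≤ 1 / (↑n + 1) := hgapp n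
  have hB : Tendsto (fun n => ∫ s in (0:ℝ)..T, (h (q n s) - h (F s)) * w s) atTop (nhds 0) := by
    have heq : ∀ n, (∫ s in (0:ℝ)..T, (h (q n s) - h (F s)) * w s)
        = ∫ s in Ioc (0:ℝ) T, (h (q n s) - h (F s)) * w s := fun n =>
      intervalIntegral.integral_of_le hT
    simp only [heq]
    have h0 : Tendsto (fun n => ∫ s in Ioc (0:ℝ) T, (h (q n s) - h (F s)) * w s) atTop
        (nhds (∫ s in Ioc (0:ℝ) T, (0:ℝ))) := by
      refine tendsto_integral_of_dominated_convergence (fun s => 2 * C * |w s|) ?_ ?_ ?_ ?_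
      · intro n
        have hqcont : Continuous (q n) := by
          rw [continuous_iff_continuousAt]
          exact fun t => (primitive_hasDerivAt (hgc n) t).continuousAt
        exact (((hh.comp hqcont).sub (hh.comp hFcont)).aestronglyMeasurable.mul
          hw.aestronglyMeasurable).restrict
      · exact (hw.abs.const_mul (2*C)).restrict
      · intro n
        filter_upwards with s
        rw [Real.norm_eq_abs, abs_mul]
        refine mul_le_mul_of_nonneg_right ?_ (abs_nonneg _)
        calc |h (q n s) - h (F s)| ≤ |h (q n s)| + |h (F s)| := abs_sub _ _
          _ ≤ C + C := add_le_add (hC _) (hC _)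
          _ = 2 * C := by ring
      · filter_upwards with s
        have : Tendsto (fun n => h (q n s) - h (F s)) atTop (nhds (h (F s) - h (F s))) :=
          ((hh.continuousAt.tendsto.comp (hqFt s)).sub tendsto_const_nhds)
        rw [sub_self] at this
        simpa using this.mul_const (w s)
    simpa using h0
  -- combine
  have hmain : Tendsto (fun n => ∫ s in (0:ℝ)..T, h (q n s) * g n s) atTop
      (nhds (∫ s in (0:ℝ)..T, h (F s) * w s)) := by
    have := (hA.add hB)
    rw [add_zero] at this
    have h2 : Tendsto (fun n => ((∫ s in (0:ℝ)..T, h (q n s) * (g n s - w s))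
        + ∫ s in (0:ℝ)..T, (h (q n s) - h (F s)) * w s)
        + (∫ s in (0:ℝ)..T, h (F s) * w s)) atTop
        (nhds (0 + ∫ s in (0:ℝ)..T, h (F s) * w s)) := this.add_const _
    rw [zero_add] at h2
    refine h2.congr fun n => ?_
    rw [← hsplit n]
    ring
  simp only [key] at hmain
  exact tendsto_nhds_unique hmain hlim1

/-- A pair (u,p) is an admissible control/state pair on [0,T] with control bound M:
u is measurable with values in [0,M], and p is the (Carathéodory / absolutely
continuous) solution of p' = f(p) + u·g(p) a.e. on (0,T) with p(0) = 0, expressed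
through the equivalent integral formulation. -/
def IsTrajectory (f g : ℝ → ℝ) (T M : ℝ) (u p : ℝ → ℝ) : Prop :=
  Measurable u ∧ (∀ t, u t ∈ Set.Icc (0:ℝ) M) ∧
  ContinuousOn p (Set.Icc 0 T) ∧ p 0 = 0 ∧
  ∀ t ∈ Set.Icc (0:ℝ) T, p t = ∫ s in (0:ℝ)..t, (f (p s) + u s * g (p s))

/-- existence for the fixed-horizon problem: for M > m* and T ≥ T*,
the set of admissible controls with p_u(T) ≥ θ is nonempty and the infimum of the cost
∫₀^T u over this set is attained. -/
theorem stmt_13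
    (b1 b2 d1 d2 K sh : ℝ)
    (hb1 : 0 < b1) (hb2 : 0 < b2) (hd1 : 0 < d1) (hd2 : 0 < d2)
    (hK : 0 < K) (hsh0 : 0 < sh) (hsh1 : sh ≤ 1)
    (hlow : 1 - sh < d1 * b2 / (d2 * b1)) (hhigh : d1 * b2 / (d2 * b1) < 1)
    (f g : ℝ → ℝ)
    (hf : ∀ p, f p = p * (1 - p) * (d1 * b2 - d2 * b1 * (1 - sh * p)) /
      (b1 * (1 - p) * (1 - sh * p) + b2 * p))
    (hg : ∀ p, g p = (1 / K) * (b1 * (1 - p) * (1 - sh * p)) /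
      (b1 * (1 - p) * (1 - sh * p) + b2 * p))
    (θ : ℝ) (hθ : θ = (1 / sh) * (1 - d1 * b2 / (d2 * b1)))
    (mstar : ℝ)
    (hmstar : IsGreatest ((fun p => -f p / g p) '' Set.Icc 0 θ) mstar)
    (M : ℝ) (hM : mstar < M)
    (Tstar : ℝ) (hTstar : Tstar = ∫ ν in (0:ℝ)..θ, (f ν + M * g ν)⁻¹)
    (T : ℝ) (hT : Tstar ≤ T) :
    ∃ u p : ℝ → ℝ, IsTrajectory f g T M u p ∧ θ ≤ p T ∧
      ∀ v q : ℝ → ℝ, IsTrajectory f g T M v q → θ ≤ q T →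
        (∫ t in (0:ℝ)..T, u t) ≤ ∫ t in (0:ℝ)..T, v t := by
  have hd2b1 : 0 < d2 * b1 := mul_pos hd2 hb1
  set r : ℝ := d1 * b2 / (d2 * b1) with hr
  have hr0 : 0 < r := div_pos (mul_pos hd1 hb2) hd2b1
  have hθpos : 0 < θ := by
    rw [hθ]
    exact mul_pos (by positivity) (by linarith)
  have hshθ : sh * θ = 1 - r := by rw [hθ]; field_simp
  have hθlt1 : θ < 1 := by
    have h1 : sh * θ < sh * 1 := by rw [hshθ]; linarith
    exact lt_of_mul_lt_mul_left h1 hsh0.le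
  -- positivity of the denominators and g, nonpositivity of f on [0,θ]
  have hone : ∀ p ∈ Icc (0:ℝ) θ, r ≤ 1 - sh * p := by
    intro p hp
    have : sh * p ≤ sh * θ := mul_le_mul_of_nonneg_left hp.2 hsh0.le
    rw [hshθ] at this; linarith
  have hN : ∀ p ∈ Icc (0:ℝ) θ, 0 < b1 * (1 - p) * (1 - sh * p) := by
    intro p hp
    have h1 : 0 < 1 - p := by have := hp.2; linarith
    have h2 : 0 < 1 - sh * p := lt_of_lt_of_le hr0 (hone p hp)
    positivity
  have hD : ∀ p ∈ Icc (0:ℝ) θ, 0 < b1 * (1 - p) * (1 - sh * p) + b2 * p := by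
    intro p hp
    have h1 := hN p hp
    have h2 : 0 ≤ b2 * p := mul_nonneg hb2.le hp.1
    linarith
  have hgpos : ∀ p ∈ Icc (0:ℝ) θ, 0 < g p := by
    intro p hp
    rw [hg]
    have h1 := hN p hp
    have h2 := hD p hp
    positivity
  have hfnonpos : ∀ p ∈ Icc (0:ℝ) θ, f p ≤ 0 := by
    intro p hp
    rw [hf]
    apply div_nonpos_of_nonpos_of_nonneg _ (hD p hp).le
    have h1 : 0 ≤ p * (1 - p) := mul_nonneg hp.1 (by have := hp.2; linarith)
    have h2 : d1 * b2 - d2 * b1 * (1 - sh * p) ≤ 0 := by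
      have h3 := hone p hp
      have h4 : d2 * b1 * r ≤ d2 * b1 * (1 - sh * p) :=
        mul_le_mul_of_nonneg_left h3 hd2b1.le
      have h5 : d2 * b1 * r = d1 * b2 := by rw [hr]; field_simp
      linarith
    exact mul_nonpos_of_nonneg_of_nonpos h1 h2
  have hfθ : f θ = 0 := by
    rw [hf]
    have h1 : 1 - sh * θ = r := by rw [hshθ]; ring
    have h2 : d2 * b1 * r = d1 * b2 := by rw [hr]; field_simp
    rw [h1, h2]
    simp
  have hf0 : f 0 = 0 := by rw [hf]; simp
  have hg0 : g 0 = 1 / K := by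
    rw [hg]
    field_simp
    simp [hb1.ne']
  have hmub : ∀ p ∈ Icc (0:ℝ) θ, -f p / g p ≤ mstar := fun p hp =>
    hmstar.2 (Set.mem_image_of_mem _ hp)
  have hM0 : 0 < M := by
    have h0 : -f 0 / g 0 ≤ mstar := hmub 0 ⟨le_refl _, hθpos.le⟩
    rw [hf0] at h0
    simp at h0
    linarith
  set G : ℝ → ℝ := fun p => f p + M * g p with hG
  have hGpos : ∀ p ∈ Icc (0:ℝ) θ, 0 < G p := by
    intro p hp
    have h1 : -f p / g p < M := lt_of_le_of_lt (hmub p hp) hM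
    have h2 : -f p < M * g p := (div_lt_iff₀ (hgpos p hp)).mp h1
    simp only [hG]; linarith
  -- continuity of f, g, G on [0,θ]
  have hfcont : ContinuousOn f (Icc (0:ℝ) θ) := by
    have : f = fun p => p * (1 - p) * (d1 * b2 - d2 * b1 * (1 - sh * p)) /
        (b1 * (1 - p) * (1 - sh * p) + b2 * p) := funext hf
    rw [this]
    exact ContinuousOn.div (by fun_prop) (by fun_prop) (fun p hp => (hD p hp).ne')
  have hgcont : ContinuousOn g (Icc (0:ℝ) θ) := by
    have : g = fun p => (1 / K) * (b1 * (1 - p) * (1 - sh * p)) /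
        (b1 * (1 - p) * (1 - sh * p) + b2 * p) := funext hg
    rw [this]
    exact ContinuousOn.div (by fun_prop) (by fun_prop) (fun p hp => (hD p hp).ne')
  have hGcont : ContinuousOn G (Icc (0:ℝ) θ) :=
    hfcont.add (continuousOn_const.mul hgcont)
  -- the clamp function
  set c : ℝ → ℝ := fun p => max 0 (min p θ) with hc
  have hccont : Continuous c := (continuous_const.max (continuous_id.min continuous_const))
  have hcmem : ∀ p, c p ∈ Icc (0:ℝ) θ := by
    intro p
    constructor
    · exact le_max_left _ _
    · exact max_le hθpos.le (min_le_right _ _)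
  have hcid : ∀ p ∈ Icc (0:ℝ) θ, c p = p := by
    intro p hp
    simp only [hc]
    rw [min_eq_left hp.2, max_eq_right hp.1]
  set G' : ℝ → ℝ := fun p => G (c p) with hG'
  have hG'cont : Continuous G' := hGcont.comp_continuous hccont hcmem
  have hG'pos : ∀ p, 0 < G' p := fun p => hGpos _ (hcmem p)
  have hG'id : ∀ p ∈ Icc (0:ℝ) θ, G' p = G p := fun p hp => by
    simp only [hG']; rw [hcid p hp]
  -- the time-to-level function τ and its inverse P
  set τ : ℝ → ℝ := fun p => ∫ ν in (0:ℝ)..p, (G' ν)⁻¹ with hτ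
  have hG'invcont : Continuous fun ν => (G' ν)⁻¹ :=
    hG'cont.inv₀ (fun ν => (hG'pos ν).ne')
  have hτd : ∀ p, HasDerivAt τ (G' p)⁻¹ p := primitive_hasDerivAt hG'invcont
  have hτmono : StrictMono τ := by
    apply strictMono_of_deriv_pos
    intro p
    rw [(hτd p).deriv]
    exact inv_pos.mpr (hG'pos p)
  have hτ0 : τ 0 = 0 := intervalIntegral.integral_same
  have hτθ : τ θ = Tstar := by
    rw [hτ, hTstar]
    apply intervalIntegral.integral_congr
    intro ν hν
    rw [uIcc_of_le hθpos.le] at hν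
    show (G' ν)⁻¹ = (f ν + M * g ν)⁻¹
    rw [hG'id ν hν]
  have hTstarpos : 0 < Tstar := by rw [← hτθ, ← hτ0]; exact hτmono hθpos
  have hT0 : (0:ℝ) ≤ T := le_trans hTstarpos.le hT
  -- surjectivity of τ
  have hτcont : Continuous τ := by
    rw [continuous_iff_continuousAt]; exact fun t => (hτd t).continuousAt
  have hτ_ge : ∀ p, θ ≤ p → τ p = Tstar + (p - θ) * (G θ)⁻¹ := by
    intro p hp
    have h1 : τ p - τ θ = ∫ ν in θ..p, (G' ν)⁻¹ :=
      (intervalIntegral.integral_interval_sub_left (hG'invcont.intervalIntegrable _ _)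
        (hG'invcont.intervalIntegrable _ _))
    have h2 : (∫ ν in θ..p, (G' ν)⁻¹) = ∫ ν in θ..p, (G θ)⁻¹ := by
      apply intervalIntegral.integral_congr
      intro ν hν
      rw [uIcc_of_le hp] at hν
      have hcν : c ν = θ := by
        simp only [hc]
        rw [min_eq_right hν.1, max_eq_right hθpos.le]
      show (G' ν)⁻¹ = (G θ)⁻¹
      simp only [hG']
      rw [hcν]
    rw [h2, intervalIntegral.integral_const, smul_eq_mul] at h1
    rw [hτθ] at h1
    linarith
  have hτ_le : ∀ p, p ≤ 0 → τ p = p * (G 0)⁻¹ := by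
    intro p hp
    have h2 : (∫ ν in (0:ℝ)..p, (G' ν)⁻¹) = ∫ ν in (0:ℝ)..p, (G 0)⁻¹ := by
      apply intervalIntegral.integral_congr
      intro ν hν
      rw [uIcc_comm, uIcc_of_le hp] at hν
      have hcν : c ν = 0 := by
        simp only [hc]
        rw [min_eq_left (le_trans hν.2 hθpos.le), max_eq_left hν.2]
      show (G' ν)⁻¹ = (G 0)⁻¹
      simp only [hG']
      rw [hcν]
    show (∫ ν in (0:ℝ)..p, (G' ν)⁻¹) = p * (G 0)⁻¹
    rw [h2, intervalIntegral.integral_const, smul_eq_mul, sub_zero]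
  have hτtop : Filter.Tendsto τ Filter.atTop Filter.atTop := by
    have hbase : Filter.Tendsto (fun p : ℝ => Tstar + (p - θ) * (G θ)⁻¹)
        Filter.atTop Filter.atTop := by
      apply Filter.tendsto_atTop_add_const_left
      apply Filter.Tendsto.atTop_mul_const (inv_pos.mpr (hGpos θ ⟨hθpos.le, le_refl _⟩))
      exact Filter.tendsto_atTop_add_const_right _ _ Filter.tendsto_id
    refine hbase.congr' ?_
    filter_upwards [Filter.eventually_ge_atTop θ] with p hp
    exact (hτ_ge p hp).symm
  have hτbot : Filter.Tendsto τ Filter.atBot Filter.atBot := by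
    have hbase : Filter.Tendsto (fun p : ℝ => p * (G 0)⁻¹) Filter.atBot Filter.atBot := by
      apply Filter.Tendsto.atBot_mul_const (inv_pos.mpr (hGpos 0 ⟨le_refl _, hθpos.le⟩))
      exact Filter.tendsto_id
    refine hbase.congr' ?_
    filter_upwards [Filter.eventually_le_atBot (0:ℝ)] with p hp
    exact (hτ_le p hp).symm
  have hτsurj : Function.Surjective τ := hτcont.surjective hτtop hτbot
  set e := StrictMono.orderIsoOfSurjective τ hτmono hτsurj with he
  set P : ℝ → ℝ := fun t => e.symm t with hP
  have hPτ : ∀ p, P (τ p) = p := fun p =>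
    StrictMono.orderIsoOfSurjective_symm_apply_self τ hτmono hτsurj p
  have hτP : ∀ t, τ (P t) = t := fun t =>
    StrictMono.orderIsoOfSurjective_self_symm_apply τ hτmono hτsurj t
  have hPcont : Continuous P := by
    have := OrderIso.continuous e.symm
    exact this
  have hPmono : StrictMono P := e.symm.strictMono
  have hP0 : P 0 = 0 := by have h := hPτ 0; rwa [hτ0] at h
  have hPTstar : P Tstar = θ := by rw [← hτθ]; exact hPτ θ
  have hPd : ∀ t, HasDerivAt P (G' (P t)) t := by
    intro t
    have h := HasDerivAt.of_local_left_inverse (hPcont.continuousAt)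
      (hτd (P t)) (inv_ne_zero (hG'pos (P t)).ne')
      (Filter.Eventually.of_forall hτP)
    rwa [inv_inv] at h
  have hPint : ∀ t : ℝ, P t = ∫ s in (0:ℝ)..t, G' (P s) := by
    intro t
    have h := intervalIntegral.integral_eq_sub_of_hasDerivAt
      (f := P) (f' := fun s => G' (P s)) (a := 0) (b := t)
      (fun s _ => hPd s) ((hG'cont.comp hPcont).intervalIntegrable _ _)
    rw [h, hP0, sub_zero]
    -- the candidate optimal control and state
  set u : ℝ → ℝ := fun t => if t ≤ Tstar then M else 0 with hu
  set p : ℝ → ℝ := fun t => P (min t Tstar) with hp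
  have humeas : Measurable u := by
    apply Measurable.ite (measurableSet_Iic (a := Tstar)) <;> exact measurable_const
  have humem : ∀ t, u t ∈ Icc (0:ℝ) M := by
    intro t
    simp only [hu]
    split_ifs
    · exact ⟨hM0.le, le_refl _⟩
    · exact ⟨le_refl _, hM0.le⟩
  have hpcont : Continuous p := hPcont.comp (continuous_id.min continuous_const)
  have hp00 : p 0 = 0 := by
    simp only [hp]
    rw [min_eq_left hTstarpos.le, hP0]
  have hpmem : ∀ t, 0 ≤ t → p t ∈ Icc (0:ℝ) θ := by
    intro t ht
    constructor
    · rw [← hP0]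
      exact hPmono.monotone (le_min ht hTstarpos.le)
    · rw [← hPTstar]
      exact hPmono.monotone (min_le_right _ _)
  -- the integrand along (u,p) agrees with G' ∘ P on [0, Tstar]
  have hXeq : ∀ s ∈ Icc (0:ℝ) Tstar, f (p s) + u s * g (p s) = G' (P s) := by
    intro s hs
    have h1 : u s = M := if_pos hs.2
    have h2 : p s = P s := by simp only [hp]; rw [min_eq_left hs.2]
    have h3 : P s ∈ Icc (0:ℝ) θ := by rw [← h2]; exact hpmem s hs.1
    rw [h1, h2, hG'id _ h3]
  have hptraj : ∀ t ∈ Icc (0:ℝ) T, p t = ∫ s in (0:ℝ)..t, (f (p s) + u s * g (p s)) := by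
    intro t ht
    rcases le_or_gt t Tstar with hcase | hcase
    · have hmin : min t Tstar = t := min_eq_left hcase
      have heq : (∫ s in (0:ℝ)..t, (f (p s) + u s * g (p s)))
          = ∫ s in (0:ℝ)..t, G' (P s) := by
        apply intervalIntegral.integral_congr
        intro s hs
        rw [uIcc_of_le ht.1] at hs
        exact hXeq s ⟨hs.1, le_trans hs.2 hcase⟩
      rw [heq, ← hPint t]
      simp only [hp, hmin]
    · have hmin : min t Tstar = Tstar := min_eq_right hcase.le
      have hint1 : IntervalIntegrable (fun s => f (p s) + u s * g (p s)) volume 0 Tstar := by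
        rw [intervalIntegrable_iff_integrableOn_Ioc_of_le hTstarpos.le]
        apply (((hG'cont.comp hPcont).intervalIntegrable 0 Tstar).1.congr_fun ?_
          measurableSet_Ioc).congr_set_ae ?_
        · intro s hs
          exact (hXeq s ⟨hs.1.le, hs.2⟩).symm
        · rfl
      have hint2 : IntervalIntegrable (fun s => f (p s) + u s * g (p s)) volume Tstar t := by
        rw [intervalIntegrable_iff_integrableOn_Ioc_of_le hcase.le]
        apply ((integrableOn_zero (s := Ioc Tstar t)).congr_fun ?_ measurableSet_Ioc)
        intro s hs
        show (0:ℝ) = f (p s) + u s * g (p s)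
        have h1 : u s = 0 := if_neg (not_le.mpr hs.1)
        have h2 : p s = θ := by
          simp only [hp]
          rw [min_eq_right (le_of_lt hs.1), hPTstar]
        rw [h1, h2, hfθ]
        simp
      rw [← intervalIntegral.integral_add_adjacent_intervals hint1 hint2]
      have hI1 : (∫ s in (0:ℝ)..Tstar, (f (p s) + u s * g (p s))) = θ := by
        have heq : (∫ s in (0:ℝ)..Tstar, (f (p s) + u s * g (p s)))
            = ∫ s in (0:ℝ)..Tstar, G' (P s) := by
          apply intervalIntegral.integral_congr
          intro s hs
          rw [uIcc_of_le hTstarpos.le] at hs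
          exact hXeq s hs
        rw [heq, ← hPint Tstar, hPTstar]
      have hI2 : (∫ s in Tstar..t, (f (p s) + u s * g (p s))) = 0 := by
        rw [intervalIntegral.integral_of_le hcase.le]
        rw [MeasureTheory.setIntegral_congr_fun measurableSet_Ioc (g := fun _ => (0:ℝ)) ?_]
        · simp
        · intro s hs
          show f (p s) + u s * g (p s) = 0
          have h1 : u s = 0 := if_neg (not_le.mpr hs.1)
          have h2 : p s = θ := by
            simp only [hp]
            rw [min_eq_right (le_of_lt hs.1), hPTstar]
          rw [h1, h2, hfθ]
          simp
      rw [hI1, hI2, add_zero]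
      simp only [hp, hmin, hPTstar]
  have hpT : θ ≤ p T := by
    simp only [hp]
    rw [min_eq_right hT, hPTstar]
  -- the cost of u
  have hucost : (∫ t in (0:ℝ)..T, u t) = M * Tstar := by
    have hint1 : IntervalIntegrable u volume 0 Tstar := by
      rw [intervalIntegrable_iff_integrableOn_Ioc_of_le hTstarpos.le]
      refine IntegrableOn.congr_fun (f := fun _ => M)
        (integrableOn_const measure_Ioc_lt_top.ne) ?_ measurableSet_Ioc
      intro s hs
      show M = u s
      exact (if_pos hs.2).symm
    have hint2 : IntervalIntegrable u volume Tstar T := by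
      rw [intervalIntegrable_iff_integrableOn_Ioc_of_le hT]
      refine IntegrableOn.congr_fun (f := fun _ => (0:ℝ)) integrableOn_zero ?_ measurableSet_Ioc
      intro s hs
      show (0:ℝ) = u s
      exact (if_neg (not_le.mpr hs.1)).symm
    rw [← intervalIntegral.integral_add_adjacent_intervals hint1 hint2]
    have hI1 : (∫ s in (0:ℝ)..Tstar, u s) = M * Tstar := by
      have heq : (∫ s in (0:ℝ)..Tstar, u s) = ∫ s in (0:ℝ)..Tstar, M := by
        apply intervalIntegral.integral_congr
        intro s hs
        rw [uIcc_of_le hTstarpos.le] at hs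
        exact if_pos hs.2
      rw [heq, intervalIntegral.integral_const, smul_eq_mul, sub_zero, mul_comm]
    have hI2 : (∫ s in Tstar..T, u s) = 0 := by
      rw [intervalIntegral.integral_of_le hT]
      rw [MeasureTheory.setIntegral_congr_fun measurableSet_Ioc (g := fun _ => (0:ℝ)) ?_]
      · simp
      · intro s hs
        show u s = 0
        exact if_neg (not_le.mpr hs.1)
    rw [hI1, hI2, add_zero]
    -- minimum of G on [0,θ] and the bound C
  obtain ⟨p₀, hp₀mem, hp₀min'⟩ := isCompact_Icc.exists_isMinOn
    (nonempty_Icc.mpr hθpos.le) hGcont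
  have hp₀min : ∀ y ∈ Icc (0:ℝ) θ, G p₀ ≤ G y := fun y hy => hp₀min' hy
  have hGp₀ : 0 < G p₀ := hGpos p₀ hp₀mem
  set C : ℝ := M / G p₀ with hCdef
  have hCpos : 0 < C := div_pos hM0 hGp₀
  set ht : ℝ → ℝ := fun x => M / G' x with hhtdef
  have ht_cont : Continuous ht := continuous_const.div hG'cont (fun x => (hG'pos x).ne')
  have ht_nonneg : ∀ x, 0 ≤ ht x := fun x => (div_pos hM0 (hG'pos x)).le
  have ht_le : ∀ x, ht x ≤ C := by
    intro x
    rw [hhtdef, hCdef, div_le_div_iff₀ (hG'pos x) hGp₀]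
    exact mul_le_mul_of_nonneg_left (hp₀min _ (hcmem x)) hM0.le
  have ht_int : (∫ x in (0:ℝ)..θ, ht x) = M * Tstar := by
    have heq : (∫ x in (0:ℝ)..θ, ht x) = ∫ x in (0:ℝ)..θ, M * (f x + M * g x)⁻¹ := by
      apply intervalIntegral.integral_congr
      intro x hx
      rw [uIcc_of_le hθpos.le] at hx
      show M / G' x = M * (f x + M * g x)⁻¹
      rw [hG'id x hx, div_eq_mul_inv]
    rw [heq, intervalIntegral.integral_const_mul, ← hTstar]
  -- the lower bound on the cost of any admissible pair
  have hlb : ∀ v q : ℝ → ℝ, IsTrajectory f g T M v q → θ ≤ q T →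
      M * Tstar ≤ ∫ t in (0:ℝ)..T, v t := by
    rintro v q hvq hqT
    obtain ⟨hvmeas, hvmem, hqc, hq0, hqeq⟩ : Measurable v ∧ (∀ t, v t ∈ Icc (0:ℝ) M) ∧
      ContinuousOn q (Icc 0 T) ∧ q 0 = 0 ∧
      (∀ t ∈ Icc (0:ℝ) T, q t = ∫ s in (0:ℝ)..t, (f (q s) + v s * g (q s))) := hvq
    set w : ℝ → ℝ := fun s => f (q s) + v s * g (q s) with hwdef
    have hwint : IntervalIntegrable w volume 0 T := by
      by_contra hcon
      have h0 : q T = 0 := by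
        rw [hqeq T ⟨hT0, le_refl _⟩]
        exact intervalIntegral.integral_undef hcon
      rw [h0] at hqT
      linarith
    set w' : ℝ → ℝ := (Ioc (0:ℝ) T).indicator w with hw'def
    have hw'int : Integrable w' :=
      ((intervalIntegrable_iff_integrableOn_Ioc_of_le hT0).mp hwint).integrable_indicator
        measurableSet_Ioc
    set F : ℝ → ℝ := fun t => ∫ s in (0:ℝ)..t, w' s with hFdef
    have hFcont : Continuous F :=
      intervalIntegral.continuous_primitive (fun a b => hw'int.intervalIntegrable) 0
    have hFq : ∀ t ∈ Icc (0:ℝ) T, F t = q t := by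
      intro t htmem
      have h1 : F t = ∫ s in (0:ℝ)..t, w s := by
        rw [hFdef]
        simp only []
        rw [intervalIntegral.integral_of_le htmem.1, intervalIntegral.integral_of_le htmem.1]
        apply MeasureTheory.setIntegral_congr_fun measurableSet_Ioc
        intro s hs
        exact indicator_of_mem (show s ∈ Ioc (0:ℝ) T from ⟨hs.1, le_trans hs.2 htmem.2⟩) w
      rw [h1, ← hqeq t htmem]
    have hvint : IntervalIntegrable v volume 0 T := by
      rw [intervalIntegrable_iff_integrableOn_Ioc_of_le hT0]
      refine Integrable.mono' (g := fun _ => M)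
        (integrableOn_const measure_Ioc_lt_top.ne)
        hvmeas.aestronglyMeasurable.restrict ?_
      filter_upwards with s
      rw [Real.norm_eq_abs, abs_of_nonneg (hvmem s).1]
      exact (hvmem s).2
    have hkey : ∀ δ : ℝ, 0 < δ → δ ≤ θ / 2 →
        M * Tstar - 2 * C * δ ≤ ∫ t in (0:ℝ)..T, v t := by
      intro δ hδ0 hδθ
      have hδθ' : δ ≤ θ - δ := by linarith
      set χ : ℝ → ℝ := fun x => max 0 (min 1 (min (x / δ) ((θ - x) / δ))) with hχdef
      have hχcont : Continuous χ :=
        continuous_const.max (continuous_const.min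
          ((continuous_id.div_const δ).min ((continuous_const.sub continuous_id).div_const δ)))
      have hχ0 : ∀ x, 0 ≤ χ x := fun x => le_max_left _ _
      have hχ1 : ∀ x, χ x ≤ 1 := fun x =>
        max_le zero_le_one (min_le_left _ _)
      have hχlow : ∀ x, x ≤ 0 → χ x = 0 := by
        intro x hx
        apply max_eq_left
        refine le_trans (min_le_right _ _) ?_
        refine le_trans (min_le_left _ _) ?_
        exact div_nonpos_of_nonpos_of_nonneg hx hδ0.le
      have hχhigh : ∀ x, θ ≤ x → χ x = 0 := by
        intro x hx
        apply max_eq_left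
        refine le_trans (min_le_right _ _) ?_
        refine le_trans (min_le_right _ _) ?_
        exact div_nonpos_of_nonpos_of_nonneg (by linarith) hδ0.le
      have hχone : ∀ x ∈ Icc δ (θ - δ), χ x = 1 := by
        intro x hx
        have h1 : (1:ℝ) ≤ x / δ := (le_div_iff₀ hδ0).mpr (by linarith [hx.1])
        have h2 : (1:ℝ) ≤ (θ - x) / δ := (le_div_iff₀ hδ0).mpr (by linarith [hx.2])
        show max 0 (min 1 (min (x / δ) ((θ - x) / δ))) = 1
        rw [min_eq_left (le_min h1 h2), max_eq_right zero_le_one]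
      set hd : ℝ → ℝ := fun x => ht x * χ x with hhddef
      have hdcont : Continuous hd := ht_cont.mul hχcont
      have hdnonneg : ∀ x, 0 ≤ hd x := fun x => mul_nonneg (ht_nonneg x) (hχ0 x)
      have hdleC : ∀ x, hd x ≤ C := by
        intro x
        calc ht x * χ x ≤ ht x * 1 := mul_le_mul_of_nonneg_left (hχ1 x) (ht_nonneg x)
          _ = ht x := mul_one _
          _ ≤ C := ht_le x
      have hdabs : ∀ x, |hd x| ≤ C := by
        intro x
        rw [abs_of_nonneg (hdnonneg x)]
        exact hdleC x
      have hdleht : ∀ x, hd x ≤ ht x := by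
        intro x
        calc ht x * χ x ≤ ht x * 1 := mul_le_mul_of_nonneg_left (hχ1 x) (ht_nonneg x)
          _ = ht x := mul_one _
      -- chain rule
      have hcr := chain_rule_primitive hw'int hdcont hdabs T hT0
      -- compare with the cost
      have hintleft : IntervalIntegrable (fun s => hd (F s) * w' s) volume 0 T :=
        (hw'int.bdd_mul (hdcont.comp hFcont).aestronglyMeasurable
          (ae_of_all _ fun x => by rw [Real.norm_eq_abs]; exact hdabs _)).intervalIntegrable
      have hmono : (∫ s in (0:ℝ)..T, hd (F s) * w' s) ≤ ∫ t in (0:ℝ)..T, v t := by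
        apply intervalIntegral.integral_mono_on hT0 hintleft hvint
        intro s hs
        by_cases hsI : s ∈ Ioc (0:ℝ) T
        · have hw's : w' s = w s := indicator_of_mem hsI w
          have hFs : F s = q s := hFq s ⟨hsI.1.le, hsI.2⟩
          rw [hw's, hFs]
          show hd (q s) * (f (q s) + v s * g (q s)) ≤ v s
          by_cases hz : q s ∈ Icc (0:ℝ) θ
          · set X := f (q s) + v s * g (q s) with hXdef
            rcases le_or_gt X 0 with hX | hX
            · exact le_trans (mul_nonpos_of_nonneg_of_nonpos (hdnonneg _) hX) (hvmem s).1
            · have hble : hd (q s) ≤ M / G (q s) := by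
                rw [← hG'id _ hz]
                exact hdleht _
              have h1 : hd (q s) * X ≤ M / G (q s) * X :=
                mul_le_mul_of_nonneg_right hble hX.le
              refine le_trans h1 ?_
              rw [div_mul_eq_mul_div, div_le_iff₀ (hGpos _ hz)]
              have hfz := hfnonpos _ hz
              have hvM := (hvmem s).2
              have hv0 := (hvmem s).1
              have hkey2 : (M - v s) * f (q s) ≤ 0 :=
                mul_nonpos_of_nonneg_of_nonpos (by linarith) hfz
              have hexp : M * (f (q s) + v s * g (q s)) - v s * (f (q s) + M * g (q s))
                  = (M - v s) * f (q s) := by ring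
              simp only [hXdef, hG]
              linarith [hkey2, hexp]
          · have hz' : q s < 0 ∨ θ < q s := by
              rcases not_and_or.mp hz with h | h
              · exact Or.inl (not_le.mp h)
              · exact Or.inr (not_le.mp h)
            have hχz : χ (q s) = 0 := by
              rcases hz' with h | h
              · exact hχlow _ h.le
              · exact hχhigh _ h.le
            have : hd (q s) = 0 := by rw [hhddef]; simp only []; rw [hχz, mul_zero]
            rw [this, zero_mul]
            exact (hvmem s).1
        · have hw's : w' s = 0 := indicator_of_notMem hsI w
          rw [hw's, mul_zero]
          exact (hvmem s).1
      -- lower bound for the primitive term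
      have hFT : F T = q T := hFq T ⟨hT0, le_refl _⟩
      have hsplit1 : (∫ x in (0:ℝ)..(F T), hd x)
          = (∫ x in (0:ℝ)..θ, hd x) + ∫ x in θ..(F T), hd x :=
        (intervalIntegral.integral_add_adjacent_intervals
          (hdcont.intervalIntegrable _ _) (hdcont.intervalIntegrable _ _)).symm
      have htail : 0 ≤ ∫ x in θ..(F T), hd x := by
        apply intervalIntegral.integral_nonneg (by rw [hFT]; exact hqT)
        intro x _
        exact hdnonneg x
      -- lower bound ∫₀^θ hd
      have hmid : M * Tstar - 2 * C * δ ≤ ∫ x in (0:ℝ)..θ, hd x := by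
        have e1 : (∫ x in (0:ℝ)..θ, hd x)
            = ((∫ x in (0:ℝ)..δ, hd x) + ∫ x in δ..(θ - δ), hd x)
              + ∫ x in (θ - δ)..θ, hd x := by
          rw [intervalIntegral.integral_add_adjacent_intervals
            (hdcont.intervalIntegrable _ _) (hdcont.intervalIntegrable _ _),
            intervalIntegral.integral_add_adjacent_intervals
            (hdcont.intervalIntegrable _ _) (hdcont.intervalIntegrable _ _)]
        have e2 : (∫ x in δ..(θ - δ), hd x) = ∫ x in δ..(θ - δ), ht x := by
          apply intervalIntegral.integral_congr
          intro x hx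
          rw [uIcc_of_le hδθ'] at hx
          show ht x * χ x = ht x
          rw [hχone x hx, mul_one]
        have e3 : (∫ x in δ..(θ - δ), ht x)
            = (∫ x in (0:ℝ)..θ, ht x) - (∫ x in (0:ℝ)..δ, ht x)
              - ∫ x in (θ - δ)..θ, ht x := by
          have a1 : (∫ x in (0:ℝ)..δ, ht x) + ∫ x in δ..(θ - δ), ht x
              = ∫ x in (0:ℝ)..(θ - δ), ht x :=
            intervalIntegral.integral_add_adjacent_intervals
              (ht_cont.intervalIntegrable _ _) (ht_cont.intervalIntegrable _ _)
          have a2 : (∫ x in (0:ℝ)..(θ - δ), ht x) + ∫ x in (θ - δ)..θ, ht x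
              = ∫ x in (0:ℝ)..θ, ht x :=
            intervalIntegral.integral_add_adjacent_intervals
              (ht_cont.intervalIntegrable _ _) (ht_cont.intervalIntegrable _ _)
          linarith
        have b1 : (∫ x in (0:ℝ)..δ, ht x) ≤ C * δ := by
          calc (∫ x in (0:ℝ)..δ, ht x) ≤ ∫ _x in (0:ℝ)..δ, C :=
                intervalIntegral.integral_mono_on hδ0.le (ht_cont.intervalIntegrable _ _)
                  (intervalIntegrable_const) (fun x _ => ht_le x)
            _ = C * δ := by rw [intervalIntegral.integral_const, smul_eq_mul, sub_zero, mul_comm]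
        have b2 : (∫ x in (θ - δ)..θ, ht x) ≤ C * δ := by
          calc (∫ x in (θ - δ)..θ, ht x) ≤ ∫ _x in (θ - δ)..θ, C :=
                intervalIntegral.integral_mono_on (by linarith) (ht_cont.intervalIntegrable _ _)
                  (intervalIntegrable_const) (fun x _ => ht_le x)
            _ = C * δ := by rw [intervalIntegral.integral_const, smul_eq_mul]; ring
        have b3 : 0 ≤ ∫ x in (0:ℝ)..δ, hd x :=
          intervalIntegral.integral_nonneg hδ0.le (fun x _ => hdnonneg x)
        have b4 : 0 ≤ ∫ x in (θ - δ)..θ, hd x :=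
          intervalIntegral.integral_nonneg (by linarith) (fun x _ => hdnonneg x)
        rw [e1, e2, e3]
        rw [ht_int]
        linarith
      have : M * Tstar - 2 * C * δ ≤ ∫ s in (0:ℝ)..T, hd (F s) * w' s := by
        rw [hcr]
        calc M * Tstar - 2 * C * δ ≤ ∫ x in (0:ℝ)..θ, hd x := hmid
          _ ≤ ∫ x in (0:ℝ)..(F T), hd x := by rw [hsplit1]; linarith
      linarith
    refine le_of_forall_pos_le_add ?_
    intro ε hε
    have hδ0 : 0 < min (θ / 2) (ε / (2 * C)) := lt_min (by linarith) (by positivity)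
    have h1 := hkey _ hδ0 (min_le_left _ _)
    have h2 : 2 * C * min (θ / 2) (ε / (2 * C)) ≤ ε := by
      have := min_le_right (θ / 2) (ε / (2 * C))
      calc 2 * C * min (θ / 2) (ε / (2 * C)) ≤ 2 * C * (ε / (2 * C)) :=
            mul_le_mul_of_nonneg_left this (by positivity)
        _ = ε := by field_simp
    linarith
  refine ⟨u, p, ?_, hpT, ?_⟩
  · exact ⟨humeas, humem, hpcont.continuousOn, hp00, hptraj⟩
  · intro v q hvq hq
    rw [hucost]
    exact hlb v q hvq hq
end

section
/- (Minimal time, case α = 1 of Theorem 2.) Assume M > m*. For every T > 0 and every measurable control u : [0,T] → [0,M] whose associated state satisfies p_u(T) = θ, one has T ≥ T*; moreover the constant control u ≡ M on [0,T*] achieves p_u(T*) = θ, so T* is the minimal time over all admissible pairs (T, u). -/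
open MeasureTheory Set


lemma aux_time_lower_bound (θ τ : ℝ) (hθpos : 0 < θ) (hτ : 0 ≤ τ)
    (h p F : ℝ → ℝ)
    (hhc : ContinuousOn h (Icc 0 θ))
    (hhpos : ∀ x ∈ Icc 0 θ, 0 < h x)
    (hpc : ContinuousOn p (Icc 0 τ))
    (hp0 : p 0 = 0) (hpτ : p τ = θ)
    (hrange : ∀ t ∈ Icc 0 τ, p t ∈ Icc 0 θ)
    (hFle : ∀ s ∈ Icc 0 τ, F s ≤ h (p s))
    (hFint : IntervalIntegrable F volume 0 τ)
    (hpint : ∀ t1 t2, 0 ≤ t1 → t1 ≤ t2 → t2 ≤ τ → p t2 - p t1 = ∫ s in t1..t2, F s) :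
    (∫ ν in (0:ℝ)..θ, (h ν)⁻¹) ≤ τ := by
  have hτpos : 0 < τ := by
    rcases hτ.eq_or_lt with he | h'
    · exfalso; rw [← he] at hpτ; rw [hp0] at hpτ; linarith
    · exact h'
  have hinvc : ContinuousOn (fun x => (h x)⁻¹) (Icc 0 θ) :=
    hhc.inv₀ fun x hx => (hhpos x hx).ne'
  -- minimum of h on [0,θ]
  obtain ⟨x₀, hx₀, hmin⟩ := isCompact_Icc.exists_isMinOn ⟨0, left_mem_Icc.2 hθpos.le⟩ hhc
  set m₀ := h x₀ with hm₀def
  have hm₀pos : 0 < m₀ := hhpos x₀ hx₀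
  have hm₀le : ∀ x ∈ Icc 0 θ, m₀ ≤ h x := fun x hx => hmin hx
  refine le_of_forall_pos_le_add fun ε hε => ?_
  set c := ε / τ with hcdef
  have hcpos : 0 < c := div_pos hε hτpos
  set ε₀ := c * m₀ / (c + 2) with hε₀def
  have hε₀pos : 0 < ε₀ := by positivity
  have hε₀lt : ε₀ < m₀ := by
    rw [hε₀def, div_lt_iff₀ (by linarith)]
    nlinarith
  -- uniform continuity
  obtain ⟨δ₁, hδ₁pos, hδ₁⟩ := Metric.uniformContinuousOn_iff.1
    (isCompact_Icc.uniformContinuousOn_of_continuous hhc) ε₀ hε₀pos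
  obtain ⟨δ₂, hδ₂pos, hδ₂⟩ := Metric.uniformContinuousOn_iff.1
    (isCompact_Icc.uniformContinuousOn_of_continuous hpc) δ₁ hδ₁pos
  -- per-step estimate
  have key : ∀ t1 t2 : ℝ, 0 ≤ t1 → t1 ≤ t2 → t2 ≤ τ → t2 - t1 < δ₂ →
      (∫ ν in (0:ℝ)..(p t2), (h ν)⁻¹) - (∫ ν in (0:ℝ)..(p t1), (h ν)⁻¹)
        ≤ (1 + c) * (t2 - t1) := by
    intro t1 t2 h0 h12 h2τ hlt
    have ht1 : t1 ∈ Icc 0 τ := ⟨h0, h12.trans h2τ⟩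
    have ht2 : t2 ∈ Icc 0 τ := ⟨h0.trans h12, h2τ⟩
    have ha : p t1 ∈ Icc 0 θ := hrange _ ht1
    have hb : p t2 ∈ Icc 0 θ := hrange _ ht2
    have hsub01 : uIcc 0 (p t1) ⊆ Icc 0 θ := by
      rw [uIcc_of_le ha.1]; exact Icc_subset_Icc le_rfl ha.2
    have hsub12 : uIcc (p t1) (p t2) ⊆ Icc 0 θ := by
      rw [← uIcc_of_le hθpos.le]
      exact uIcc_subset_uIcc (by rw [uIcc_of_le hθpos.le]; exact ha)
        (by rw [uIcc_of_le hθpos.le]; exact hb)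
    have hint1 : IntervalIntegrable (fun ν => (h ν)⁻¹) volume 0 (p t1) :=
      (hinvc.mono hsub01).intervalIntegrable
    have hint12 : IntervalIntegrable (fun ν => (h ν)⁻¹) volume (p t1) (p t2) :=
      (hinvc.mono hsub12).intervalIntegrable
    have hΦdiff : (∫ ν in (0:ℝ)..(p t2), (h ν)⁻¹) - (∫ ν in (0:ℝ)..(p t1), (h ν)⁻¹)
        = ∫ ν in (p t1)..(p t2), (h ν)⁻¹ := by
      rw [← intervalIntegral.integral_add_adjacent_intervals hint1 hint12]; ring
    have hRHS0 : 0 ≤ (1 + c) * (t2 - t1) := by nlinarith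
    rcases le_or_gt (p t2) (p t1) with hba | hab
    · -- decreasing case : integral over reversed interval is ≤ 0
      rw [hΦdiff, intervalIntegral.integral_symm]
      have : 0 ≤ ∫ ν in (p t2)..(p t1), (h ν)⁻¹ := by
        apply intervalIntegral.integral_nonneg hba
        intro x hx
        have hxmem : x ∈ Icc 0 θ := ⟨hb.1.trans hx.1, hx.2.trans ha.2⟩
        exact (inv_pos.2 (hhpos x hxmem)).le
      linarith
    · -- increasing case
      have hd12 : ∀ s ∈ Icc t1 t2, |p s - p t1| < δ₁ := by
        intro s hs
        have hsmem : s ∈ Icc 0 τ := ⟨h0.trans hs.1, hs.2.trans h2τ⟩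
        have := hδ₂ s hsmem t1 ht1 (by rw [Real.dist_eq]; rw [abs_of_nonneg (by linarith [hs.1])]; linarith [hs.2])
        rwa [Real.dist_eq] at this
      have hba' : p t2 - p t1 < δ₁ := by
        have := hd12 t2 ⟨h12, le_rfl⟩
        calc p t2 - p t1 ≤ |p t2 - p t1| := le_abs_self _
          _ < δ₁ := this
      have hha : m₀ ≤ h (p t1) := hm₀le _ ha
      have hha' : 0 < h (p t1) - ε₀ := by linarith
      -- pointwise bound on the inverse
      have hbound1 : ∀ ν ∈ Icc (p t1) (p t2), (h ν)⁻¹ ≤ (h (p t1) - ε₀)⁻¹ := by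
        intro ν hν
        have hνmem : ν ∈ Icc 0 θ := ⟨ha.1.trans hν.1, hν.2.trans hb.2⟩
        have hd : dist ν (p t1) < δ₁ := by
          rw [Real.dist_eq, abs_of_nonneg (by linarith [hν.1])]
          linarith [hν.2]
        have := hδ₁ ν hνmem (p t1) ha hd
        rw [Real.dist_eq] at this
        have h1 : h (p t1) - ε₀ ≤ h ν := by
          have := abs_lt.1 this; linarith [this.1]
        exact inv_anti₀ hha' h1
      have hconst12 : IntervalIntegrable (fun _ : ℝ => (h (p t1) - ε₀)⁻¹) volume (p t1) (p t2) :=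
        intervalIntegrable_const
      have hint1' : (∫ ν in (p t1)..(p t2), (h ν)⁻¹)
          ≤ (p t2 - p t1) * (h (p t1) - ε₀)⁻¹ := by
        calc (∫ ν in (p t1)..(p t2), (h ν)⁻¹)
            ≤ ∫ _ in (p t1)..(p t2), (h (p t1) - ε₀)⁻¹ :=
              intervalIntegral.integral_mono_on hab.le hint12 hconst12 hbound1
          _ = (p t2 - p t1) * (h (p t1) - ε₀)⁻¹ := by
              rw [intervalIntegral.integral_const, smul_eq_mul]
      -- bound on p t2 - p t1
      have hbound2 : ∀ s ∈ Icc t1 t2, F s ≤ h (p t1) + ε₀ := by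
        intro s hs
        have hsmem : s ∈ Icc 0 τ := ⟨h0.trans hs.1, hs.2.trans h2τ⟩
        have hpsmem : p s ∈ Icc 0 θ := hrange _ hsmem
        have hd := hδ₁ (p s) hpsmem (p t1) ha (by rw [Real.dist_eq]; exact hd12 s hs)
        rw [Real.dist_eq] at hd
        have := abs_lt.1 hd
        have := hFle s hsmem
        linarith [this]
      have hFint12 : IntervalIntegrable F volume t1 t2 := by
        apply hFint.mono_set
        rw [uIcc_of_le h12, uIcc_of_le hτ]
        exact Icc_subset_Icc h0 h2τ
      have hint2' : p t2 - p t1 ≤ (t2 - t1) * (h (p t1) + ε₀) := by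
        rw [hpint t1 t2 h0 h12 h2τ]
        calc (∫ s in t1..t2, F s)
            ≤ ∫ _ in t1..t2, (h (p t1) + ε₀) :=
              intervalIntegral.integral_mono_on h12 hFint12 intervalIntegrable_const hbound2
          _ = (t2 - t1) * (h (p t1) + ε₀) := by
              rw [intervalIntegral.integral_const, smul_eq_mul]
      -- combine
      have hratio : (h (p t1) + ε₀) * (h (p t1) - ε₀)⁻¹ ≤ 1 + c := by
        rw [← div_eq_mul_inv, div_le_iff₀ hha']
        have : (c + 2) * ε₀ = c * m₀ := by
          rw [hε₀def]; field_simp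
        nlinarith
      calc (∫ ν in (0:ℝ)..(p t2), (h ν)⁻¹) - (∫ ν in (0:ℝ)..(p t1), (h ν)⁻¹)
          = ∫ ν in (p t1)..(p t2), (h ν)⁻¹ := hΦdiff
        _ ≤ (p t2 - p t1) * (h (p t1) - ε₀)⁻¹ := hint1'
        _ ≤ ((t2 - t1) * (h (p t1) + ε₀)) * (h (p t1) - ε₀)⁻¹ := by
            apply mul_le_mul_of_nonneg_right hint2' (by positivity)
        _ = (t2 - t1) * ((h (p t1) + ε₀) * (h (p t1) - ε₀)⁻¹) := by ring
        _ ≤ (t2 - t1) * (1 + c) := by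
            apply mul_le_mul_of_nonneg_left hratio (by linarith)
        _ = (1 + c) * (t2 - t1) := by ring
  -- partition and telescope
  obtain ⟨n, hn⟩ := exists_nat_gt (τ / δ₂)
  have hnpos : 0 < (n : ℝ) := lt_trans (div_pos hτpos hδ₂pos) hn
  have hstep : τ / n < δ₂ := by
    have h' : τ < (n : ℝ) * δ₂ := by
      have := mul_lt_mul_of_pos_right hn hδ₂pos
      rwa [div_mul_cancel₀ τ hδ₂pos.ne'] at this
    rw [div_lt_iff₀ hnpos]
    nlinarith
  set t : ℕ → ℝ := fun i => (i : ℝ) * (τ / n) with htdef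
  have htsucc : ∀ i : ℕ, t (i + 1) - t i = τ / n := by
    intro i; simp only [htdef]; push_cast; ring
  have htmem : ∀ i : ℕ, i ≤ n → t i ∈ Icc 0 τ := by
    intro i hi
    constructor
    · simp only [htdef]; positivity
    · simp only [htdef]
      calc (i : ℝ) * (τ / n) ≤ (n : ℝ) * (τ / n) := by
            apply mul_le_mul_of_nonneg_right (by exact_mod_cast hi) (by positivity)
        _ = τ := by field_simp
  have htele := Finset.sum_range_sub (fun i => ∫ ν in (0:ℝ)..(p (t i)), (h ν)⁻¹) n
  have hbound : ∀ i ∈ Finset.range n,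
      ((∫ ν in (0:ℝ)..(p (t (i+1))), (h ν)⁻¹) - ∫ ν in (0:ℝ)..(p (t i)), (h ν)⁻¹)
        ≤ (1 + c) * (τ / n) := by
    intro i hi
    have hi' : i + 1 ≤ n := Finset.mem_range.1 hi
    have h1 := htmem i (le_of_lt (Finset.mem_range.1 hi))
    have h2 := htmem (i + 1) hi'
    have hle : t i ≤ t (i + 1) := by
      have := htsucc i
      have : 0 ≤ τ / n := by positivity
      nlinarith [htsucc i]
    have := key (t i) (t (i + 1)) h1.1 hle h2.2 (by rw [htsucc i]; exact hstep)
    rwa [htsucc i] at this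
  have ht0 : t 0 = 0 := by simp [htdef]
  have htn : t n = τ := by
    simp only [htdef]; field_simp
  have hΦ0 : (∫ ν in (0:ℝ)..(p (t 0)), (h ν)⁻¹) = 0 := by
    rw [ht0, hp0, intervalIntegral.integral_same]
  calc (∫ ν in (0:ℝ)..θ, (h ν)⁻¹)
      = (∫ ν in (0:ℝ)..(p (t n)), (h ν)⁻¹) - ∫ ν in (0:ℝ)..(p (t 0)), (h ν)⁻¹ := by
        rw [hΦ0, htn, hpτ, sub_zero]
    _ = ∑ i ∈ Finset.range n,
        ((∫ ν in (0:ℝ)..(p (t (i+1))), (h ν)⁻¹) - ∫ ν in (0:ℝ)..(p (t i)), (h ν)⁻¹) :=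
        htele.symm
    _ ≤ ∑ _i ∈ Finset.range n, (1 + c) * (τ / n) := Finset.sum_le_sum hbound
    _ = (n : ℝ) * ((1 + c) * (τ / n)) := by
        rw [Finset.sum_const, Finset.card_range, nsmul_eq_mul]
    _ = (1 + c) * τ := by field_simp
    _ = τ + ε := by rw [hcdef]; field_simp


lemma aux_exists_traj (θ : ℝ) (hθpos : 0 < θ) (h : ℝ → ℝ)
    (hhc : ContinuousOn h (Icc 0 θ)) (hhpos : ∀ x ∈ Icc 0 θ, 0 < h x)
    (Tstar : ℝ) (hT : Tstar = ∫ ν in (0:ℝ)..θ, (h ν)⁻¹) :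
    ∃ q : ℝ → ℝ, Continuous q ∧ q 0 = 0 ∧ q Tstar = θ ∧
      ∀ t ∈ Icc (0:ℝ) Tstar, q t = ∫ s in (0:ℝ)..t, h (q s) := by
  classical
  set clamp : ℝ → ℝ := fun x => max 0 (min θ x) with hclampdef
  have hclampc : Continuous clamp := continuous_const.max (continuous_const.min continuous_id)
  have hclmem : ∀ x, clamp x ∈ Icc 0 θ := fun x =>
    ⟨le_max_left _ _, max_le hθpos.le (min_le_left _ _)⟩
  have hcleq : ∀ x ∈ Icc 0 θ, clamp x = x := by
    intro x hx
    simp only [hclampdef]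
    rw [min_eq_right hx.2, max_eq_right hx.1]
  set Hc : ℝ → ℝ := fun x => (h (clamp x))⁻¹ with hHcdef
  have hHcc : Continuous Hc := by
    have := ContinuousOn.comp_continuous (g := fun x => (h x)⁻¹) (f := clamp)
      (hhc.inv₀ fun x hx => (hhpos x hx).ne') hclampc hclmem
    exact this
  have hHcpos : ∀ x, 0 < Hc x := fun x => inv_pos.2 (hhpos _ (hclmem x))
  set Φ : ℝ → ℝ := fun x => ∫ ν in (0:ℝ)..x, Hc ν with hΦdef
  have hΦint : ∀ a b : ℝ, IntervalIntegrable Hc volume a b := fun a b =>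
    hHcc.intervalIntegrable a b
  have hΦderiv : ∀ x, HasDerivAt Φ (Hc x) x := fun x =>
    intervalIntegral.integral_hasDerivAt_right (hΦint 0 x)
      (hHcc.stronglyMeasurableAtFilter _ _) hHcc.continuousAt
  have hΦcont : Continuous Φ := by
    rw [continuous_iff_continuousAt]; exact fun x => (hΦderiv x).continuousAt
  have hΦadd : ∀ a b : ℝ, Φ b - Φ a = ∫ ν in a..b, Hc ν := by
    intro a b
    show (∫ ν in (0:ℝ)..b, Hc ν) - (∫ ν in (0:ℝ)..a, Hc ν) = ∫ ν in a..b, Hc ν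
    rw [← intervalIntegral.integral_add_adjacent_intervals (hΦint 0 a) (hΦint a b)]
    ring
  have hΦmono : StrictMono Φ := by
    intro x y hxy
    have hpos : 0 < ∫ ν in x..y, Hc ν :=
      intervalIntegral.intervalIntegral_pos_of_pos (hΦint x y) hHcpos hxy
    have := hΦadd x y
    linarith
  have hΦ0 : Φ 0 = 0 := intervalIntegral.integral_same
  have hΦθ : Φ θ = Tstar := by
    rw [hT, hΦdef]
    apply intervalIntegral.integral_congr
    intro ν hν
    rw [uIcc_of_le hθpos.le] at hν
    simp only [hHcdef]
    rw [hcleq ν hν]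
  -- explicit values outside [0,θ]
  have hΦneg : ∀ x : ℝ, x ≤ 0 → Φ x = x * Hc 0 := by
    intro x hx
    have : (∫ ν in (0:ℝ)..x, Hc ν) = ∫ _ in (0:ℝ)..x, Hc 0 := by
      apply intervalIntegral.integral_congr
      intro ν hν
      rw [uIcc_of_ge hx] at hν
      have hν0 : ν ≤ 0 := hν.2
      simp only [hHcdef, hclampdef]
      rw [min_eq_right (hν0.trans hθpos.le), max_eq_left hν0,
        min_eq_right hθpos.le, max_self]
    rw [hΦdef]
    simp only at this ⊢
    rw [this, intervalIntegral.integral_const, smul_eq_mul, sub_zero]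
  have hΦbig : ∀ x : ℝ, θ ≤ x → Φ x = Tstar + (x - θ) * Hc θ := by
    intro x hx
    have hcongr : (∫ ν in θ..x, Hc ν) = ∫ _ in θ..x, Hc θ := by
      apply intervalIntegral.integral_congr
      intro ν hν
      rw [uIcc_of_le hx] at hν
      simp only [hHcdef, hclampdef]
      rw [min_eq_left hν.1, max_eq_right hθpos.le, min_eq_right le_rfl,
        max_eq_right hθpos.le]
    have := hΦadd θ x
    rw [hΦθ, hcongr, intervalIntegral.integral_const, smul_eq_mul] at this
    linarith
  have hsurj : Function.Surjective Φ := by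
    intro y
    set a := min 0 (y / Hc 0) with hadef
    set b := max θ (θ + (y - Tstar) / Hc θ) with hbdef
    have hab : a ≤ b := le_trans (min_le_left _ _) (le_trans hθpos.le (le_max_left _ _))
    have hΦa : Φ a ≤ y := by
      rw [hΦneg a (min_le_left _ _)]
      calc a * Hc 0 ≤ (y / Hc 0) * Hc 0 :=
            mul_le_mul_of_nonneg_right (min_le_right _ _) (hHcpos 0).le
        _ = y := div_mul_cancel₀ y (hHcpos 0).ne'
    have hΦb : y ≤ Φ b := by
      rw [hΦbig b (le_max_left _ _)]
      have : (y - Tstar) / Hc θ ≤ b - θ := by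
        have := le_max_right θ (θ + (y - Tstar) / Hc θ)
        rw [hbdef]; linarith
      have h2 : (y - Tstar) = ((y - Tstar) / Hc θ) * Hc θ :=
        (div_mul_cancel₀ _ (hHcpos θ).ne').symm
      nlinarith [mul_le_mul_of_nonneg_right this (hHcpos θ).le]
    obtain ⟨x, _, hx⟩ := intermediate_value_Icc hab hΦcont.continuousOn ⟨hΦa, hΦb⟩
    exact ⟨x, hx⟩
  set e := StrictMono.orderIsoOfSurjective Φ hΦmono hsurj with hedef
  have hecoe : ∀ x, e x = Φ x := fun x => by
    rw [hedef, StrictMono.coe_orderIsoOfSurjective]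
  set q : ℝ → ℝ := fun t => e.symm t with hqdef
  have hqΦ : ∀ y, Φ (q y) = y := by
    intro y
    have := e.apply_symm_apply y
    rw [← hecoe (e.symm y)]
    exact this
  have hqval : ∀ x, q (Φ x) = x := by
    intro x
    apply hΦmono.injective
    rw [hqΦ (Φ x)]
  have hq0 : q 0 = 0 := by have := hqval 0; rwa [hΦ0] at this
  have hqT : q Tstar = θ := by have := hqval θ; rwa [hΦθ] at this
  have hqcont : Continuous q := OrderIso.continuous e.symm
  have hqmono : StrictMono q := e.symm.strictMono
  have hqmem : ∀ t ∈ Icc (0:ℝ) Tstar, q t ∈ Icc 0 θ := by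
    intro t ht
    constructor
    · rw [← hq0]; exact hqmono.monotone ht.1
    · rw [← hqT]; exact hqmono.monotone ht.2
  have hderiv : ∀ s ∈ Ioo (0:ℝ) Tstar, HasDerivAt q (h (q s)) s := by
    intro s hs
    have hq0s : (0:ℝ) < q s := by rw [← hq0]; exact hqmono hs.1
    have hqsθ : q s < θ := by rw [← hqT]; exact hqmono hs.2
    have hqsmem : q s ∈ Icc 0 θ := ⟨hq0s.le, hqsθ.le⟩
    have hd := HasDerivAt.of_local_left_inverse hqcont.continuousAt
      (hΦderiv (q s)) (hHcpos (q s)).ne' (Filter.Eventually.of_forall hqΦ)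
    have : (Hc (q s))⁻¹ = h (q s) := by
      simp only [hHcdef]
      rw [hcleq _ hqsmem, inv_inv]
    rwa [this] at hd
  refine ⟨q, hqcont, hq0, hqT, ?_⟩
  intro t ht
  rcases ht.1.eq_or_lt with he | htpos
  · rw [← he, hq0, intervalIntegral.integral_same]
  · have hint : IntervalIntegrable (fun s => h (q s)) volume 0 t := by
      apply ContinuousOn.intervalIntegrable
      apply hhc.comp hqcont.continuousOn
      intro s hs
      rw [uIcc_of_le htpos.le] at hs
      exact hqmem s ⟨hs.1, hs.2.trans ht.2⟩
    have := intervalIntegral.integral_eq_sub_of_hasDeriv_right_of_le htpos.le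
      hqcont.continuousOn
      (fun x hx => (hderiv x ⟨hx.1, lt_of_lt_of_le hx.2 ht.2⟩).hasDerivWithinAt)
      hint
    rw [this, hq0, sub_zero]

set_option maxHeartbeats 1000000 in
/-- minimal time, case α = 1 of Theorem 2: for M > m*, every admissible
pair (T,u) with p_u(T) = θ satisfies T ≥ T*, and the constant control u ≡ M on [0,T*]
realizes p(T*) = θ; hence T* is the minimal time. -/
theorem stmt_14
    (b1 b2 d1 d2 K sh : ℝ)
    (hb1 : 0 < b1) (hb2 : 0 < b2) (hd1 : 0 < d1) (hd2 : 0 < d2)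
    (hK : 0 < K) (hsh0 : 0 < sh) (hsh1 : sh ≤ 1)
    (hlow : 1 - sh < d1 * b2 / (d2 * b1)) (hhigh : d1 * b2 / (d2 * b1) < 1)
    (f g : ℝ → ℝ)
    (hf : ∀ p, f p = p * (1 - p) * (d1 * b2 - d2 * b1 * (1 - sh * p)) /
      (b1 * (1 - p) * (1 - sh * p) + b2 * p))
    (hg : ∀ p, g p = (1 / K) * (b1 * (1 - p) * (1 - sh * p)) /
      (b1 * (1 - p) * (1 - sh * p) + b2 * p))
    (θ : ℝ) (hθ : θ = (1 / sh) * (1 - d1 * b2 / (d2 * b1)))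
    (mstar : ℝ)
    (hmstar : IsGreatest ((fun p => -f p / g p) '' Set.Icc 0 θ) mstar)
    (M : ℝ) (hM : mstar < M)
    (Tstar : ℝ) (hTstar : Tstar = ∫ ν in (0:ℝ)..θ, (f ν + M * g ν)⁻¹) :
    (∀ T : ℝ, 0 < T → ∀ u p : ℝ → ℝ, IsTrajectory f g T M u p → p T = θ → Tstar ≤ T) ∧
    (∃ p : ℝ → ℝ, IsTrajectory f g Tstar M (fun _ => M) p ∧ p Tstar = θ) := by
  have hfeq : f = fun x : ℝ => x * (1 - x) * (d1 * b2 - d2 * b1 * (1 - sh * x)) /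
      (b1 * (1 - x) * (1 - sh * x) + b2 * x) := funext hf
  have hgeq : g = fun x : ℝ => (1 / K) * (b1 * (1 - x) * (1 - sh * x)) /
      (b1 * (1 - x) * (1 - sh * x) + b2 * x) := funext hg
  subst hfeq hgeq
  -- basic numeric facts
  have hd2b1 : 0 < d2 * b1 := by positivity
  have hrpos : 0 < d1 * b2 / (d2 * b1) := by positivity
  have hrlt : d1 * b2 < d2 * b1 := (div_lt_one hd2b1).1 hhigh
  have hθpos : 0 < θ := by
    rw [hθ]
    have h1 : 0 < 1 - d1 * b2 / (d2 * b1) := by linarith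
    positivity
  have hshθ : sh * θ = 1 - d1 * b2 / (d2 * b1) := by
    rw [hθ]; field_simp
  have hθlt1 : θ < 1 := by
    by_contra hcon; push_neg at hcon
    have h1 : sh ≤ sh * θ := by nlinarith
    rw [hshθ] at h1
    linarith
  have hfac : ∀ x ∈ Icc (0:ℝ) θ, 0 < 1 - x ∧ 0 < 1 - sh * x ∧
      0 < b1 * (1 - x) * (1 - sh * x) + b2 * x := by
    intro x hx
    have h1 : 0 < 1 - x := by linarith [hx.2]
    have h2 : 0 < 1 - sh * x := by nlinarith [hx.2, hsh0, hrpos]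
    refine ⟨h1, h2, ?_⟩
    have h3 : 0 < b1 * (1 - x) * (1 - sh * x) := by positivity
    nlinarith [mul_nonneg hb2.le hx.1]
  have hgpos : ∀ x ∈ Icc (0:ℝ) θ, 0 < (1 / K) * (b1 * (1 - x) * (1 - sh * x)) /
      (b1 * (1 - x) * (1 - sh * x) + b2 * x) := by
    intro x hx
    obtain ⟨h1, h2, h3⟩ := hfac x hx
    have h4 : 0 < (1 / K) * (b1 * (1 - x) * (1 - sh * x)) := by positivity
    exact div_pos h4 h3
  have hhpos : ∀ x ∈ Icc (0:ℝ) θ,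
      0 < x * (1 - x) * (d1 * b2 - d2 * b1 * (1 - sh * x)) /
        (b1 * (1 - x) * (1 - sh * x) + b2 * x) +
        M * ((1 / K) * (b1 * (1 - x) * (1 - sh * x)) /
        (b1 * (1 - x) * (1 - sh * x) + b2 * x)) := by
    intro x hx
    have h1 : -(x * (1 - x) * (d1 * b2 - d2 * b1 * (1 - sh * x)) /
        (b1 * (1 - x) * (1 - sh * x) + b2 * x)) /
        ((1 / K) * (b1 * (1 - x) * (1 - sh * x)) /
        (b1 * (1 - x) * (1 - sh * x) + b2 * x)) ≤ mstar := hmstar.2 ⟨x, hx, rfl⟩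
    have h2 := hgpos x hx
    have h3 := (div_lt_iff₀ h2).1 (lt_of_le_of_lt h1 hM)
    linarith
  have hM0 : 0 < M := by
    have h0mem : (0:ℝ) ∈ Icc (0:ℝ) θ := left_mem_Icc.2 hθpos.le
    have h1 := hmstar.2 ⟨0, h0mem, rfl⟩
    norm_num at h1
    linarith
  -- continuity of h := f + M g on [0,θ]
  have hDc : Continuous (fun x : ℝ => b1 * (1 - x) * (1 - sh * x) + b2 * x) := by fun_prop
  have hn1 : Continuous (fun x : ℝ => x * (1 - x) * (d1 * b2 - d2 * b1 * (1 - sh * x))) := by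
    fun_prop
  have hn2 : Continuous (fun x : ℝ => (1 / K) * (b1 * (1 - x) * (1 - sh * x))) := by fun_prop
  have hfcont : ContinuousOn (fun x : ℝ => x * (1 - x) * (d1 * b2 - d2 * b1 * (1 - sh * x)) /
      (b1 * (1 - x) * (1 - sh * x) + b2 * x)) (Icc 0 θ) :=
    hn1.continuousOn.div hDc.continuousOn (fun x hx => (hfac x hx).2.2.ne')
  have hgcont : ContinuousOn (fun x : ℝ => (1 / K) * (b1 * (1 - x) * (1 - sh * x)) /
      (b1 * (1 - x) * (1 - sh * x) + b2 * x)) (Icc 0 θ) :=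
    hn2.continuousOn.div hDc.continuousOn (fun x hx => (hfac x hx).2.2.ne')
  have hhcont : ContinuousOn (fun x : ℝ =>
      x * (1 - x) * (d1 * b2 - d2 * b1 * (1 - sh * x)) /
        (b1 * (1 - x) * (1 - sh * x) + b2 * x) +
        M * ((1 / K) * (b1 * (1 - x) * (1 - sh * x)) /
        (b1 * (1 - x) * (1 - sh * x) + b2 * x))) (Icc 0 θ) :=
    hfcont.add (continuousOn_const.mul hgcont)
  -- sign facts for invariance
  set δ₀ : ℝ := b1 / (2 * b2) with hδ₀def
  have hδ₀pos : 0 < δ₀ := by positivity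
  have hsign : ∀ x : ℝ, -δ₀ ≤ x → x ≤ 0 →
      0 ≤ x * (1 - x) * (d1 * b2 - d2 * b1 * (1 - sh * x)) /
        (b1 * (1 - x) * (1 - sh * x) + b2 * x) ∧
      0 ≤ (1 / K) * (b1 * (1 - x) * (1 - sh * x)) /
        (b1 * (1 - x) * (1 - sh * x) + b2 * x) := by
    intro x h1 h2
    have e1 : (1:ℝ) ≤ 1 - x := by linarith
    have e2 : (1:ℝ) ≤ 1 - sh * x := by nlinarith [mul_nonneg hsh0.le (neg_nonneg.2 h2)]
    have e12 : (1:ℝ) ≤ (1 - x) * (1 - sh * x) := by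
      nlinarith [mul_le_mul e1 e2 zero_le_one (by linarith : (0:ℝ) ≤ 1 - x)]
    have e3 : b1 ≤ b1 * (1 - x) * (1 - sh * x) := by
      nlinarith [mul_le_mul_of_nonneg_left e12 hb1.le]
    have e4 : b2 * δ₀ = b1 / 2 := by rw [hδ₀def]; field_simp
    have e5 : -(b1 / 2) ≤ b2 * x := by
      nlinarith [mul_le_mul_of_nonneg_left h1 hb2.le]
    have hD : 0 < b1 * (1 - x) * (1 - sh * x) + b2 * x := by linarith
    constructor
    · apply div_nonneg _ hD.le
      have e6 : d1 * b2 - d2 * b1 * (1 - sh * x) ≤ 0 := by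
        nlinarith [mul_le_mul_of_nonneg_left e2 hd2b1.le]
      have e7 : x * (1 - x) ≤ 0 := mul_nonpos_of_nonpos_of_nonneg h2 (by linarith)
      nlinarith [mul_nonneg (neg_nonneg.2 e7) (neg_nonneg.2 e6)]
    · apply div_nonneg _ hD.le
      have hK' : (0:ℝ) ≤ (1:ℝ) / K := by positivity
      exact mul_nonneg hK'
        (mul_nonneg (mul_nonneg hb1.le (by linarith)) (by linarith))
  constructor
  · -- minimality
    intro T hT u p htraj hpT
    obtain ⟨humeas, humem, hpc, hp0, hpint⟩ := htraj
    set F : ℝ → ℝ := fun s =>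
      p s * (1 - p s) * (d1 * b2 - d2 * b1 * (1 - sh * p s)) /
        (b1 * (1 - p s) * (1 - sh * p s) + b2 * p s) +
      u s * ((1 / K) * (b1 * (1 - p s) * (1 - sh * p s)) /
        (b1 * (1 - p s) * (1 - sh * p s) + b2 * p s)) with hFdef
    have hpint' : ∀ t ∈ Icc (0:ℝ) T, p t = ∫ s in (0:ℝ)..t, F s := hpint
    by_cases hFi : IntervalIntegrable F volume 0 T
    · -- integrable case
      have hsubint : ∀ t1 t2 : ℝ, 0 ≤ t1 → t1 ≤ t2 → t2 ≤ T →
          p t2 - p t1 = ∫ s in t1..t2, F s := by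
        intro t1 t2 h1 h2 h3
        have i1 : IntervalIntegrable F volume 0 t1 := by
          apply hFi.mono_set
          rw [uIcc_of_le h1, uIcc_of_le hT.le]
          exact Icc_subset_Icc le_rfl (h2.trans h3)
        have i2 : IntervalIntegrable F volume t1 t2 := by
          apply hFi.mono_set
          rw [uIcc_of_le h2, uIcc_of_le hT.le]
          exact Icc_subset_Icc h1 h3
        have hadd := intervalIntegral.integral_add_adjacent_intervals i1 i2
        rw [← hpint' t1 ⟨h1, h2.trans h3⟩, ← hpint' t2 ⟨h1.trans h2, h3⟩] at hadd
        linarith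
      -- first hitting time of θ
      set S := Icc (0:ℝ) T ∩ p ⁻¹' {θ} with hSdef
      have hScl : IsClosed S := hpc.preimage_isClosed_of_isClosed isClosed_Icc isClosed_singleton
      have hSne : S.Nonempty := ⟨T, ⟨hT.le, le_rfl⟩, hpT⟩
      have hSbdd : BddBelow S := ⟨0, fun t ht => ht.1.1⟩
      set τ := sInf S with hτdef
      have hτS : τ ∈ S := hScl.csInf_mem hSne hSbdd
      have hτmem : τ ∈ Icc 0 T := hτS.1
      have hpτ : p τ = θ := hτS.2
      have hτle : ∀ t ∈ S, τ ≤ t := fun t ht => csInf_le hSbdd ht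
      have hpcτ : ContinuousOn p (Icc 0 τ) := hpc.mono (Icc_subset_Icc le_rfl hτmem.2)
      -- p ≤ θ on [0,τ]
      have hple : ∀ t ∈ Icc (0:ℝ) τ, p t ≤ θ := by
        intro t ht
        by_contra hgt; push_neg at hgt
        have hmem : θ ∈ Icc (p 0) (p t) := ⟨by rw [hp0]; exact hθpos.le, hgt.le⟩
        obtain ⟨s, hs, hps⟩ := intermediate_value_Icc ht.1
          (hpcτ.mono (Icc_subset_Icc le_rfl ht.2)) hmem
        have hsS : s ∈ S := ⟨⟨hs.1, (hs.2.trans ht.2).trans hτmem.2⟩, hps⟩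
        have h1 := hτle s hsS
        have hst : s = t := le_antisymm hs.2 (ht.2.trans h1)
        rw [hst] at hps
        rw [hps] at hgt
        exact lt_irrefl _ hgt
      -- p ≥ 0 on [0,τ]
      have hFnn : ∀ s : ℝ, -δ₀ ≤ p s → p s ≤ 0 → 0 ≤ F s := by
        intro s h1 h2
        obtain ⟨hfs, hgs⟩ := hsign (p s) h1 h2
        have hu1 := (humem s).1
        have := mul_nonneg hu1 hgs
        rw [hFdef]
        dsimp only
        linarith
      have hpge : ∀ t ∈ Icc (0:ℝ) τ, 0 ≤ p t := by
        by_contra hcon; push_neg at hcon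
        obtain ⟨tmm, htmm, hptmm⟩ := hcon
        obtain ⟨tm, htm, hmin⟩ := isCompact_Icc.exists_isMinOn
          (nonempty_Icc.2 hτmem.1) hpcτ
        have hm : p tm < 0 := lt_of_le_of_lt (hmin htmm) hptmm
        set cc := -(min δ₀ (-(p tm))) / 2 with hccdef
        have hminpos : 0 < min δ₀ (-(p tm)) := lt_min hδ₀pos (by linarith)
        have hccneg : cc < 0 := by rw [hccdef]; linarith
        have hccδ : -δ₀ ≤ cc := by
          rw [hccdef]
          have := min_le_left δ₀ (-(p tm))
          linarith
        have hccm : p tm < cc := by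
          rw [hccdef]
          have := min_le_right δ₀ (-(p tm))
          linarith
        -- first hit of cc
        set S1 := Icc (0:ℝ) τ ∩ p ⁻¹' {cc} with hS1def
        have hS1cl : IsClosed S1 := hpcτ.preimage_isClosed_of_isClosed isClosed_Icc
          isClosed_singleton
        have hS1ne : S1.Nonempty := by
          have hmem : cc ∈ Icc (p tm) (p 0) := ⟨hccm.le, by rw [hp0]; exact hccneg.le⟩
          obtain ⟨t', ht', hpt'⟩ := intermediate_value_Icc' htm.1
            (hpcτ.mono (Icc_subset_Icc le_rfl htm.2)) hmem
          exact ⟨t', ⟨ht'.1, ht'.2.trans htm.2⟩, hpt'⟩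
        have hS1bdd : BddBelow S1 := ⟨0, fun t ht => ht.1.1⟩
        set t1 := sInf S1 with ht1def
        have ht1S : t1 ∈ S1 := hS1cl.csInf_mem hS1ne hS1bdd
        have ht1mem : t1 ∈ Icc (0:ℝ) τ := ht1S.1
        have hpt1 : p t1 = cc := ht1S.2
        -- p ≥ cc on [0, t1]
        have hgtcc : ∀ s ∈ Icc (0:ℝ) t1, cc ≤ p s := by
          intro s hs
          by_contra hlt; push_neg at hlt
          have hmem : cc ∈ Icc (p s) (p 0) := ⟨hlt.le, by rw [hp0]; exact hccneg.le⟩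
          obtain ⟨s', hs', hps'⟩ := intermediate_value_Icc' hs.1
            (hpcτ.mono (Icc_subset_Icc le_rfl (hs.2.trans ht1mem.2))) hmem
          have hs'S1 : s' ∈ S1 := ⟨⟨hs'.1, (hs'.2.trans hs.2).trans ht1mem.2⟩, hps'⟩
          have h1 : t1 ≤ s' := csInf_le hS1bdd hs'S1
          have h2 : s = t1 := le_antisymm hs.2 (h1.trans hs'.2)
          rw [h2, hpt1] at hlt
          exact lt_irrefl _ hlt
        -- last zero before t1
        set S2 := Icc (0:ℝ) t1 ∩ p ⁻¹' {(0:ℝ)} with hS2def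
        have hS2cl : IsClosed S2 :=
          (hpcτ.mono (Icc_subset_Icc le_rfl ht1mem.2)).preimage_isClosed_of_isClosed
            isClosed_Icc isClosed_singleton
        have hS2ne : S2.Nonempty := ⟨0, ⟨le_rfl, ht1mem.1⟩, hp0⟩
        have hS2bdd : BddAbove S2 := ⟨t1, fun t ht => ht.1.2⟩
        set t0 := sSup S2 with ht0def
        have ht0S : t0 ∈ S2 := hS2cl.csSup_mem hS2ne hS2bdd
        have ht0mem : t0 ∈ Icc (0:ℝ) t1 := ht0S.1
        have hpt0 : p t0 = 0 := ht0S.2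
        have ht01 : t0 ≤ t1 := ht0mem.2
        -- p ≤ 0 on (t0, t1]
        have hneg2 : ∀ s : ℝ, t0 < s → s ≤ t1 → p s ≤ 0 := by
          intro s hs1 hs2
          by_contra hpos; push_neg at hpos
          have hmem : (0:ℝ) ∈ Icc (p t1) (p s) := ⟨by rw [hpt1]; exact hccneg.le, hpos.le⟩
          obtain ⟨s', hs', hps'⟩ := intermediate_value_Icc' hs2
            (hpcτ.mono (Icc_subset_Icc (ht0mem.1.trans hs1.le) ht1mem.2)) hmem
          have hs'S2 : s' ∈ S2 := ⟨⟨(ht0mem.1.trans hs1.le).trans hs'.1, hs'.2⟩, hps'⟩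
          have := le_csSup hS2bdd hs'S2
          linarith [hs'.1]
        -- integrand nonneg on [t0, t1]
        have hFnn' : ∀ s ∈ Icc t0 t1, 0 ≤ F s := by
          intro s hs
          have hps0 : p s ≤ 0 := by
            rcases hs.1.eq_or_lt with he | hlt
            · rw [← he, hpt0]
            · exact hneg2 s hlt hs.2
          have hpscc : -δ₀ ≤ p s :=
            hccδ.trans (hgtcc s ⟨ht0mem.1.trans hs.1, hs.2⟩)
          exact hFnn s hpscc hps0
        have hintnn : 0 ≤ ∫ s in t0..t1, F s :=
          intervalIntegral.integral_nonneg ht01 hFnn'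
        have := hsubint t0 t1 ht0mem.1 ht01 (ht1mem.2.trans hτmem.2)
        rw [hpt1, hpt0, sub_zero] at this
        linarith
      -- apply the abstract lower-bound lemma
      have hrange : ∀ t ∈ Icc (0:ℝ) τ, p t ∈ Icc 0 θ :=
        fun t ht => ⟨hpge t ht, hple t ht⟩
      have hFle : ∀ s ∈ Icc (0:ℝ) τ, F s ≤
          p s * (1 - p s) * (d1 * b2 - d2 * b1 * (1 - sh * p s)) /
            (b1 * (1 - p s) * (1 - sh * p s) + b2 * p s) +
          M * ((1 / K) * (b1 * (1 - p s) * (1 - sh * p s)) /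
            (b1 * (1 - p s) * (1 - sh * p s) + b2 * p s)) := by
        intro s hs
        have hgs := hgpos (p s) (hrange s hs)
        have hu2 := (humem s).2
        rw [hFdef]
        dsimp only
        nlinarith
      have hFiτ : IntervalIntegrable F volume 0 τ := by
        apply hFi.mono_set
        rw [uIcc_of_le hτmem.1, uIcc_of_le hT.le]
        exact Icc_subset_Icc le_rfl hτmem.2
      have hkey := aux_time_lower_bound θ τ hθpos hτmem.1
        (fun x : ℝ => x * (1 - x) * (d1 * b2 - d2 * b1 * (1 - sh * x)) /
          (b1 * (1 - x) * (1 - sh * x) + b2 * x) +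
          M * ((1 / K) * (b1 * (1 - x) * (1 - sh * x)) /
          (b1 * (1 - x) * (1 - sh * x) + b2 * x)))
        p F hhcont hhpos hpcτ hp0 hpτ hrange hFle hFiτ
        (fun t1 t2 h1 h2 h3 => hsubint t1 t2 h1 h2 (h3.trans hτmem.2))
      rw [hTstar]
      exact le_trans hkey hτmem.2
    · -- non-integrable case: p T = 0 ≠ θ
      exfalso
      have h1 := hpint' T ⟨hT.le, le_rfl⟩
      rw [intervalIntegral.integral_undef hFi] at h1
      rw [hpT] at h1
      linarith
  · -- existence
    obtain ⟨q, hqc, hq0, hqT, hqid⟩ := aux_exists_traj θ hθpos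
      (fun x : ℝ => x * (1 - x) * (d1 * b2 - d2 * b1 * (1 - sh * x)) /
        (b1 * (1 - x) * (1 - sh * x) + b2 * x) +
        M * ((1 / K) * (b1 * (1 - x) * (1 - sh * x)) /
        (b1 * (1 - x) * (1 - sh * x) + b2 * x)))
      hhcont hhpos Tstar hTstar
    refine ⟨q, ⟨measurable_const, fun t => ⟨hM0.le, le_rfl⟩,
      hqc.continuousOn, hq0, fun t ht => ?_⟩, hqT⟩
    exact hqid t ht
end

section
/- (Theorem 2, uniqueness.) Assume M > m* and α ∈ (0,1]. If a pair (T, u*) with T > 0 and u* : [0,T] → [0,M] measurable satisfies p_{u*}(T) = θ and minimizes J_α(T,u) = (1−α)·∫₀^T u(t) dt + α·T over all such admissible pairs, then T = T* and u* = M almost everywhere on [0,T*]. -/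
open MeasureTheory Set intervalIntegral Filter Topology Interval

set_option maxHeartbeats 1000000

lemma aux_chain (φ H : ℝ → ℝ) (hφc : Continuous φ) (C : ℝ) (hC : ∀ x, |φ x| ≤ C)
    (T : ℝ) (hT : 0 ≤ T) (hi : MeasureTheory.Integrable H) :
    (∫ x in (0:ℝ)..(∫ s in (0:ℝ)..T, H s), φ x)
      = ∫ t in (0:ℝ)..T, φ (∫ s in (0:ℝ)..t, H s) * H t := by
  have hC0 : 0 ≤ C := le_trans (abs_nonneg _) (hC 0)
  -- approximating sequence
  have hex : ∀ n : ℕ, ∃ Gn : ℝ → ℝ, (∫ x, ‖H x - Gn x‖) ≤ 1/(n+1) ∧ Continuous Gn ∧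
      Integrable Gn := by
    intro n
    obtain ⟨Gn, _, hint, hcont, hInt⟩ := hi.exists_hasCompactSupport_integral_sub_le
      (ε := 1/(n+1)) (by positivity)
    exact ⟨Gn, hint, hcont, hInt⟩
  choose G hG1 hG2 hG3 using hex
  have hGH' : ∀ n, Integrable (fun s => ‖G n s - H s‖) := fun n => ((hG3 n).sub hi).norm
  have hGH := hGH'
  -- uniform estimate on primitives
  have est : ∀ (n : ℕ) (t : ℝ), |(∫ s in (0:ℝ)..t, G n s) - ∫ s in (0:ℝ)..t, H s| ≤ 1/(n+1) := by
    intro n t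
    have h1 : (∫ s in (0:ℝ)..t, G n s) - ∫ s in (0:ℝ)..t, H s
        = ∫ s in (0:ℝ)..t, (G n s - H s) :=
      (intervalIntegral.integral_sub ((hG3 n).intervalIntegrable)
        (hi.intervalIntegrable)).symm
    rw [h1]
    calc |∫ s in (0:ℝ)..t, (G n s - H s)| ≤ ∫ s in Ι 0 t, ‖G n s - H s‖ := by
          simpa [Real.norm_eq_abs] using
            intervalIntegral.norm_integral_le_integral_norm_uIoc (f := fun s => G n s - H s)
              (a := 0) (b := t) (μ := volume)
      _ ≤ ∫ s, ‖G n s - H s‖ :=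
          setIntegral_le_integral (hGH n) (Eventually.of_forall fun s => norm_nonneg _)
      _ = ∫ s, ‖H s - G n s‖ := by simp_rw [norm_sub_rev]
      _ ≤ 1/(n+1) := hG1 n
  have hlim : Tendsto (fun n : ℕ => 1/((n:ℝ)+1)) atTop (nhds 0) :=
    tendsto_one_div_add_atTop_nhds_zero_nat
  -- the primitive of φ
  set Φ : ℝ → ℝ := fun x => ∫ y in (0:ℝ)..x, φ y with hΦ
  have hΦd : ∀ x : ℝ, HasDerivAt Φ (φ x) x := by
    intro x
    exact intervalIntegral.integral_hasDerivAt_right (hφc.intervalIntegrable _ _)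
      (hφc.stronglyMeasurableAtFilter _ _) hφc.continuousAt
  have hΦc : Continuous Φ := by
    have : Differentiable ℝ Φ := fun x => (hΦd x).differentiableAt
    exact this.continuous
  -- chain rule identity for each n
  have key : ∀ n : ℕ, Φ (∫ s in (0:ℝ)..T, G n s)
      = ∫ t in (0:ℝ)..T, φ (∫ s in (0:ℝ)..t, G n s) * G n t := by
    intro n
    have hpd : ∀ t : ℝ, HasDerivAt (fun t => ∫ s in (0:ℝ)..t, G n s) (G n t) t := fun t =>
      intervalIntegral.integral_hasDerivAt_right ((hG2 n).intervalIntegrable _ _)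
        ((hG2 n).stronglyMeasurableAtFilter _ _) (hG2 n).continuousAt
    have hcomp : ∀ t : ℝ, HasDerivAt (fun t => Φ (∫ s in (0:ℝ)..t, G n s))
        (φ (∫ s in (0:ℝ)..t, G n s) * G n t) t := fun t =>
      (hΦd _).comp t (hpd t)
    have hcont : Continuous fun t => φ (∫ s in (0:ℝ)..t, G n s) * G n t := by
      have hpc : Continuous fun t => ∫ s in (0:ℝ)..t, G n s := continuous_primitive ((hG2 n).intervalIntegrable) 0
      exact (hφc.comp hpc).mul (hG2 n)
    have := intervalIntegral.integral_eq_sub_of_hasDerivAt (a := (0:ℝ)) (b := T)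
      (f := fun t => Φ (∫ s in (0:ℝ)..t, G n s))
      (fun x _ => hcomp x) (hcont.intervalIntegrable 0 T)
    rw [this]
    simp [hΦ]
  -- limits
  have hPt : ∀ t : ℝ, Tendsto (fun n => ∫ s in (0:ℝ)..t, G n s) atTop
      (nhds (∫ s in (0:ℝ)..t, H s)) := by
    intro t
    rw [tendsto_iff_dist_tendsto_zero]
    refine squeeze_zero (fun n => dist_nonneg) (fun n => ?_) hlim
    rw [Real.dist_eq]
    exact est n t
  have hA : Tendsto (fun n => Φ (∫ s in (0:ℝ)..T, G n s)) atTop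
      (nhds (Φ (∫ s in (0:ℝ)..T, H s))) :=
    (hΦc.continuousAt.tendsto).comp (hPt T)
  have hPnc : ∀ n, Continuous fun t => ∫ s in (0:ℝ)..t, G n s := fun n =>
    intervalIntegral.continuous_primitive (fun _ _ => (hG3 n).intervalIntegrable) 0
  have hbd : ∀ n (x : ℝ), ‖φ (∫ s in (0:ℝ)..x, G n s)‖ ≤ C := by
    intro n x; rw [Real.norm_eq_abs]; exact hC _
  have hint1 : ∀ n, Integrable (fun t => φ (∫ s in (0:ℝ)..t, G n s) * H t) := by
    intro n
    exact hi.bdd_mul ((hφc.comp (hPnc n)).aestronglyMeasurable) (Eventually.of_forall (hbd n))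
  have hint2 : ∀ n, Integrable (fun t => φ (∫ s in (0:ℝ)..t, G n s) * (G n t - H t)) := by
    intro n
    exact ((hG3 n).sub hi).bdd_mul ((hφc.comp (hPnc n)).aestronglyMeasurable) (Eventually.of_forall (hbd n))
  have hsplit : ∀ n, (∫ t in (0:ℝ)..T, φ (∫ s in (0:ℝ)..t, G n s) * G n t)
      = (∫ t in (0:ℝ)..T, φ (∫ s in (0:ℝ)..t, G n s) * H t)
        + ∫ t in (0:ℝ)..T, φ (∫ s in (0:ℝ)..t, G n s) * (G n t - H t) := by
    intro n
    rw [← intervalIntegral.integral_add ((hint1 n).intervalIntegrable)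
      ((hint2 n).intervalIntegrable)]
    congr 1; funext t; ring
  have hterm2 : Tendsto (fun n => ∫ t in (0:ℝ)..T, φ (∫ s in (0:ℝ)..t, G n s) * (G n t - H t))
      atTop (nhds 0) := by
    refine squeeze_zero_norm (fun n => ?_) (by simpa only [mul_zero] using hlim.const_mul C)
    calc ‖∫ t in (0:ℝ)..T, φ (∫ s in (0:ℝ)..t, G n s) * (G n t - H t)‖
        ≤ ∫ t in Ι 0 T, ‖φ (∫ s in (0:ℝ)..t, G n s) * (G n t - H t)‖ :=
          intervalIntegral.norm_integral_le_integral_norm_uIoc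
      _ ≤ ∫ t in Ι 0 T, C * ‖G n t - H t‖ := by
          refine integral_mono_of_nonneg (Eventually.of_forall fun t => norm_nonneg _)
            (((hGH' n).const_mul C).restrict) (Eventually.of_forall fun t => ?_)
          simp only [norm_mul]
          exact mul_le_mul_of_nonneg_right (hbd n t) (norm_nonneg _)
      _ = C * ∫ t in Ι 0 T, ‖G n t - H t‖ := by rw [MeasureTheory.integral_const_mul]
      _ ≤ C * ∫ t, ‖G n t - H t‖ := by
          refine mul_le_mul_of_nonneg_left ?_ hC0
          exact setIntegral_le_integral (hGH' n) (Eventually.of_forall fun s => norm_nonneg _)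
      _ ≤ C * (1/(n+1)) := by
          refine mul_le_mul_of_nonneg_left ?_ hC0
          calc (∫ t, ‖G n t - H t‖) = ∫ t, ‖H t - G n t‖ := by simp_rw [norm_sub_rev]
            _ ≤ 1/(n+1) := hG1 n
  have hterm1 : Tendsto (fun n => ∫ t in (0:ℝ)..T, φ (∫ s in (0:ℝ)..t, G n s) * H t)
      atTop (nhds (∫ t in (0:ℝ)..T, φ (∫ s in (0:ℝ)..t, H s) * H t)) := by
    simp_rw [intervalIntegral.integral_of_le hT]
    refine tendsto_integral_of_dominated_convergence (fun t => C * ‖H t‖)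
      (fun n => ((hφc.comp (hPnc n)).aestronglyMeasurable).mul hi.restrict.aestronglyMeasurable)
      ((hi.norm.const_mul C).restrict)
      (fun n => Eventually.of_forall fun t => ?_)
      (Eventually.of_forall fun t => ?_)
    · rw [norm_mul]
      exact mul_le_mul_of_nonneg_right (hbd n t) (norm_nonneg _)
    · exact ((hφc.continuousAt.tendsto).comp (hPt t)).mul_const (H t)
  have hB : Tendsto (fun n => ∫ t in (0:ℝ)..T, φ (∫ s in (0:ℝ)..t, G n s) * G n t) atTop
      (nhds (∫ t in (0:ℝ)..T, φ (∫ s in (0:ℝ)..t, H s) * H t)) := by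
    simp_rw [hsplit]
    simpa using hterm1.add hterm2
  have := tendsto_nhds_unique (hA.congr fun n => (key n).symm ▸ rfl) hB
  simpa [hΦ] using this




/-- Theorem 2, uniqueness: for M > m* and α ∈ (0,1], if (T,u*) is an
admissible pair with p_{u*}(T) = θ minimizing J_α(T,u) = (1-α)∫₀^T u + αT over all
admissible pairs, then T = T* and u* = M a.e. on [0,T*]. -/
theorem stmt_16
    (b1 b2 d1 d2 K sh : ℝ)
    (hb1 : 0 < b1) (hb2 : 0 < b2) (hd1 : 0 < d1) (hd2 : 0 < d2)
    (hK : 0 < K) (hsh0 : 0 < sh) (hsh1 : sh ≤ 1)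
    (hlow : 1 - sh < d1 * b2 / (d2 * b1)) (hhigh : d1 * b2 / (d2 * b1) < 1)
    (f g : ℝ → ℝ)
    (hf : ∀ p, f p = p * (1 - p) * (d1 * b2 - d2 * b1 * (1 - sh * p)) /
      (b1 * (1 - p) * (1 - sh * p) + b2 * p))
    (hg : ∀ p, g p = (1 / K) * (b1 * (1 - p) * (1 - sh * p)) /
      (b1 * (1 - p) * (1 - sh * p) + b2 * p))
    (θ : ℝ) (hθ : θ = (1 / sh) * (1 - d1 * b2 / (d2 * b1)))
    (mstar : ℝ)
    (hmstar : IsGreatest ((fun p => -f p / g p) '' Set.Icc 0 θ) mstar)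
    (M : ℝ) (hM : mstar < M)
    (Tstar : ℝ) (hTstar : Tstar = ∫ ν in (0:ℝ)..θ, (f ν + M * g ν)⁻¹)
    (α : ℝ) (hα0 : 0 < α) (hα1 : α ≤ 1)
    (T : ℝ) (hT : 0 < T)
    (ustar pstate : ℝ → ℝ)
    (htraj : IsTrajectory f g T M ustar pstate) (hreach : pstate T = θ)
    (hopt : ∀ S : ℝ, 0 < S → ∀ u p : ℝ → ℝ, IsTrajectory f g S M u p → p S = θ →
        (1 - α) * (∫ t in (0:ℝ)..T, ustar t) + α * T
          ≤ (1 - α) * (∫ t in (0:ℝ)..S, u t) + α * S) :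
    T = Tstar ∧
    ∀ᵐ t ∂(MeasureTheory.volume.restrict (Set.Icc (0:ℝ) Tstar)), ustar t = M := by
  have hd2b1 : 0 < d2 * b1 := mul_pos hd2 hb1
  have hr1 : d1 * b2 < d2 * b1 := (div_lt_one hd2b1).mp hhigh
  have hθpos : 0 < θ := by
    rw [hθ]
    have h1 : 0 < 1 - d1 * b2 / (d2 * b1) := by linarith
    positivity
  have hθlt1 : θ < 1 := by
    rw [hθ, one_div, inv_mul_eq_div, div_lt_one hsh0]
    have : 1 - sh < d1 * b2 / (d2 * b1) := hlow
    linarith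
  have h1θ : 0 < 1 - θ := by linarith
  have hBform : ∀ x : ℝ, d1*b2 - d2*b1*(1 - sh*x) = d2*b1*sh*(x - θ) := by
    intro x
    have h2 : d2*b1*(sh*θ) = d2*b1 - d1*b2 := by
      rw [hθ]; field_simp
    linear_combination h2
  have hmem0 : (0:ℝ) ∈ (fun p => -f p / g p) '' Set.Icc 0 θ := by
    refine ⟨0, ⟨le_refl 0, hθpos.le⟩, ?_⟩
    show -f 0 / g 0 = 0
    rw [hf 0]
    norm_num
  have hmstar0 : 0 ≤ mstar := hmstar.2 hmem0
  have hM0 : 0 < M := lt_of_le_of_lt hmstar0 hM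
  -- epsilon and delta
  set ε : ℝ := b1/(2*b2) with hε
  have hε0 : 0 < ε := by rw [hε]; positivity
  set δ : ℝ := min 1 (min (b2/(2*b1)) (K*(d2*b1*sh*(1-θ))/(2*M*b1))) with hδ
  have hδ0 : 0 < δ := by
    refine lt_min one_pos (lt_min (by positivity) ?_)
    exact div_pos (mul_pos hK (mul_pos (mul_pos hd2b1 hsh0) h1θ))
      (mul_pos (mul_pos two_pos hM0) hb1)
  have hδ1 : δ ≤ 1 := min_le_left _ _
  have hδb : δ ≤ b2/(2*b1) := le_trans (min_le_right _ _) (min_le_left _ _)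
  have hδc : δ ≤ K*(d2*b1*sh*(1-θ))/(2*M*b1) := le_trans (min_le_right _ _) (min_le_right _ _)
  have hεb2 : 2*b2*ε = b1 := by rw [hε]; field_simp
  have hδb2 : 2*b1*δ ≤ b2 := by
    have h := mul_le_mul_of_nonneg_left hδb (by positivity : (0:ℝ) ≤ 2*b1)
    calc 2*b1*δ ≤ 2*b1*(b2/(2*b1)) := h
      _ = b2 := by field_simp
  have hδc2 : 2*M*b1*δ ≤ K*(d2*b1*sh*(1-θ)) := by
    have h := mul_le_mul_of_nonneg_left hδc (by positivity : (0:ℝ) ≤ 2*M*b1)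
    calc 2*M*b1*δ ≤ 2*M*b1*(K*(d2*b1*sh*(1-θ))/(2*M*b1)) := h
      _ = K*(d2*b1*sh*(1-θ)) := by field_simp
  clear_value ε δ
  -- denominator positivity
  have hDpos : ∀ x : ℝ, -ε ≤ x → x ≤ 1+δ → 0 < b1*(1-x)*(1-sh*x)+b2*x := by
    intro x hx1 hx2
    rcases le_or_gt x 0 with hx0 | hx0
    · have h1 : sh*x ≤ 0 := mul_nonpos_iff.mpr (Or.inl ⟨hsh0.le, hx0⟩)
      have h2 : 0 ≤ sh*x^2 := mul_nonneg hsh0.le (sq_nonneg x)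
      have h3 : b2*(-ε) ≤ b2*x := mul_le_mul_of_nonneg_left hx1 hb2.le
      have hA : b1*1 ≤ b1*((1-x)*(1-sh*x)) :=
        mul_le_mul_of_nonneg_left (by nlinarith [h2] : (1:ℝ) ≤ (1-x)*(1-sh*x)) hb1.le
      linarith [hA, h3, hεb2]
    rcases le_or_gt x 1 with hx01 | hx1'
    · have h1 : sh*x ≤ x := by
        calc sh*x ≤ 1*x := mul_le_mul_of_nonneg_right hsh1 (by linarith)
          _ = x := one_mul x
      have h2 : 0 ≤ b1*(1-x)*(1-sh*x) :=
        mul_nonneg (mul_nonneg hb1.le (by linarith)) (by linarith)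
      have h3 : 0 < b2*x := mul_pos hb2 hx0
      linarith
    · have h1 : 0 ≤ sh*x := mul_nonneg hsh0.le (by linarith)
      have h2 : sh*x ≤ x := by
        calc sh*x ≤ 1*x := mul_le_mul_of_nonneg_right hsh1 (by linarith)
          _ = x := one_mul x
      have h3 : (x-1)*(sh*x-1) ≥ -(x-1) := by
        have hp : 0 ≤ (x-1)*(sh*x) := mul_nonneg (by linarith) h1
        nlinarith [hp]
      have h4 : b1*(1-x)*(1-sh*x) = b1*((x-1)*(sh*x-1)) := by ring
      have h5 : b1*((x-1)*(sh*x-1)) ≥ b1*(-(x-1)) := mul_le_mul_of_nonneg_left h3 hb1.le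
      have h6 : b2*1 ≤ b2*x := mul_le_mul_of_nonneg_left (by linarith) hb2.le
      have h7 : b1*(x-1) ≤ b1*δ := mul_le_mul_of_nonneg_left (by linarith) hb1.le
      linarith [h4, h5, h6, h7, hδb2]
  obtain ⟨humeas, hubd, hpc, hp0, hpint⟩ := htraj
  -- sign facts
  have hfg_neg : ∀ x : ℝ, -ε ≤ x → x ≤ 0 → 0 ≤ f x ∧ 0 ≤ g x := by
    intro x hx1 hx2
    have hD := hDpos x hx1 (by linarith)
    constructor
    · rw [hf x]
      apply div_nonneg _ hD.le
      have hB : d1 * b2 - d2 * b1 * (1 - sh * x) ≤ 0 := by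
        rw [hBform x]
        exact mul_nonpos_iff.mpr (Or.inl ⟨(mul_pos hd2b1 hsh0).le, by linarith⟩)
      have hx3 : x * (1 - x) ≤ 0 := mul_nonpos_iff.mpr (Or.inr ⟨hx2, by linarith⟩)
      nlinarith [mul_nonneg (neg_nonneg.2 hx3) (neg_nonneg.2 hB)]
    · rw [hg x]
      apply div_nonneg _ hD.le
      have h1 : sh*x ≤ 0 := mul_nonpos_iff.mpr (Or.inl ⟨hsh0.le, hx2⟩)
      apply mul_nonneg (by positivity : (0:ℝ) ≤ 1/K)
      exact mul_nonneg (mul_nonneg hb1.le (by linarith)) (by linarith)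
  have hfg_mid : ∀ x : ℝ, θ ≤ x → x ≤ 1 → 0 ≤ f x ∧ 0 ≤ g x := by
    intro x hx1 hx2
    have hx0 : 0 ≤ x := le_trans hθpos.le hx1
    have hD := hDpos x (by linarith) (by linarith)
    have hshx : sh*x ≤ x := by
      calc sh*x ≤ 1*x := mul_le_mul_of_nonneg_right hsh1 hx0
        _ = x := one_mul x
    constructor
    · rw [hf x]
      apply div_nonneg _ hD.le
      have hB : 0 ≤ d1 * b2 - d2 * b1 * (1 - sh * x) := by
        rw [hBform x]
        exact mul_nonneg (mul_pos hd2b1 hsh0).le (by linarith)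
      exact mul_nonneg (mul_nonneg hx0 (by linarith)) hB
    · rw [hg x]
      apply div_nonneg _ hD.le
      apply mul_nonneg (by positivity : (0:ℝ) ≤ 1/K)
      exact mul_nonneg (mul_nonneg hb1.le (by linarith)) (by linarith)
  have hfg_hi : ∀ x : ℝ, 1 ≤ x → x ≤ 1+δ → f x ≤ 0 ∧ f x + M * g x ≤ 0 := by
    intro x hx1 hx2
    have hx0 : (0:ℝ) ≤ x := by linarith
    have hD := hDpos x (by linarith) hx2
    have hBx : 0 ≤ d1 * b2 - d2 * b1 * (1 - sh * x) := by
      rw [hBform x]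
      exact mul_nonneg (mul_pos hd2b1 hsh0).le (by linarith)
    have hshx : sh*x ≤ x := by
      calc sh*x ≤ 1*x := mul_le_mul_of_nonneg_right hsh1 hx0
        _ = x := one_mul x
    constructor
    · rw [hf x]
      apply div_nonpos_of_nonpos_of_nonneg _ hD.le
      exact mul_nonpos_iff.mpr (Or.inr
        ⟨mul_nonpos_iff.mpr (Or.inl ⟨hx0, by linarith⟩), hBx⟩)
    · have key : f x + M * g x
          = ((1-x) * (x * (d2*b1*sh*(x-θ)) + M/K*(b1*(1-sh*x))))
            / (b1*(1-x)*(1-sh*x)+b2*x) := by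
        rw [hf x, hg x, hBform x]
        field_simp
      rw [key]
      apply div_nonpos_of_nonpos_of_nonneg _ hD.le
      have hQ : 0 < d2*b1*sh*(1-θ) := mul_pos (mul_pos hd2b1 hsh0) h1θ
      have h1 : d2*b1*sh*(1-θ) ≤ x * (d2*b1*sh*(x-θ)) := by
        have ha : d2*b1*sh*(1-θ) ≤ d2*b1*sh*(x-θ) :=
          mul_le_mul_of_nonneg_left (by linarith) (mul_pos hd2b1 hsh0).le
        have hb : 0 ≤ d2*b1*sh*(x-θ) := mul_nonneg (mul_pos hd2b1 hsh0).le (by linarith)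
        calc d2*b1*sh*(1-θ) ≤ d2*b1*sh*(x-θ) := ha
          _ = 1 * (d2*b1*sh*(x-θ)) := (one_mul _).symm
          _ ≤ x * (d2*b1*sh*(x-θ)) := mul_le_mul_of_nonneg_right hx1 hb
      have h2 : -(M/K*(b1*δ)) ≤ M/K*(b1*(1-sh*x)) := by
        have e1 : (-δ:ℝ) ≤ 1-sh*x := by linarith
        have e2 := mul_le_mul_of_nonneg_left
          (mul_le_mul_of_nonneg_left e1 hb1.le) (show (0:ℝ) ≤ M/K by positivity)
        linarith [e2]
      have h3 : M/K*(b1*δ) ≤ d2*b1*sh*(1-θ)/2 := by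
        rw [div_mul_eq_mul_div, div_le_div_iff₀ hK two_pos]
        linarith [hδc2]
      have hbr : 0 ≤ x * (d2*b1*sh*(x-θ)) + M/K*(b1*(1-sh*x)) := by linarith
      exact mul_nonpos_iff.mpr (Or.inr ⟨by linarith, hbr⟩)
  have hshθ1 : sh*θ < 1 := by
    have h2 : d2*b1*(sh*θ) = d2*b1 - d1*b2 := by rw [hθ]; field_simp
    nlinarith [h2, mul_pos hd1 hb2]
  have h0θ : ∀ x : ℝ, 0 ≤ x → x ≤ θ → f x ≤ 0 ∧ 0 < g x ∧ 0 < f x + M * g x := by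
    intro x hx0 hxθ
    have hD := hDpos x (by linarith) (by linarith)
    have hshxθ : sh*x ≤ sh*θ := mul_le_mul_of_nonneg_left hxθ hsh0.le
    have hgpos : 0 < g x := by
      rw [hg x]
      apply div_pos _ hD
      apply mul_pos (by positivity : (0:ℝ) < 1/K)
      exact mul_pos (mul_pos hb1 (by linarith)) (by linarith)
    have hfneg : f x ≤ 0 := by
      rw [hf x]
      apply div_nonpos_of_nonpos_of_nonneg _ hD.le
      have hBx : d1 * b2 - d2 * b1 * (1 - sh * x) ≤ 0 := by
        rw [hBform x]
        exact mul_nonpos_iff.mpr (Or.inl ⟨(mul_pos hd2b1 hsh0).le, by linarith⟩)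
      exact mul_nonpos_iff.mpr (Or.inl ⟨mul_nonneg hx0 (by linarith), hBx⟩)
    refine ⟨hfneg, hgpos, ?_⟩
    have hmem : -f x / g x ≤ mstar := hmstar.2 ⟨x, ⟨hx0, hxθ⟩, rfl⟩
    have h1 : -f x ≤ mstar * g x := (div_le_iff₀ hgpos).mp hmem
    have h2 : mstar * g x < M * g x := mul_lt_mul_of_pos_right hM hgpos
    linarith
  -- continuity and bounds
  have hfco : ContinuousOn f (Icc (-ε) (1+δ)) := by
    have hc : ContinuousOn (fun x : ℝ => x * (1 - x) * (d1 * b2 - d2 * b1 * (1 - sh * x)) /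
        (b1 * (1 - x) * (1 - sh * x) + b2 * x)) (Icc (-ε) (1+δ)) := by
      apply ContinuousOn.div (by fun_prop) (by fun_prop)
      intro x hx
      exact (hDpos x hx.1 hx.2).ne'
    exact hc.congr fun x _ => hf x
  have hgco : ContinuousOn g (Icc (-ε) (1+δ)) := by
    have hc : ContinuousOn (fun x : ℝ => 1 / K * (b1 * (1 - x) * (1 - sh * x)) /
        (b1 * (1 - x) * (1 - sh * x) + b2 * x)) (Icc (-ε) (1+δ)) := by
      apply ContinuousOn.div (by fun_prop) (by fun_prop)
      intro x hx
      exact (hDpos x hx.1 hx.2).ne'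
    exact hc.congr fun x _ => hg x
  obtain ⟨Cf, hCf⟩ := isCompact_Icc.exists_bound_of_continuousOn hfco
  obtain ⟨Cg, hCg⟩ := isCompact_Icc.exists_bound_of_continuousOn hgco
  -- the velocity field along the trajectory
  set v : ℝ → ℝ := fun t => f (pstate t) + ustar t * g (pstate t) with hv
  have hfm : Measurable f := by
    rw [show f = fun x : ℝ => x * (1 - x) * (d1 * b2 - d2 * b1 * (1 - sh * x)) /
        (b1 * (1 - x) * (1 - sh * x) + b2 * x) from funext hf]
    fun_prop
  have hgm : Measurable g := by
    rw [show g = fun x : ℝ => 1 / K * (b1 * (1 - x) * (1 - sh * x)) /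
        (b1 * (1 - x) * (1 - sh * x) + b2 * x) from funext hg]
    fun_prop
  have hCg0 : 0 ≤ Cg := le_trans (norm_nonneg _) (hCg 0 ⟨by linarith, by linarith⟩)
  -- integrability on subintervals on which the state stays in the good region
  have mkint : ∀ b, b ∈ Icc (0:ℝ) T → (∀ s ∈ Icc (0:ℝ) b, pstate s ∈ Icc (-ε) (1+δ)) →
      IntegrableOn v (Icc (0:ℝ) b) := by
    intro b hb hran
    have hpm : AEMeasurable pstate (volume.restrict (Icc 0 b)) :=
      ((hpc.mono (Icc_subset_Icc le_rfl hb.2)).aemeasurable measurableSet_Icc)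
    have hvm : AEStronglyMeasurable v (volume.restrict (Icc 0 b)) := by
      apply AEMeasurable.aestronglyMeasurable
      exact (hfm.comp_aemeasurable hpm).add
        (humeas.aemeasurable.mul (hgm.comp_aemeasurable hpm))
    have hvb : ∀ s ∈ Icc (0:ℝ) b, ‖v s‖ ≤ Cf + M * Cg := by
      intro s hs
      have h1 : ‖f (pstate s)‖ ≤ Cf := hCf (pstate s) (hran s hs)
      have h2 : ‖g (pstate s)‖ ≤ Cg := hCg (pstate s) (hran s hs)
      have h3 : |ustar s| ≤ M := abs_le.mpr ⟨by linarith [(hubd s).1], (hubd s).2⟩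
      calc ‖v s‖ ≤ ‖f (pstate s)‖ + ‖ustar s * g (pstate s)‖ := norm_add_le _ _
        _ = ‖f (pstate s)‖ + |ustar s| * ‖g (pstate s)‖ := by
            rw [norm_mul]; rfl
        _ ≤ Cf + M * Cg := add_le_add h1
            (mul_le_mul h3 h2 (norm_nonneg _) (le_trans (abs_nonneg _) h3))
    exact Integrable.mono' (integrable_const (Cf + M * Cg)) hvm
      ((ae_restrict_iff' measurableSet_Icc).2 (Eventually.of_forall hvb))
  -- monotonicity tools
  have mono_tool : ∀ a b : ℝ, 0 ≤ a → a ≤ b → IntegrableOn v (Icc (0:ℝ) b) →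
      a ∈ Icc (0:ℝ) T → b ∈ Icc (0:ℝ) T →
      (∀ s ∈ Icc a b, 0 ≤ v s) → pstate a ≤ pstate b := by
    intro a b ha hab hi haT hbT hsign
    have hI0b : IntervalIntegrable v volume 0 b :=
      (intervalIntegrable_iff_integrableOn_Icc_of_le (le_trans ha hab)).mpr hi
    have hI0a : IntervalIntegrable v volume 0 a :=
      (intervalIntegrable_iff_integrableOn_Icc_of_le ha).mpr
        (hi.mono_set (Icc_subset_Icc le_rfl hab))
    have e1 : pstate b - pstate a = ∫ s in a..b, v s := by
      rw [hpint a haT, hpint b hbT, ← intervalIntegral.integral_interval_sub_left hI0b hI0a]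
    have e2 : 0 ≤ ∫ s in a..b, v s := intervalIntegral.integral_nonneg hab hsign
    linarith
  have anti_tool : ∀ a b : ℝ, 0 ≤ a → a ≤ b → IntegrableOn v (Icc (0:ℝ) b) →
      a ∈ Icc (0:ℝ) T → b ∈ Icc (0:ℝ) T →
      (∀ s ∈ Icc a b, v s ≤ 0) → pstate b ≤ pstate a := by
    intro a b ha hab hi haT hbT hsign
    have hI0b : IntervalIntegrable v volume 0 b :=
      (intervalIntegrable_iff_integrableOn_Icc_of_le (le_trans ha hab)).mpr hi
    have hI0a : IntervalIntegrable v volume 0 a :=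
      (intervalIntegrable_iff_integrableOn_Icc_of_le ha).mpr
        (hi.mono_set (Icc_subset_Icc le_rfl hab))
    have e1 : pstate b - pstate a = ∫ s in a..b, v s := by
      rw [hpint a haT, hpint b hbT, ← intervalIntegral.integral_interval_sub_left hI0b hI0a]
    have e2 : 0 ≤ ∫ s in a..b, (fun s => -v s) s :=
      intervalIntegral.integral_nonneg hab (fun u hu => neg_nonneg.2 (hsign u hu))
    rw [intervalIntegral.integral_neg] at e2
    linarith
  -- lower bound: the state stays nonnegative
  have lower : ∀ b, b ∈ Icc (0:ℝ) T → IntegrableOn v (Icc (0:ℝ) b) →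
      (∀ s ∈ Icc (0:ℝ) b, pstate s ∈ Icc (-ε) (1+δ)) → ∀ t ∈ Icc (0:ℝ) b, 0 ≤ pstate t := by
    intro b hb hi hran t ht
    by_contra hneg
    push_neg at hneg
    have htT : t ∈ Icc (0:ℝ) T := ⟨ht.1, le_trans ht.2 hb.2⟩
    set S := {s ∈ Icc (0:ℝ) t | 0 ≤ pstate s} with hS
    have hSclosed : IsClosed S := by
      have : S = Icc (0:ℝ) t ∩ pstate ⁻¹' (Ici 0) := by
        ext s; simp [hS, Set.mem_sep_iff, Set.mem_preimage]
      rw [this]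
      exact ContinuousOn.preimage_isClosed_of_isClosed
        (hpc.mono (Icc_subset_Icc le_rfl htT.2)) isClosed_Icc isClosed_Ici
    have h0S : (0:ℝ) ∈ S := ⟨⟨le_rfl, ht.1⟩, le_of_eq hp0.symm⟩
    have hbdd : BddAbove S := ⟨t, fun s hs => hs.1.2⟩
    set c := sSup S with hc
    clear_value c
    have hcS : c ∈ S := by rw [hc]; exact hSclosed.csSup_mem ⟨0, h0S⟩ hbdd
    have hc0 : 0 ≤ c := hcS.1.1
    have hct : c ≤ t := hcS.1.2
    have hclt : c < t := lt_of_le_of_ne hct (by intro heq; rw [heq] at hcS; exact absurd hcS.2 (not_le.2 hneg))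
    have hcT : c ∈ Icc (0:ℝ) T := ⟨hc0, le_trans hct htT.2⟩
    have hlt : ∀ s, c < s → s ≤ t → pstate s < 0 := by
      intro s hcs hst
      by_contra hge
      push_neg at hge
      have hle := le_csSup hbdd (⟨⟨le_trans hc0 hcs.le, hst⟩, hge⟩ : s ∈ S)
      rw [← hc] at hle
      exact absurd hle (not_le.2 hcs)
    have hpc_le : pstate c ≤ 0 := by
      have hcont : ContinuousWithinAt pstate (Ioc c t) c :=
        ((hpc c hcT).mono (fun s hs => ⟨le_trans hc0 hs.1.le, le_trans hs.2 htT.2⟩))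
      have hmem : c ∈ closure (Ioc c t) := by
        rw [closure_Ioc (ne_of_lt hclt)]
        exact ⟨le_rfl, hclt.le⟩
      have himg := hcont.mem_closure_image hmem
      have hsub : pstate '' Ioc c t ⊆ Iic 0 := by
        rintro y ⟨s, hs, rfl⟩
        exact (hlt s hs.1 hs.2).le
      have h2 := closure_mono hsub himg
      rwa [isClosed_Iic.closure_eq] at h2
    have hpceq : pstate c = 0 := le_antisymm hpc_le hcS.2
    have hsign : ∀ s ∈ Icc c t, 0 ≤ v s := by
      intro s hs
      have hsT : s ∈ Icc (0:ℝ) b := ⟨le_trans hc0 hs.1, le_trans hs.2 ht.2⟩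
      have hps_le : pstate s ≤ 0 := by
        rcases eq_or_lt_of_le hs.1 with heq | hlt'
        · rw [← heq, hpceq]
        · exact (hlt s hlt' hs.2).le
      have hps_ge : -ε ≤ pstate s := (hran s hsT).1
      obtain ⟨hf0, hg0⟩ := hfg_neg (pstate s) hps_ge hps_le
      have hmul : 0 ≤ ustar s * g (pstate s) := mul_nonneg (hubd s).1 hg0
      show 0 ≤ f (pstate s) + ustar s * g (pstate s)
      linarith
    have hfin := mono_tool c t hc0 hclt.le (hi.mono_set (Icc_subset_Icc le_rfl ht.2)) hcT htT hsign
    rw [hpceq] at hfin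
    exact absurd hfin (not_le.2 hneg)
  -- upper bound: the state stays below 1
  have upper1 : ∀ b, b ∈ Icc (0:ℝ) T → IntegrableOn v (Icc (0:ℝ) b) →
      (∀ s ∈ Icc (0:ℝ) b, pstate s ∈ Icc (-ε) (1+δ)) → ∀ t ∈ Icc (0:ℝ) b, pstate t ≤ 1 := by
    intro b hb hi hran t ht
    by_contra hneg
    push_neg at hneg
    have htT : t ∈ Icc (0:ℝ) T := ⟨ht.1, le_trans ht.2 hb.2⟩
    set S := {s ∈ Icc (0:ℝ) t | pstate s ≤ 1} with hS
    have hSclosed : IsClosed S := by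
      have : S = Icc (0:ℝ) t ∩ pstate ⁻¹' (Iic 1) := by
        ext s; simp [hS, Set.mem_sep_iff, Set.mem_preimage]
      rw [this]
      exact ContinuousOn.preimage_isClosed_of_isClosed
        (hpc.mono (Icc_subset_Icc le_rfl htT.2)) isClosed_Icc isClosed_Iic
    have h0S : (0:ℝ) ∈ S := ⟨⟨le_rfl, ht.1⟩, by rw [hp0]; linarith⟩
    have hbdd : BddAbove S := ⟨t, fun s hs => hs.1.2⟩
    set c := sSup S with hc
    clear_value c
    have hcS : c ∈ S := by rw [hc]; exact hSclosed.csSup_mem ⟨0, h0S⟩ hbdd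
    have hc0 : 0 ≤ c := hcS.1.1
    have hct : c ≤ t := hcS.1.2
    have hclt : c < t := lt_of_le_of_ne hct (by intro heq; rw [heq] at hcS; exact absurd hcS.2 (not_le.2 hneg))
    have hcT : c ∈ Icc (0:ℝ) T := ⟨hc0, le_trans hct htT.2⟩
    have hlt : ∀ s, c < s → s ≤ t → 1 < pstate s := by
      intro s hcs hst
      by_contra hge
      push_neg at hge
      have hle := le_csSup hbdd (⟨⟨le_trans hc0 hcs.le, hst⟩, hge⟩ : s ∈ S)
      rw [← hc] at hle
      exact absurd hle (not_le.2 hcs)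
    have hpc_ge : 1 ≤ pstate c := by
      have hcont : ContinuousWithinAt pstate (Ioc c t) c :=
        ((hpc c hcT).mono (fun s hs => ⟨le_trans hc0 hs.1.le, le_trans hs.2 htT.2⟩))
      have hmem : c ∈ closure (Ioc c t) := by
        rw [closure_Ioc (ne_of_lt hclt)]
        exact ⟨le_rfl, hclt.le⟩
      have himg := hcont.mem_closure_image hmem
      have hsub : pstate '' Ioc c t ⊆ Ici 1 := by
        rintro y ⟨s, hs, rfl⟩
        exact (hlt s hs.1 hs.2).le
      have h2 := closure_mono hsub himg
      rwa [isClosed_Ici.closure_eq] at h2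
    have hpceq : pstate c = 1 := le_antisymm hcS.2 hpc_ge
    have hsign : ∀ s ∈ Icc c t, v s ≤ 0 := by
      intro s hs
      have hsT : s ∈ Icc (0:ℝ) b := ⟨le_trans hc0 hs.1, le_trans hs.2 ht.2⟩
      have hps_ge : 1 ≤ pstate s := by
        rcases eq_or_lt_of_le hs.1 with heq | hlt'
        · rw [← heq, hpceq]
        · exact (hlt s hlt' hs.2).le
      have hps_le : pstate s ≤ 1+δ := (hran s hsT).2
      obtain ⟨hf0, hfMg⟩ := hfg_hi (pstate s) hps_ge hps_le
      show f (pstate s) + ustar s * g (pstate s) ≤ 0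
      rcases le_or_gt 0 (g (pstate s)) with hg0 | hg0
      · have : ustar s * g (pstate s) ≤ M * g (pstate s) :=
          mul_le_mul_of_nonneg_right (hubd s).2 hg0
        linarith
      · have : ustar s * g (pstate s) ≤ 0 :=
          mul_nonpos_iff.mpr (Or.inl ⟨(hubd s).1, hg0.le⟩)
        linarith
    have hfin := anti_tool c t hc0 hclt.le (hi.mono_set (Icc_subset_Icc le_rfl ht.2)) hcT htT hsign
    rw [hpceq] at hfin
    exact absurd hfin (not_le.2 hneg)
  -- the state never leaves the good region
  have hstay : ∀ t ∈ Icc (0:ℝ) T, pstate t ∈ Ioo (-ε) (1+δ) := by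
    by_contra hcon
    push_neg at hcon
    obtain ⟨t0, ht0, hout⟩ := hcon
    set A := {s ∈ Icc (0:ℝ) T | pstate s ∉ Ioo (-ε) (1+δ)} with hA
    have hAne : A.Nonempty := ⟨t0, ht0, hout⟩
    have hAclosed : IsClosed A := by
      have : A = Icc (0:ℝ) T ∩ pstate ⁻¹' (Ioo (-ε) (1+δ))ᶜ := by
        ext s; simp [hA, Set.mem_sep_iff, Set.mem_preimage]
      rw [this]
      exact ContinuousOn.preimage_isClosed_of_isClosed hpc isClosed_Icc
        isOpen_Ioo.isClosed_compl
    have hAbdd : BddBelow A := ⟨0, fun s hs => hs.1.1⟩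
    set tb := sInf A with htbdef
    clear_value tb
    have htbA : tb ∈ A := by rw [htbdef]; exact hAclosed.csInf_mem hAne hAbdd
    have htbT : tb ∈ Icc (0:ℝ) T := htbA.1
    have htb0 : 0 < tb := by
      rcases eq_or_lt_of_le htbA.1.1 with heq | h
      · exfalso
        apply htbA.2
        rw [← heq, hp0]
        exact ⟨by linarith, by linarith⟩
      · exact h
    have hbefore : ∀ s, 0 ≤ s → s < tb → pstate s ∈ Ioo (-ε) (1+δ) := by
      intro s h0s hstb
      by_contra hno
      have hle := csInf_le hAbdd (⟨⟨h0s, le_trans hstb.le htbT.2⟩, hno⟩ : s ∈ A)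
      rw [← htbdef] at hle
      exact absurd hle (not_le.2 hstb)
    have hran : ∀ s ∈ Icc (0:ℝ) tb, pstate s ∈ Icc (-ε) (1+δ) := by
      intro s hs
      rcases eq_or_lt_of_le hs.2 with heq | hlt
      · rw [heq]
        have hcont : ContinuousWithinAt pstate (Ico 0 tb) tb :=
          ((hpc tb htbT).mono (fun y hy => ⟨hy.1, le_trans hy.2.le htbT.2⟩))
        have hmem : tb ∈ closure (Ico 0 tb) := by
          rw [closure_Ico htb0.ne]
          exact ⟨htb0.le, le_rfl⟩
        have himg := hcont.mem_closure_image hmem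
        have hsub : pstate '' Ico 0 tb ⊆ Icc (-ε) (1+δ) := by
          rintro y ⟨s', hs', rfl⟩
          exact Ioo_subset_Icc_self (hbefore s' hs'.1 hs'.2)
        have h2 := closure_mono hsub himg
        rwa [isClosed_Icc.closure_eq] at h2
      · exact Ioo_subset_Icc_self (hbefore s hs.1 hlt)
    have hint_tb := mkint tb htbT hran
    have hlow := lower tb htbT hint_tb hran tb ⟨htb0.le, le_rfl⟩
    have hup := upper1 tb htbT hint_tb hran tb ⟨htb0.le, le_rfl⟩
    exact htbA.2 ⟨lt_of_lt_of_le (by linarith) hlow, lt_of_le_of_lt hup (by linarith)⟩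
  have hTmem : T ∈ Icc (0:ℝ) T := ⟨hT.le, le_rfl⟩
  have hranT : ∀ s ∈ Icc (0:ℝ) T, pstate s ∈ Icc (-ε) (1+δ) := fun s hs =>
    Ioo_subset_Icc_self (hstay s hs)
  have hintT : IntegrableOn v (Icc (0:ℝ) T) := mkint T hTmem hranT
  have hpos : ∀ t ∈ Icc (0:ℝ) T, 0 ≤ pstate t := lower T hTmem hintT hranT
  have hle1 : ∀ t ∈ Icc (0:ℝ) T, pstate t ≤ 1 := upper1 T hTmem hintT hranT
  -- the state stays below θ
  have hleθ : ∀ t ∈ Icc (0:ℝ) T, pstate t ≤ θ := by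
    by_contra hcon
    push_neg at hcon
    obtain ⟨t0, ht0, hgt⟩ := hcon
    set S := {s ∈ Icc t0 T | pstate s ≤ θ} with hS
    have hTS : T ∈ S := ⟨⟨ht0.2, le_rfl⟩, le_of_eq hreach⟩
    have hSclosed : IsClosed S := by
      have : S = Icc t0 T ∩ pstate ⁻¹' (Iic θ) := by
        ext s; simp [hS, Set.mem_sep_iff, Set.mem_preimage]
      rw [this]
      exact ContinuousOn.preimage_isClosed_of_isClosed
        (hpc.mono (Icc_subset_Icc ht0.1 le_rfl)) isClosed_Icc isClosed_Iic
    have hbdd : BddBelow S := ⟨t0, fun s hs => hs.1.1⟩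
    set c := sInf S with hcdef
    clear_value c
    have hcS : c ∈ S := by rw [hcdef]; exact hSclosed.csInf_mem ⟨T, hTS⟩ hbdd
    have hct0 : t0 ≤ c := hcS.1.1
    have hcT : c ≤ T := hcS.1.2
    have hcmem : c ∈ Icc (0:ℝ) T := ⟨le_trans ht0.1 hct0, hcT⟩
    have htlt : t0 < c := lt_of_le_of_ne hct0 (by intro heq; rw [heq] at hgt; exact absurd hcS.2 (not_le.2 hgt))
    have hlt : ∀ s, t0 ≤ s → s < c → θ < pstate s := by
      intro s hts hsc
      by_contra hge
      push_neg at hge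
      have hle := csInf_le hbdd (⟨⟨hts, le_trans hsc.le hcT⟩, hge⟩ : s ∈ S)
      rw [← hcdef] at hle
      exact absurd hle (not_le.2 hsc)
    have hband : ∀ s ∈ Icc t0 c, θ ≤ pstate s := by
      intro s hs
      rcases eq_or_lt_of_le hs.2 with heq | hlt'
      · rw [heq]
        have hcont : ContinuousWithinAt pstate (Ico t0 c) c :=
          ((hpc c hcmem).mono (fun y hy => ⟨le_trans ht0.1 hy.1, le_trans hy.2.le hcT⟩))
        have hmem : c ∈ closure (Ico t0 c) := by
          rw [closure_Ico htlt.ne]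
          exact ⟨htlt.le, le_rfl⟩
        have himg := hcont.mem_closure_image hmem
        have hsub : pstate '' Ico t0 c ⊆ Ici θ := by
          rintro y ⟨s', hs', rfl⟩
          exact (hlt s' hs'.1 hs'.2).le
        have h2 := closure_mono hsub himg
        rwa [isClosed_Ici.closure_eq] at h2
      · exact (hlt s hs.1 hlt').le
    have hsign : ∀ s ∈ Icc t0 c, 0 ≤ v s := by
      intro s hs
      have hsT : s ∈ Icc (0:ℝ) T := ⟨le_trans ht0.1 hs.1, le_trans hs.2 hcT⟩
      obtain ⟨hf0, hg0⟩ := hfg_mid (pstate s) (hband s hs) (hle1 s hsT)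
      have hmul : 0 ≤ ustar s * g (pstate s) := mul_nonneg (hubd s).1 hg0
      show 0 ≤ f (pstate s) + ustar s * g (pstate s)
      linarith
    have hfin := mono_tool t0 c ht0.1 htlt.le (hintT.mono_set (Icc_subset_Icc le_rfl hcT))
      ht0 hcmem hsign
    exact absurd (le_trans hfin hcS.2) (not_le.2 hgt)
  have hinv : ∀ t ∈ Icc (0:ℝ) T, pstate t ∈ Icc 0 θ := fun t ht => ⟨hpos t ht, hleθ t ht⟩
  -- the clamped integrand and its primitive
  set pr : ℝ → ℝ := fun x => max 0 (min x θ) with hpr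
  have hprc : Continuous pr := by fun_prop
  have hprmem : ∀ x, pr x ∈ Icc (0:ℝ) θ := fun x =>
    ⟨le_max_left _ _, max_le hθpos.le (min_le_right x θ)⟩
  have hprid : ∀ x ∈ Icc (0:ℝ) θ, pr x = x := by
    intro x hx
    rw [hpr]
    simp only
    rw [min_eq_left hx.2, max_eq_right hx.1]
  set γ : ℝ → ℝ := fun x => (f (pr x) + M * g (pr x))⁻¹ with hγ
  have hfMg_pos : ∀ x ∈ Icc (0:ℝ) θ, 0 < f x + M * g x := fun x hx => (h0θ x hx.1 hx.2).2.2
  have hγpos : ∀ x, 0 < γ x := fun x => inv_pos.2 (hfMg_pos (pr x) (hprmem x))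
  have hsubIcc : Icc (0:ℝ) θ ⊆ Icc (-ε) (1+δ) := fun y hy =>
    ⟨by linarith [hy.1], by linarith [hy.2, hθlt1]⟩
  have hγc : Continuous γ := by
    have h1 : Continuous fun x => f (pr x) + M * g (pr x) := by
      have h2 : ContinuousOn (fun x => f x + M * g x) (Icc (0:ℝ) θ) :=
        (hfco.mono hsubIcc).add (continuousOn_const.mul (hgco.mono hsubIcc))
      exact h2.comp_continuous hprc hprmem
    exact h1.inv₀ (fun x => (hfMg_pos (pr x) (hprmem x)).ne')
  have hγγ : ∀ x, γ x = γ (pr x) := by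
    intro x
    show _ = (f (pr (pr x)) + M * g (pr (pr x)))⁻¹
    rw [hprid _ (hprmem x)]
  obtain ⟨xm, hxmm, hxmin⟩ := isCompact_Icc.exists_isMinOn
    (nonempty_Icc.mpr hθpos.le) (hγc.continuousOn (s := Icc (0:ℝ) θ))
  have hcγ0 : 0 < γ xm := hγpos xm
  have hγlb : ∀ x, γ xm ≤ γ x := by
    intro x
    rw [hγγ x]
    exact hxmin (hprmem x)
  obtain ⟨Cγ, hCγ⟩ := isCompact_Icc.exists_bound_of_continuousOn
    (hγc.continuousOn (s := Icc (0:ℝ) θ))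
  have hγub' : ∀ x, |γ x| ≤ Cγ := by
    intro x
    rw [hγγ x, abs_of_pos (hγpos (pr x))]
    have := hCγ (pr x) (hprmem x)
    rwa [Real.norm_eq_abs, abs_of_pos (hγpos (pr x))] at this
  set Φ : ℝ → ℝ := fun x => ∫ y in (0:ℝ)..x, γ y with hΦdef
  have hΦd : ∀ x, HasDerivAt Φ (γ x) x := fun x =>
    intervalIntegral.integral_hasDerivAt_right (hγc.intervalIntegrable _ _)
      (hγc.stronglyMeasurableAtFilter _ _) hγc.continuousAt
  have hΦc : Continuous Φ := by
    have : Differentiable ℝ Φ := fun x => (hΦd x).differentiableAt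
    exact this.continuous
  have hΦmono : StrictMono Φ :=
    strictMono_of_deriv_pos (fun x => by rw [(hΦd x).deriv]; exact hγpos x)
  have hΦ0 : Φ 0 = 0 := intervalIntegral.integral_same
  have hΦθ : Φ θ = Tstar := by
    rw [hTstar]
    apply intervalIntegral.integral_congr
    intro y hy
    rw [uIcc_of_le hθpos.le] at hy
    show (f (pr y) + M * g (pr y))⁻¹ = _
    rw [hprid y hy]
  have hTstarpos : 0 < Tstar := by
    rw [← hΦθ, ← hΦ0]
    exact hΦmono hθpos
  have hΦtop : Tendsto Φ atTop atTop := by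
    apply tendsto_atTop_mono' atTop ?_ (tendsto_id.const_mul_atTop hcγ0)
    filter_upwards [eventually_ge_atTop (0:ℝ)] with x hx
    simp only [id_eq]
    have h1 : γ xm * x = ∫ y in (0:ℝ)..x, γ xm := by
      rw [intervalIntegral.integral_const, smul_eq_mul, sub_zero, mul_comm]
    rw [h1]
    exact intervalIntegral.integral_mono_on hx intervalIntegrable_const
      (hγc.intervalIntegrable _ _) (fun y _ => hγlb y)
  have hΦbot : Tendsto Φ atBot atBot := by
    apply tendsto_atBot_mono' atBot ?_ (tendsto_id.const_mul_atBot hcγ0)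
    filter_upwards [eventually_le_atBot (0:ℝ)] with x hx
    simp only [id_eq]
    have h1 : ∫ y in x..(0:ℝ), γ xm ≤ ∫ y in x..(0:ℝ), γ y :=
      intervalIntegral.integral_mono_on hx intervalIntegrable_const
        (hγc.intervalIntegrable _ _) (fun y _ => hγlb y)
    have h2 : Φ x = -(∫ y in x..(0:ℝ), γ y) := by
      rw [hΦdef]
      simp only
      rw [← intervalIntegral.integral_symm]
    have h3 : (∫ y in x..(0:ℝ), γ xm) = -(γ xm * x) := by
      rw [intervalIntegral.integral_const, smul_eq_mul]
      ring
    rw [h2]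
    rw [h3] at h1
    linarith
  have hΦsurj : Function.Surjective Φ := hΦc.surjective hΦtop hΦbot
  set Φiso := StrictMono.orderIsoOfSurjective Φ hΦmono hΦsurj with hΦiso
  set ψ : ℝ → ℝ := fun t => Φiso.symm t with hψdef
  have hψΦ : ∀ t, Φ (ψ t) = t := fun t => Φiso.apply_symm_apply t
  have hψcont : Continuous ψ := by
    have : Continuous (Φiso.symm : ℝ → ℝ) := OrderIso.continuous Φiso.symm
    exact this
  have hψmono : Monotone ψ := fun a b hab => (Φiso.symm.monotone hab)
  have hψ0 : ψ 0 = 0 := hΦmono.injective (by rw [hψΦ, hΦ0])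
  have hψT : ψ Tstar = θ := hΦmono.injective (by rw [hψΦ, hΦθ])
  have hψd : ∀ t, HasDerivAt ψ ((γ (ψ t))⁻¹) t := by
    intro t
    apply HasDerivAt.of_local_left_inverse hψcont.continuousAt (hΦd (ψ t)) (hγpos (ψ t)).ne'
    exact Eventually.of_forall hψΦ
  have hψrange : ∀ t ∈ Icc (0:ℝ) Tstar, ψ t ∈ Icc (0:ℝ) θ := fun t ht =>
    ⟨hψ0 ▸ hψmono ht.1, hψT ▸ hψmono ht.2⟩
  have hψtraj : IsTrajectory f g Tstar M (fun _ => M) ψ := by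
    refine ⟨measurable_const, fun t => ⟨hM0.le, le_rfl⟩, hψcont.continuousOn, hψ0, ?_⟩
    intro t ht
    have hcongr : EqOn (fun s => f (ψ s) + (fun _ : ℝ => M) s * g (ψ s))
        (fun s => (γ (ψ s))⁻¹) (uIcc (0:ℝ) t) := by
      intro s hs
      rw [uIcc_of_le ht.1] at hs
      have hsT : ψ s ∈ Icc (0:ℝ) θ := hψrange s ⟨hs.1, le_trans hs.2 ht.2⟩
      show f (ψ s) + M * g (ψ s) = ((f (pr (ψ s)) + M * g (pr (ψ s)))⁻¹)⁻¹
      rw [hprid _ hsT, inv_inv]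
    rw [intervalIntegral.integral_congr hcongr]
    have hcont2 : Continuous fun s => (γ (ψ s))⁻¹ :=
      (hγc.comp hψcont).inv₀ (fun s => (hγpos _).ne')
    have hftc := intervalIntegral.integral_eq_sub_of_hasDerivAt (a := (0:ℝ)) (b := t)
      (f := ψ) (f' := fun s => (γ (ψ s))⁻¹) (fun s _ => hψd s) (hcont2.intervalIntegrable 0 t)
    rw [hftc, hψ0, sub_zero]
  have hopt' := hopt Tstar hTstarpos (fun _ => M) ψ hψtraj hψT
  have hRHS : (∫ t in (0:ℝ)..Tstar, (M:ℝ)) = Tstar * M := by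
    rw [intervalIntegral.integral_const, smul_eq_mul, sub_zero]
  -- chain rule applied to the actual trajectory
  set H : ℝ → ℝ := (Icc (0:ℝ) T).indicator v with hHdef
  have hHint : Integrable H := hintT.integrable_indicator measurableSet_Icc
  have hPH : ∀ t ∈ Icc (0:ℝ) T, (∫ s in (0:ℝ)..t, H s) = pstate t := by
    intro t ht
    rw [intervalIntegral.integral_of_le ht.1, hHdef, setIntegral_indicator measurableSet_Icc]
    have hinter : Ioc (0:ℝ) t ∩ Icc 0 T = Ioc 0 t :=
      inter_eq_self_of_subset_left (fun s hs => ⟨hs.1.le, le_trans hs.2 ht.2⟩)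
    rw [hinter, ← intervalIntegral.integral_of_le ht.1, ← hpint t ht]
  have hchain := aux_chain γ H hγc Cγ hγub' T hT.le hHint
  rw [hPH T hTmem, hreach] at hchain
  have hchain2 : Tstar = ∫ t in (0:ℝ)..T, γ (pstate t) * v t := by
    rw [← hΦθ]
    show (∫ y in (0:ℝ)..θ, γ y) = _
    rw [hchain]
    apply intervalIntegral.integral_congr
    intro s hs
    rw [uIcc_of_le hT.le] at hs
    simp only
    rw [hPH s hs, hHdef, Set.indicator_of_mem hs]
  have hgamma_eq : ∀ t ∈ Icc (0:ℝ) T, γ (pstate t) = (f (pstate t) + M * g (pstate t))⁻¹ := by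
    intro t ht
    show (f (pr (pstate t)) + M * g (pr (pstate t)))⁻¹ = _
    rw [hprid _ (hinv t ht)]
  set w : ℝ → ℝ := fun t => ((1-α) * ustar t + α) - ((1-α)*M + α) * (γ (pstate t) * v t)
    with hwdef
  have hu_int : IntervalIntegrable ustar volume 0 T := by
    apply (intervalIntegrable_iff_integrableOn_Icc_of_le hT.le).mpr
    apply Integrable.mono' (integrable_const M) humeas.aestronglyMeasurable.restrict
    apply (ae_restrict_iff' measurableSet_Icc).2 (Eventually.of_forall (fun s _ => ?_))
    rw [Real.norm_eq_abs]
    exact abs_le.mpr ⟨by linarith [(hubd s).1, hM0.le], (hubd s).2⟩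
  have hγv_int : IntervalIntegrable (fun t => γ (pstate t) * v t) volume 0 T := by
    apply (intervalIntegrable_iff_integrableOn_Icc_of_le hT.le).mpr
    exact Integrable.bdd_mul (c := Cγ) hintT
      ((hγc.comp_continuousOn hpc).aestronglyMeasurable measurableSet_Icc)
      (Eventually.of_forall fun x => by rw [Real.norm_eq_abs]; exact hγub' _)
  have hw_int : IntervalIntegrable w volume 0 T := by
    apply IntervalIntegrable.sub
    · exact (hu_int.const_mul (1-α)).add intervalIntegrable_const
    · exact hγv_int.const_mul _
  have hw_val : (∫ t in (0:ℝ)..T, w t)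
      = ((1-α) * (∫ t in (0:ℝ)..T, ustar t) + α * T) - ((1-α)*M + α) * Tstar := by
    rw [hwdef]
    rw [intervalIntegral.integral_sub ((hu_int.const_mul (1-α)).add intervalIntegrable_const)
      (hγv_int.const_mul _)]
    rw [intervalIntegral.integral_add (hu_int.const_mul (1-α)) intervalIntegrable_const]
    rw [intervalIntegral.integral_const_mul, intervalIntegral.integral_const_mul,
      intervalIntegral.integral_const, ← hchain2]
    rw [smul_eq_mul, sub_zero]
    ring
  have hle : (1-α) * (∫ t in (0:ℝ)..T, ustar t) + α * T ≤ ((1-α)*M + α) * Tstar := by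
    calc (1-α) * (∫ t in (0:ℝ)..T, ustar t) + α * T
        ≤ (1-α) * (∫ t in (0:ℝ)..Tstar, (M:ℝ)) + α * Tstar := hopt'
      _ = ((1-α)*M + α) * Tstar := by rw [hRHS]; ring
  have hwnonneg : ∀ t ∈ Icc (0:ℝ) T, 0 ≤ w t := by
    intro t ht
    have hpt := hinv t ht
    obtain ⟨hfle, hgpos, hfMg⟩ := h0θ _ hpt.1 hpt.2
    have hweq : w t = (M - ustar t) * ((α * g (pstate t) - (1-α) * f (pstate t))
        * (f (pstate t) + M * g (pstate t))⁻¹) := by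
      rw [hwdef]
      simp only
      rw [hgamma_eq t ht]
      show _ - _ * (_ * (f (pstate t) + ustar t * g (pstate t))) = _
      field_simp
      ring
    rw [hweq]
    apply mul_nonneg (by linarith [(hubd t).2])
    apply mul_nonneg _ (inv_nonneg.2 hfMg.le)
    have h3 : 0 ≤ (1-α) * (- f (pstate t)) := mul_nonneg (by linarith) (by linarith)
    linarith [mul_pos hα0 hgpos, h3]
  have hwzero : (∫ t in (0:ℝ)..T, w t) = 0 := by
    have h1 : 0 ≤ ∫ t in (0:ℝ)..T, w t := intervalIntegral.integral_nonneg hT.le hwnonneg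
    have h2 : (∫ t in (0:ℝ)..T, w t) ≤ 0 := by rw [hw_val]; linarith
    linarith
  have hwae : ∀ᵐ t ∂(volume.restrict (Ioc (0:ℝ) T)), w t = 0 := by
    have h0 : (∫ t in Ioc (0:ℝ) T, w t) = 0 := by
      rw [← intervalIntegral.integral_of_le hT.le]
      exact hwzero
    have hwint : Integrable w (volume.restrict (Ioc 0 T)) := hw_int.1
    have hwnn : 0 ≤ᵐ[volume.restrict (Ioc (0:ℝ) T)] w :=
      (ae_restrict_iff' measurableSet_Ioc).2
        (Eventually.of_forall fun t ht => hwnonneg t (Ioc_subset_Icc_self ht))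
    have heq := (MeasureTheory.integral_eq_zero_iff_of_nonneg_ae hwnn hwint).mp h0
    filter_upwards [heq] with t ht
    exact ht
  have huae : ∀ᵐ t ∂(volume.restrict (Ioc (0:ℝ) T)), ustar t = M := by
    have hmem : ∀ᵐ t ∂(volume.restrict (Ioc (0:ℝ) T)), t ∈ Ioc (0:ℝ) T :=
      ae_restrict_mem measurableSet_Ioc
    filter_upwards [hwae, hmem] with t hw0 htmem
    have ht : t ∈ Icc (0:ℝ) T := Ioc_subset_Icc_self htmem
    have hpt := hinv t ht
    obtain ⟨hfle, hgpos, hfMg⟩ := h0θ _ hpt.1 hpt.2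
    have hweq : w t = (M - ustar t) * ((α * g (pstate t) - (1-α) * f (pstate t))
        * (f (pstate t) + M * g (pstate t))⁻¹) := by
      rw [hwdef]
      simp only
      rw [hgamma_eq t ht]
      show _ - _ * (_ * (f (pstate t) + ustar t * g (pstate t))) = _
      field_simp
      ring
    rw [hweq] at hw0
    have hpos2 : 0 < (α * g (pstate t) - (1-α) * f (pstate t))
        * (f (pstate t) + M * g (pstate t))⁻¹ := by
      apply mul_pos _ (inv_pos.2 hfMg)
      have h3 : 0 ≤ (1-α) * (- f (pstate t)) := mul_nonneg (by linarith) (by linarith)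
      linarith [mul_pos hα0 hgpos, h3]
    rcases mul_eq_zero.mp hw0 with h | h
    · linarith
    · exact absurd h hpos2.ne'
  have hTeq : T = Tstar := by
    have hTint : Tstar = ∫ t in (0:ℝ)..T, (1:ℝ) := by
      rw [hchain2]
      apply intervalIntegral.integral_congr_ae
      have huae' : ∀ᵐ t ∂volume, t ∈ Ioc (0:ℝ) T → ustar t = M :=
        (ae_restrict_iff' measurableSet_Ioc).mp huae
      filter_upwards [huae'] with t htimp htmem
      rw [uIoc_of_le hT.le] at htmem
      have ht : t ∈ Icc (0:ℝ) T := Ioc_subset_Icc_self htmem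
      have hu := htimp htmem
      show γ (pstate t) * v t = 1
      rw [hgamma_eq t ht]
      show _ * (f (pstate t) + ustar t * g (pstate t)) = 1
      rw [hu]
      exact inv_mul_cancel₀ (h0θ _ (hinv t ht).1 (hinv t ht).2).2.2.ne'
    rw [hTint, intervalIntegral.integral_const, smul_eq_mul, sub_zero, mul_one]
  refine ⟨hTeq, ?_⟩
  have hIoc_Icc : (volume.restrict (Icc (0:ℝ) Tstar)) = volume.restrict (Ioc (0:ℝ) Tstar) :=
    (Measure.restrict_congr_set Ioc_ae_eq_Icc).symm
  rw [hIoc_Icc, ← hTeq]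
  exact huae
end

section
/- (Existence for the free-horizon problem.) Assume M > m* and α ∈ (0,1]. The infimum of J_α(T,u) = (1−α)·∫₀^T u(t) dt + α·T over all pairs (T, u) with T > 0, u : [0,T] → [0,M] measurable, and p_u(T) ≥ θ, is attained by some admissible pair. -/
open MeasureTheory intervalIntegral Set Filter Topology

lemma aux_ftc {h : ℝ → ℝ} (hc : Continuous h) (a t : ℝ) :
    HasDerivAt (fun x => ∫ s in a..x, h s) (h t) t :=
  intervalIntegral.integral_hasDerivAt_right (hc.intervalIntegrable _ _)
    (hc.stronglyMeasurableAtFilter _ _) hc.continuousAt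

lemma lemA (ec h : ℝ → ℝ) (S : ℝ) (hS : 0 ≤ S) (hec : Continuous ec)
    (hh : MeasureTheory.Integrable h) :
    ∫ t in (0:ℝ)..S, ec (∫ s in (0:ℝ)..t, h s) * h t
      = ∫ y in (0:ℝ)..(∫ s in (0:ℝ)..S, h s), ec y := by
  set φ : ℝ → ℝ := fun x => ∫ y in (0:ℝ)..x, ec y with hφdef
  have hφd : ∀ x, HasDerivAt φ (ec x) x := fun x => aux_ftc hec 0 x
  set q : ℝ → ℝ := fun t => ∫ s in (0:ℝ)..t, h s with hqdef
  have hqc : Continuous q :=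
    intervalIntegral.continuous_primitive (fun a b => hh.intervalIntegrable) 0
  obtain ⟨A, hA⟩ := IsCompact.exists_bound_of_continuousOn (isCompact_Icc (a := (0:ℝ)) (b := S))
    hqc.continuousOn
  obtain ⟨L, hL⟩ := IsCompact.exists_bound_of_continuousOn
    (isCompact_Icc (a := -(A+1)) (b := A+1)) hec.continuousOn
  set L₀ : ℝ := max L 0 with hL₀def
  have hL₀ : ∀ y : ℝ, |y| ≤ A + 1 → |ec y| ≤ L₀ := by
    intro y hy
    have h1 := abs_le.mp hy
    have h2 := hL y ⟨by linarith [h1.1], h1.2⟩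
    rw [Real.norm_eq_abs] at h2
    exact le_trans h2 (le_max_left _ _)
  have happrox : ∀ n : ℕ, ∃ gg : ℝ → ℝ, HasCompactSupport gg ∧
      (∫ x, ‖h x - gg x‖) ≤ (n+1:ℝ)⁻¹ ∧ Continuous gg ∧ Integrable gg := fun n =>
    hh.exists_hasCompactSupport_integral_sub_le (by positivity)
  choose G hG1 hG2 hG3 hG4 using happrox
  set qn : ℕ → ℝ → ℝ := fun n t => ∫ s in (0:ℝ)..t, G n s with hqndef
  have hqnc : ∀ n, Continuous (qn n) := fun n =>
    intervalIntegral.continuous_primitive (fun a b => (hG3 n).intervalIntegrable _ _) 0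
  have hdiff : ∀ n : ℕ, ∀ t ∈ Icc (0:ℝ) S, |qn n t - q t| ≤ (n+1:ℝ)⁻¹ := by
    intro n t ht
    have hsub : qn n t - q t = ∫ s in (0:ℝ)..t, (G n s - h s) :=
      (intervalIntegral.integral_sub ((hG3 n).intervalIntegrable _ _)
        (hh.intervalIntegrable)).symm
    rw [hsub]
    calc |∫ s in (0:ℝ)..t, (G n s - h s)|
        ≤ ∫ s in (0:ℝ)..t, ‖G n s - h s‖ := by
          simpa [Real.norm_eq_abs] using
            intervalIntegral.norm_integral_le_integral_norm (f := fun s => G n s - h s)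
              (a := 0) (b := t) ht.1
      _ ≤ ∫ s, ‖G n s - h s‖ := by
          rw [intervalIntegral.integral_of_le ht.1]
          exact setIntegral_le_integral ((hG4 n).sub hh).norm
            (Eventually.of_forall fun x => norm_nonneg _)
      _ = ∫ s, ‖h s - G n s‖ := by simp [norm_sub_rev]
      _ ≤ (n+1:ℝ)⁻¹ := hG2 n
  have hq0 : q 0 = 0 := intervalIntegral.integral_same
  have hqn0 : ∀ n, qn n 0 = 0 := fun n => intervalIntegral.integral_same
  have hφ0 : φ 0 = 0 := intervalIntegral.integral_same
  -- identity for each n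
  have hId : ∀ n, (∫ t in (0:ℝ)..S, ec (qn n t) * G n t) = φ (qn n S) := by
    intro n
    have h1 : ∀ t ∈ uIcc (0:ℝ) S, HasDerivAt (fun x => φ (qn n x)) (ec (qn n t) * G n t) t := by
      intro t _
      exact (hφd (qn n t)).comp t (aux_ftc (hG3 n) 0 t)
    have h2 : IntervalIntegrable (fun t => ec (qn n t) * G n t) volume 0 S :=
      ((hec.comp (hqnc n)).mul (hG3 n)).intervalIntegrable _ _
    have := intervalIntegral.integral_eq_sub_of_hasDerivAt h1 h2
    rw [this, hqn0 n, hφ0, sub_zero]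
  -- bounds
  have hmem : ∀ n : ℕ, ∀ t ∈ Icc (0:ℝ) S, |qn n t| ≤ A + 1 := by
    intro n t ht
    have h1 : |q t| ≤ A := by simpa [Real.norm_eq_abs] using hA t ht
    have h2 := hdiff n t ht
    have h3 : (n+1:ℝ)⁻¹ ≤ 1 := by
      rw [inv_le_one_iff₀]; right; exact le_add_of_nonneg_left (Nat.cast_nonneg n)
    calc |qn n t| ≤ |q t| + |qn n t - q t| := by
          have := abs_add_le (q t) (qn n t - q t); simpa [add_sub_cancel] using this
      _ ≤ A + 1 := by linarith
  have hecbd : ∀ n : ℕ, ∀ t ∈ Icc (0:ℝ) S, |ec (qn n t)| ≤ L₀ := fun n t ht =>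
    hL₀ _ (hmem n t ht)
  -- limit of qn n S
  have hinv_lim : Tendsto (fun n : ℕ => (n+1:ℝ)⁻¹) atTop (𝓝 0) := by
    exact tendsto_one_div_add_atTop_nhds_zero_nat.congr (fun n => one_div _)
  have hq_lim : Tendsto (fun n => qn n S) atTop (𝓝 (q S)) := by
    rw [tendsto_iff_dist_tendsto_zero]
    refine squeeze_zero (fun n => dist_nonneg) (fun n => ?_) hinv_lim
    rw [Real.dist_eq]
    exact hdiff n S ⟨hS, le_refl S⟩
  have hlim1 : Tendsto (fun n => φ (qn n S)) atTop (𝓝 (φ (q S))) :=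
    ((hφd (q S)).continuousAt.tendsto).comp hq_lim
  -- splitting
  have hint1 : ∀ n, IntervalIntegrable (fun t => ec (qn n t) * h t) volume 0 S :=
    fun n => hh.intervalIntegrable.continuousOn_mul ((hec.comp (hqnc n)).continuousOn)
  have hint2 : ∀ n, IntervalIntegrable (fun t => ec (qn n t) * (G n t - h t)) volume 0 S :=
    fun n => ((hG4 n).sub hh).intervalIntegrable.continuousOn_mul
      ((hec.comp (hqnc n)).continuousOn)
  have hsplit : ∀ n, (∫ t in (0:ℝ)..S, ec (qn n t) * G n t)
      = (∫ t in (0:ℝ)..S, ec (qn n t) * h t)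
        + ∫ t in (0:ℝ)..S, ec (qn n t) * (G n t - h t) := by
    intro n
    rw [← intervalIntegral.integral_add (hint1 n) (hint2 n)]
    apply intervalIntegral.integral_congr
    intro t _
    ring
  -- term 2 tends to 0
  have hterm2 : Tendsto (fun n => ∫ t in (0:ℝ)..S, ec (qn n t) * (G n t - h t)) atTop (𝓝 0) := by
    apply squeeze_zero_norm (a := fun n : ℕ => L₀ * (n+1:ℝ)⁻¹)
    · intro n
      calc ‖∫ t in (0:ℝ)..S, ec (qn n t) * (G n t - h t)‖
          ≤ ∫ t in (0:ℝ)..S, ‖ec (qn n t) * (G n t - h t)‖ :=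
            intervalIntegral.norm_integral_le_integral_norm hS
        _ ≤ ∫ t in (0:ℝ)..S, L₀ * ‖G n t - h t‖ := by
            apply intervalIntegral.integral_mono_on hS ((hint2 n).norm)
              (((hG4 n).sub hh).norm.intervalIntegrable.continuousOn_mul
                (continuousOn_const))
            intro t ht
            rw [norm_mul]
            exact mul_le_mul_of_nonneg_right (by simpa [Real.norm_eq_abs] using hecbd n t ht)
              (norm_nonneg _)
        _ = L₀ * ∫ t in (0:ℝ)..S, ‖G n t - h t‖ := intervalIntegral.integral_const_mul _ _
        _ ≤ L₀ * (n+1:ℝ)⁻¹ := by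
            apply mul_le_mul_of_nonneg_left _ (le_max_right L 0)
            calc (∫ t in (0:ℝ)..S, ‖G n t - h t‖)
                ≤ ∫ t, ‖G n t - h t‖ := by
                  rw [intervalIntegral.integral_of_le hS]
                  exact setIntegral_le_integral ((hG4 n).sub hh).norm
                    (Eventually.of_forall fun x => norm_nonneg _)
              _ = ∫ t, ‖h t - G n t‖ := by simp [norm_sub_rev]
              _ ≤ (n+1:ℝ)⁻¹ := hG2 n
    · simpa using hinv_lim.const_mul L₀
  -- term 1 tends to the desired integral
  have hterm1 : Tendsto (fun n => ∫ t in (0:ℝ)..S, ec (qn n t) * h t) atTop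
      (𝓝 (∫ t in (0:ℝ)..S, ec (q t) * h t)) := by
    apply intervalIntegral.tendsto_integral_filter_of_dominated_convergence
      (bound := fun t => L₀ * |h t|)
    · exact Eventually.of_forall fun n =>
        ((hec.comp (hqnc n)).aestronglyMeasurable).mul hh.1.restrict
    · refine Eventually.of_forall fun n => Eventually.of_forall fun t ht => ?_
      have ht' : t ∈ Icc (0:ℝ) S := by
        rw [uIoc_of_le hS] at ht; exact ⟨le_of_lt ht.1, ht.2⟩
      rw [Real.norm_eq_abs, abs_mul]
      exact mul_le_mul_of_nonneg_right (hecbd n t ht') (abs_nonneg _)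
    · exact ((hh.norm.const_mul L₀).intervalIntegrable)
    · refine Eventually.of_forall fun t ht => ?_
      have ht' : t ∈ Icc (0:ℝ) S := by
        rw [uIoc_of_le hS] at ht; exact ⟨le_of_lt ht.1, ht.2⟩
      have hqt : Tendsto (fun n => qn n t) atTop (𝓝 (q t)) := by
        rw [tendsto_iff_dist_tendsto_zero]
        refine squeeze_zero (fun n => dist_nonneg) (fun n => ?_) hinv_lim
        rw [Real.dist_eq]
        exact hdiff n t ht'
      exact ((hec.continuousAt.tendsto).comp hqt).mul tendsto_const_nhds
  -- combine
  have hcomb : Tendsto (fun n => (∫ t in (0:ℝ)..S, ec (qn n t) * G n t)) atTop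
      (𝓝 ((∫ t in (0:ℝ)..S, ec (q t) * h t) + 0)) := by
    simp only [hsplit]
    exact hterm1.add hterm2
  have hcomb2 : Tendsto (fun n => (∫ t in (0:ℝ)..S, ec (qn n t) * G n t)) atTop
      (𝓝 (φ (q S))) := by
    simp only [hId]; exact hlim1
  have := tendsto_nhds_unique hcomb hcomb2
  rw [add_zero] at this
  exact this

lemma build_traj (F : ℝ → ℝ) (hF : Continuous F) (m Mb : ℝ) (hm : 0 < m)
    (hFm : ∀ x, m ≤ F x) (hFM : ∀ x, F x ≤ Mb) :
    ∃ P : ℝ → ℝ, Continuous P ∧ StrictMono P ∧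
      (∀ x, P (∫ s in (0:ℝ)..x, (F s)⁻¹) = x) ∧
      ∀ t, P t = ∫ s in (0:ℝ)..t, F (P s) := by
  have hFpos : ∀ x, 0 < F x := fun x => lt_of_lt_of_le hm (hFm x)
  have hFne : ∀ x, F x ≠ 0 := fun x => ne_of_gt (hFpos x)
  have hMb : 0 < Mb := lt_of_lt_of_le hm (le_trans (hFm 0) (hFM 0))
  have hFinvc : Continuous fun s => (F s)⁻¹ := hF.inv₀ hFne
  set G : ℝ → ℝ := fun x => ∫ s in (0:ℝ)..x, (F s)⁻¹ with hGdef
  have hGd : ∀ x, HasDerivAt G ((F x)⁻¹) x := fun x => aux_ftc hFinvc 0 x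
  have hGmono : StrictMono G :=
    strictMono_of_hasDerivAt_pos hGd (fun x => inv_pos.mpr (hFpos x))
  have hGc : Continuous G := intervalIntegral.continuous_primitive
    (fun a b => hFinvc.intervalIntegrable _ _) 0
  -- growth bounds
  have hGlow : ∀ x : ℝ, 0 ≤ x → x * Mb⁻¹ ≤ G x := by
    intro x hx
    have h1 : (∫ s in (0:ℝ)..x, Mb⁻¹) ≤ ∫ s in (0:ℝ)..x, (F s)⁻¹ := by
      apply intervalIntegral.integral_mono_on hx (intervalIntegrable_const)
        (hFinvc.intervalIntegrable _ _)
      intro s _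
      exact inv_anti₀ (hFpos s) (hFM s)
    simpa [mul_comm] using h1
  have hGup : ∀ x : ℝ, x ≤ 0 → G x ≤ x * Mb⁻¹ := by
    intro x hx
    have h1 : (∫ s in x..(0:ℝ), Mb⁻¹) ≤ ∫ s in x..(0:ℝ), (F s)⁻¹ := by
      apply intervalIntegral.integral_mono_on hx (intervalIntegrable_const)
        (hFinvc.intervalIntegrable _ _)
      intro s _
      exact inv_anti₀ (hFpos s) (hFM s)
    have h2 : G x = -∫ s in x..(0:ℝ), (F s)⁻¹ := by
      rw [hGdef]
      rw [intervalIntegral.integral_symm, neg_neg]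
    rw [h2]
    have h3 : (∫ s in x..(0:ℝ), Mb⁻¹) = -(x * Mb⁻¹) := by simp [neg_mul]
    linarith [h1, h3 ▸ h1]
  have hGsurj : Function.Surjective G := by
    intro y
    set c : ℝ := Mb * (|y| + 1) with hcdef
    have hc0 : 0 ≤ c := le_of_lt (by positivity)
    have h1 : y ≤ G c := by
      have := hGlow c hc0
      have h2 : c * Mb⁻¹ = |y| + 1 := by
        rw [hcdef]; field_simp
      nlinarith [le_abs_self y, this]
    have h2 : G (-c) ≤ y := by
      have := hGup (-c) (by linarith)
      have h3 : (-c) * Mb⁻¹ = -(|y| + 1) := by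
        rw [hcdef]; field_simp
      nlinarith [neg_abs_le y]
    have h4 : y ∈ Icc (G (-c)) (G c) := ⟨h2, h1⟩
    obtain ⟨x, _, hx⟩ := intermediate_value_Icc (by linarith : -c ≤ c) hGc.continuousOn h4
    exact ⟨x, hx⟩
  set e : ℝ ≃o ℝ := StrictMono.orderIsoOfSurjective G hGmono hGsurj with hedef
  have hecoe : (e : ℝ → ℝ) = G := StrictMono.coe_orderIsoOfSurjective G hGmono hGsurj
  set P : ℝ → ℝ := fun t => e.symm t with hPdef
  have hPG : ∀ x, P (G x) = x := by
    intro x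
    rw [hPdef]
    have : G x = e x := by rw [← hecoe]
    rw [this]
    exact e.symm_apply_apply x
  have hGP : ∀ t, G (P t) = t := by
    intro t
    have h := e.apply_symm_apply t
    calc G (P t) = e (e.symm t) := by rw [← hecoe]
      _ = t := h
  have hPc : Continuous P := e.symm.continuous
  have hPmono : StrictMono P := e.symm.strictMono
  have hPd : ∀ t, HasDerivAt P (F (P t)) t := by
    intro t
    have h1 : HasDerivAt P (((F (P t))⁻¹)⁻¹) t := by
      apply HasDerivAt.of_local_left_inverse (hPc.continuousAt) (hGd (P t))
        (inv_ne_zero (hFne (P t)))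
      exact Eventually.of_forall hGP
    rwa [inv_inv] at h1
  have hP0 : P 0 = 0 := by
    have h0 : G 0 = 0 := intervalIntegral.integral_same
    have := hPG 0
    rwa [h0] at this
  refine ⟨P, hPc, hPmono, ?_, ?_⟩
  · intro x; exact hPG x
  · -- P t = ∫₀^t F (P s)
    set Q : ℝ → ℝ := fun t => ∫ s in (0:ℝ)..t, F (P s) with hQdef
    have hQd : ∀ t, HasDerivAt Q (F (P t)) t := fun t => aux_ftc (hF.comp hPc) 0 t
    have hDd : ∀ t, HasDerivAt (fun t => P t - Q t) 0 t := by
      intro t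
      have := (hPd t).sub (hQd t)
      rw [sub_self] at this; exact this
    have hconst : ∀ t, P t - Q t = P 0 - Q 0 := by
      intro t
      exact is_const_of_deriv_eq_zero
        (fun x => (hDd x).differentiableAt) (fun x => (hDd x).deriv) t 0
    intro t
    have hQ0 : Q 0 = 0 := intervalIntegral.integral_same
    have := hconst t
    rw [hP0, hQ0] at this
    linarith [this]



/-- existence for the free-horizon problem: for M > m* and α ∈ (0,1],
the infimum of J_α(T,u) = (1-α)∫₀^T u + αT over all pairs (T,u) with T > 0, u admissible
and p_u(T) ≥ θ, is attained by some admissible pair. -/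
theorem stmt_17
    (b1 b2 d1 d2 K sh : ℝ)
    (hb1 : 0 < b1) (hb2 : 0 < b2) (hd1 : 0 < d1) (hd2 : 0 < d2)
    (hK : 0 < K) (hsh0 : 0 < sh) (hsh1 : sh ≤ 1)
    (hlow : 1 - sh < d1 * b2 / (d2 * b1)) (hhigh : d1 * b2 / (d2 * b1) < 1)
    (f g : ℝ → ℝ)
    (hf : ∀ p, f p = p * (1 - p) * (d1 * b2 - d2 * b1 * (1 - sh * p)) /
      (b1 * (1 - p) * (1 - sh * p) + b2 * p))
    (hg : ∀ p, g p = (1 / K) * (b1 * (1 - p) * (1 - sh * p)) /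
      (b1 * (1 - p) * (1 - sh * p) + b2 * p))
    (θ : ℝ) (hθ : θ = (1 / sh) * (1 - d1 * b2 / (d2 * b1)))
    (mstar : ℝ)
    (hmstar : IsGreatest ((fun p => -f p / g p) '' Set.Icc 0 θ) mstar)
    (M : ℝ) (hM : mstar < M)
    (α : ℝ) (hα0 : 0 < α) (hα1 : α ≤ 1) :
    ∃ T : ℝ, ∃ u p : ℝ → ℝ, 0 < T ∧ IsTrajectory f g T M u p ∧ θ ≤ p T ∧
      ∀ S : ℝ, ∀ v q : ℝ → ℝ, 0 < S → IsTrajectory f g S M v q → θ ≤ q S →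
        (1 - α) * (∫ t in (0:ℝ)..T, u t) + α * T
          ≤ (1 - α) * (∫ t in (0:ℝ)..S, v t) + α * S := by
  have hd2b1 : 0 < d2 * b1 := mul_pos hd2 hb1
  set r : ℝ := d1 * b2 / (d2 * b1) with hrdef
  have hr0 : 0 < r := div_pos (mul_pos hd1 hb2) hd2b1
  have hθpos : 0 < θ := by
    rw [hθ]
    have : 0 < 1 - r := by linarith
    positivity
  have hθ1 : θ < 1 := by
    rw [hθ]
    rw [div_mul_eq_mul_div, one_mul, div_lt_one hsh0]
    linarith
  have hshθ : sh * θ = 1 - r := by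
    rw [hθ]; field_simp
  -- basic functions
  set D : ℝ → ℝ := fun p => b1 * (1 - p) * (1 - sh * p) + b2 * p with hDdef
  set nf : ℝ → ℝ := fun p => p * (1 - p) * (d1 * b2 - d2 * b1 * (1 - sh * p)) with hnfdef
  set ng : ℝ → ℝ := fun p => (1 / K) * (b1 * (1 - p) * (1 - sh * p)) with hngdef
  have hfeq : ∀ p, f p = nf p / D p := hf
  have hgeq : ∀ p, g p = ng p / D p := hg
  have hDc : Continuous D := by fun_prop
  have hnfc : Continuous nf := by fun_prop
  have hngc : Continuous ng := by fun_prop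
  set Wd : Set ℝ := {p : ℝ | 0 < D p} with hWddef
  have hWdopen : IsOpen Wd := isOpen_lt continuous_const hDc
  have hfW : ContinuousOn f Wd := by
    have : ContinuousOn (fun p => nf p / D p) Wd :=
      (hnfc.continuousOn).div (hDc.continuousOn) (fun p hp => ne_of_gt hp)
    exact this.congr (fun p _ => hfeq p)
  have hgW : ContinuousOn g Wd := by
    have : ContinuousOn (fun p => ng p / D p) Wd :=
      (hngc.continuousOn).div (hDc.continuousOn) (fun p hp => ne_of_gt hp)
    exact this.congr (fun p _ => hgeq p)
  have hD01 : ∀ p : ℝ, 0 ≤ p → p ≤ 1 → 0 < D p := by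
    intro p hp0 hp1
    rcases eq_or_lt_of_le hp0 with h | h
    · simp [hDdef, ← h]; nlinarith
    · have ha : (0:ℝ) ≤ 1 - p := by linarith
      have hb : sh * p ≤ p := by nlinarith
      have h1 : 0 ≤ b1 * (1 - p) * (1 - sh * p) :=
        mul_nonneg (mul_nonneg hb1.le ha) (by linarith)
      have h2 : 0 < b2 * p := mul_pos hb2 h
      simp only [hDdef]; linarith
  have hDIcc : ∀ p ∈ Icc (0:ℝ) θ, 0 < D p := fun p hp =>
    hD01 p hp.1 (le_trans hp.2 hθ1.le)
  have hsubWd : Icc (0:ℝ) θ ⊆ Wd := fun p hp => hDIcc p hp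
  -- sign facts on [0, θ]
  have hgpos : ∀ p ∈ Icc (0:ℝ) θ, 0 < g p := by
    intro p hp
    rw [hgeq]
    apply div_pos _ (hDIcc p hp)
    have h1 : 0 < 1 - p := by
      have := hp.2; linarith
    have h2 : 0 < 1 - sh * p := by
      have h3 : sh * p ≤ sh * θ := mul_le_mul_of_nonneg_left hp.2 hsh0.le
      rw [hshθ] at h3; linarith
    have : (0:ℝ) < 1 / K := by positivity
    simp only [hngdef]
    positivity
  have hfnonpos : ∀ p ∈ Icc (0:ℝ) θ, f p ≤ 0 := by
    intro p hp
    rw [hfeq]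
    apply div_nonpos_of_nonpos_of_nonneg _ (hDIcc p hp).le
    have h1 : 0 ≤ 1 - p := by have := hp.2; linarith
    have h2 : d1 * b2 - d2 * b1 * (1 - sh * p) ≤ 0 := by
      have h3 : sh * p ≤ 1 - r := by
        have h4 : sh * p ≤ sh * θ := mul_le_mul_of_nonneg_left hp.2 hsh0.le
        rwa [hshθ] at h4
      have h5 : r * (d2 * b1) = d1 * b2 := by
        rw [hrdef]; field_simp
      nlinarith
    exact mul_nonpos_of_nonneg_of_nonpos (mul_nonneg hp.1 h1) h2
  have hf0 : f 0 = 0 := by rw [hfeq]; simp [hnfdef]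
  have hmstar0 : 0 ≤ mstar := by
    have h1 : (0:ℝ) ∈ Icc (0:ℝ) θ := ⟨le_refl 0, hθpos.le⟩
    have h2 := hmstar.2 ⟨0, h1, rfl⟩
    simpa [hf0] using h2
  have hM0 : 0 < M := lt_of_le_of_lt hmstar0 hM
  set F : ℝ → ℝ := fun p => f p + M * g p with hFdef
  have hFW : ContinuousOn F Wd := hfW.add (continuousOn_const.mul hgW)
  have hFpos : ∀ p ∈ Icc (0:ℝ) θ, 0 < F p := by
    intro p hp
    have h1 : -f p / g p ≤ mstar := hmstar.2 ⟨p, hp, rfl⟩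
    have h2 := hgpos p hp
    have h3 : -f p ≤ mstar * g p := (div_le_iff₀ h2).mp h1
    have h4 : mstar * g p < M * g p := by
      apply mul_lt_mul_of_pos_right hM h2
    simp only [hFdef]
    linarith
  set lM : ℝ := (1 - α) * M + α with hlMdef
  have hlMpos : 0 < lM := by
    have : 0 ≤ (1 - α) * M := mul_nonneg (by linarith) hM0.le
    simp only [hlMdef]; linarith
  -- the open set W
  set φ2 : ℝ → ℝ := fun p => α * F p - lM * f p with hφ2def
  have hφ2W : ContinuousOn φ2 Wd := (continuousOn_const.mul hFW).sub
    (continuousOn_const.mul hfW)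
  set W : Set ℝ := (Wd ∩ F ⁻¹' Ioi 0) ∩ (Wd ∩ φ2 ⁻¹' Ioi 0) with hWdef
  have hWopen : IsOpen W := IsOpen.inter
    (hFW.isOpen_inter_preimage hWdopen isOpen_Ioi)
    (hφ2W.isOpen_inter_preimage hWdopen isOpen_Ioi)
  have hsubW : Icc (0:ℝ) θ ⊆ W := by
    intro p hp
    refine ⟨⟨hsubWd hp, hFpos p hp⟩, ⟨hsubWd hp, ?_⟩⟩
    have h1 : lM * f p ≤ 0 := mul_nonpos_of_nonneg_of_nonpos hlMpos.le (hfnonpos p hp)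
    have h2 : 0 < α * F p := mul_pos hα0 (hFpos p hp)
    simp only [hφ2def, mem_preimage, mem_Ioi]
    linarith
  -- extract δ
  obtain ⟨δ1, hδ1pos, hδ1⟩ := Metric.isOpen_iff.mp hWopen 0 (hsubW ⟨le_refl 0, hθpos.le⟩)
  obtain ⟨δ2, hδ2pos, hδ2⟩ := Metric.isOpen_iff.mp hWopen θ (hsubW ⟨hθpos.le, le_refl θ⟩)
  set δ : ℝ := min δ1 δ2 / 2 with hδdef
  have hδpos : 0 < δ := by positivity
  have hsubIW : Icc (-δ) (θ + δ) ⊆ W := by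
    intro p hp
    rcases lt_or_ge p 0 with h | h
    · apply hδ1
      rw [Metric.mem_ball, Real.dist_eq, sub_zero, abs_of_neg h]
      have : -p ≤ δ := by linarith [hp.1]
      have : δ < δ1 := by
        have := min_le_left δ1 δ2
        simp only [hδdef]; linarith
      linarith
    · rcases le_or_gt p θ with h' | h'
      · exact hsubW ⟨h, h'⟩
      · apply hδ2
        rw [Metric.mem_ball, Real.dist_eq, abs_of_pos (by linarith : 0 < p - θ)]
        have : p - θ ≤ δ := by linarith [hp.2]
        have : δ < δ2 := by
          have := min_le_right δ1 δ2
          simp only [hδdef]; linarith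
        linarith
  have hWfacts : ∀ p ∈ Icc (-δ) (θ + δ), 0 < D p ∧ 0 < F p ∧ lM * f p < α * F p := by
    intro p hp
    obtain ⟨⟨h1, h2⟩, ⟨_, h4⟩⟩ := hsubIW hp
    refine ⟨h1, h2, ?_⟩
    have : 0 < φ2 p := h4
    simp only [hφ2def] at this
    linarith
  -- clamps
  set c1 : ℝ → ℝ := fun x => max 0 (min x θ) with hc1def
  set c2 : ℝ → ℝ := fun x => max (-δ) (min x (θ + δ)) with hc2def
  have hc1c : Continuous c1 := continuous_const.max (continuous_id.min continuous_const)
  have hc2c : Continuous c2 := continuous_const.max (continuous_id.min continuous_const)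
  have hc1mem : ∀ x, c1 x ∈ Icc (0:ℝ) θ := by
    intro x
    constructor
    · exact le_max_left _ _
    · exact max_le hθpos.le (min_le_right _ _)
  have hc2mem : ∀ x, c2 x ∈ Icc (-δ) (θ + δ) := by
    intro x
    constructor
    · exact le_max_left _ _
    · exact max_le (by linarith) (min_le_right _ _)
  have hc1id : ∀ x ∈ Icc (0:ℝ) θ, c1 x = x := by
    intro x hx
    simp only [hc1def]
    rw [min_eq_left hx.2, max_eq_right hx.1]
  have hc2id : ∀ x ∈ Icc (-δ) (θ + δ), c2 x = x := by
    intro x hx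
    simp only [hc2def]
    rw [min_eq_left hx.2, max_eq_right hx.1]
  -- F1 and its bounds
  set F1 : ℝ → ℝ := fun x => F (c1 x) with hF1def
  have hF1c : Continuous F1 := hFW.comp_continuous hc1c (fun x => hsubWd (hc1mem x))
  obtain ⟨x0, hx0mem, hx0min⟩ := isCompact_Icc.exists_isMinOn
    (nonempty_Icc.mpr hθpos.le) (hFW.mono hsubWd)
  set m1 : ℝ := F x0 with hm1def
  have hm1pos : 0 < m1 := hFpos x0 hx0mem
  have hF1low : ∀ x, m1 ≤ F1 x := fun x => hx0min (hc1mem x)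
  obtain ⟨Mb, hMb⟩ := IsCompact.exists_bound_of_continuousOn isCompact_Icc
    (hFW.mono hsubWd) (s := Icc (0:ℝ) θ)
  have hF1up : ∀ x, F1 x ≤ Mb := by
    intro x
    have := hMb (c1 x) (hc1mem x)
    rw [Real.norm_eq_abs] at this
    exact le_trans (le_abs_self _) this
  have hMbpos : 0 < Mb := lt_of_lt_of_le hm1pos (le_trans (hF1low 0) (hF1up 0))
  -- build the optimal trajectory
  obtain ⟨P, hPc, hPmono, hPinv, hPode⟩ := build_traj F1 hF1c m1 Mb hm1pos hF1low hF1up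
  set T : ℝ := ∫ s in (0:ℝ)..θ, (F1 s)⁻¹ with hTdef
  have hPT : P T = θ := hPinv θ
  have hP0 : P 0 = 0 := by
    have h := hPinv 0
    rwa [intervalIntegral.integral_same] at h
  have hTpos : 0 < T := by
    have h1 : (∫ s in (0:ℝ)..θ, Mb⁻¹) ≤ ∫ s in (0:ℝ)..θ, (F1 s)⁻¹ := by
      apply intervalIntegral.integral_mono_on hθpos.le intervalIntegrable_const
        ((hF1c.inv₀ (fun x => ne_of_gt (lt_of_lt_of_le hm1pos (hF1low x)))).intervalIntegrable _ _)
      intro s _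
      exact inv_anti₀ (lt_of_lt_of_le hm1pos (hF1low s)) (hF1up s)
    have h2 : (∫ s in (0:ℝ)..θ, Mb⁻¹) = θ * Mb⁻¹ := by simp [mul_comm]
    have h3 : 0 < θ * Mb⁻¹ := by positivity
    simp only [hTdef]
    linarith
  have hPrange : ∀ t ∈ Icc (0:ℝ) T, P t ∈ Icc (0:ℝ) θ := by
    intro t ht
    constructor
    · rw [← hP0]; exact hPmono.monotone ht.1
    · rw [← hPT]; exact hPmono.monotone ht.2
  have hPode' : ∀ t ∈ Icc (0:ℝ) T, P t = ∫ s in (0:ℝ)..t, (f (P s) + (fun _ : ℝ => M) s * g (P s)) := by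
    intro t ht
    rw [hPode t]
    apply intervalIntegral.integral_congr
    intro s hs
    have hs' : s ∈ Icc (0:ℝ) T := by
      rw [uIcc_of_le ht.1] at hs
      exact ⟨hs.1, le_trans hs.2 ht.2⟩
    have hPs := hPrange s hs'
    simp only [hF1def]
    rw [hc1id (P s) hPs]
  have htrajP : IsTrajectory f g T M (fun _ => M) P :=
    ⟨measurable_const, fun t => ⟨hM0.le, le_refl M⟩, hPc.continuousOn, hP0, hPode'⟩
  -- F2, ramp, ec
  set F2 : ℝ → ℝ := fun x => F (c2 x) with hF2def
  have hF2c : Continuous F2 := hFW.comp_continuous hc2c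
    (fun x => (hWfacts (c2 x) (hc2mem x)).1)
  have hF2pos : ∀ x, 0 < F2 x := fun x => (hWfacts (c2 x) (hc2mem x)).2.1
  set ramp : ℝ → ℝ := fun p => max 0 (min 1 (min ((p + δ)/δ) ((θ + δ - p)/δ))) with hrampdef
  have hrampc : Continuous ramp := by fun_prop
  have hramp0 : ∀ p, 0 ≤ ramp p := fun p => le_max_left _ _
  have hramp1 : ∀ p, ramp p ≤ 1 := fun p => max_le zero_le_one (min_le_left _ _)
  have hrampIn : ∀ p ∈ Icc (0:ℝ) θ, ramp p = 1 := by
    intro p hp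
    have h1 : (1:ℝ) ≤ (p + δ)/δ := by
      rw [le_div_iff₀ hδpos]
      linarith [hp.1]
    have h2 : (1:ℝ) ≤ (θ + δ - p)/δ := by
      rw [le_div_iff₀ hδpos]
      linarith [hp.2]
    simp only [hrampdef]
    rw [min_eq_left (le_min h1 h2), max_eq_right zero_le_one]
  have hrampSupp : ∀ p : ℝ, 0 < ramp p → p ∈ Icc (-δ) (θ + δ) := by
    intro p hp
    have h1 : 0 < min 1 (min ((p + δ)/δ) ((θ + δ - p)/δ)) := by
      by_contra h
      push_neg at h
      simp only [hrampdef] at hp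
      rw [max_eq_left h] at hp
      exact lt_irrefl 0 hp
    have h2 : 0 < (p + δ)/δ := lt_of_lt_of_le h1 (le_trans (min_le_right _ _) (min_le_left _ _))
    have h3 : 0 < (θ + δ - p)/δ := lt_of_lt_of_le h1 (le_trans (min_le_right _ _) (min_le_right _ _))
    rw [div_pos_iff] at h2 h3
    rcases h2 with ⟨h2a, _⟩ | ⟨_, h2b⟩
    · rcases h3 with ⟨h3a, _⟩ | ⟨_, h3b⟩
      · constructor <;> linarith
      · linarith
    · linarith
  set ec : ℝ → ℝ := fun p => lM / F2 p * ramp p with hecdef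
  have hecc : Continuous ec :=
    (continuous_const.div hF2c (fun x => ne_of_gt (hF2pos x))).mul hrampc
  have hecnn : ∀ p, 0 ≤ ec p := by
    intro p
    apply mul_nonneg _ (hramp0 p)
    exact le_of_lt (div_pos hlMpos (hF2pos p))
  -- key pointwise inequality
  have hkey : ∀ p u : ℝ, 0 ≤ u → u ≤ M → ec p * (f p + u * g p) ≤ (1 - α) * u + α := by
    intro p u hu0 huM
    rcases eq_or_lt_of_le (hramp0 p) with h | h
    · have : ec p = 0 := by simp only [hecdef]; rw [← h, mul_zero]
      rw [this, zero_mul]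
      have : 0 ≤ (1 - α) * u := mul_nonneg (by linarith) hu0
      linarith
    · have hpmem : p ∈ Icc (-δ) (θ + δ) := hrampSupp p h
      have hc2p : c2 p = p := hc2id p hpmem
      have hF2p : F2 p = F p := by simp only [hF2def]; rw [hc2p]
      obtain ⟨hDp, hFp, hαF⟩ := hWfacts p hpmem
      set ρ : ℝ := ec p with hρdef
      have hρ : ρ = lM / F p * ramp p := by
        simp only [hρdef, hecdef, hF2p]
      have h0 : ρ * f p ≤ α := by
        rcases le_or_gt (f p) 0 with hfp | hfp
        · have : ρ * f p ≤ 0 := mul_nonpos_of_nonneg_of_nonpos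
            (by rw [hρ]; exact mul_nonneg (le_of_lt (div_pos hlMpos hFp)) (hramp0 p)) hfp
          linarith
        · have h1 : ρ * f p ≤ lM / F p * f p := by
            rw [hρ]
            have h2 : lM / F p * ramp p ≤ lM / F p * 1 :=
              mul_le_mul_of_nonneg_left (hramp1 p) (le_of_lt (div_pos hlMpos hFp))
            rw [mul_one] at h2
            exact mul_le_mul_of_nonneg_right h2 hfp.le
          have h3 : lM / F p * f p < α := by
            rw [div_mul_eq_mul_div, div_lt_iff₀ hFp, mul_comm lM (f p)]
            rw [mul_comm α (F p)]
            linarith [hαF]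
          linarith
      have hMe : ρ * (f p + M * g p) ≤ lM := by
        have h1 : f p + M * g p = F p := rfl
        rw [h1, hρ]
        have h2 : lM / F p * ramp p * F p = lM * ramp p := by
          field_simp
        rw [h2]
        calc lM * ramp p ≤ lM * 1 := mul_le_mul_of_nonneg_left (hramp1 p) hlMpos.le
          _ = lM := mul_one lM
      have hgoal : M * (ρ * (f p + u * g p)) ≤ M * ((1 - α) * u + α) := by
        have e1 : M * (ρ * (f p + u * g p)) = (M - u) * (ρ * f p) + u * (ρ * (f p + M * g p)) := by
          ring
        have e2 : (M - u) * (ρ * f p) ≤ (M - u) * α :=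
          mul_le_mul_of_nonneg_left h0 (by linarith)
        have e3 : u * (ρ * (f p + M * g p)) ≤ u * lM :=
          mul_le_mul_of_nonneg_left hMe hu0
        have e4 : (M - u) * α + u * lM = M * ((1 - α) * u + α) := by
          simp only [hlMdef]; ring
        linarith
      exact le_of_mul_le_mul_left hgoal hM0
  -- cost function φ
  set Φ : ℝ → ℝ := fun x => ∫ y in (0:ℝ)..x, ec y with hΦdef
  have hΦθ : Φ θ = lM * T := by
    have h1 : ∀ y ∈ uIcc (0:ℝ) θ, ec y = lM * (F1 y)⁻¹ := by
      intro y hy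
      rw [uIcc_of_le hθpos.le] at hy
      have hy2 : y ∈ Icc (-δ) (θ + δ) := ⟨by linarith [hy.1], by linarith [hy.2]⟩
      simp only [hecdef, hF2def, hF1def]
      rw [hc2id y hy2, hc1id y hy, hrampIn y hy, mul_one, div_eq_mul_inv]
    have h2 : Φ θ = ∫ y in (0:ℝ)..θ, lM * (F1 y)⁻¹ := by
      simp only [hΦdef]
      exact intervalIntegral.integral_congr h1
    rw [h2, intervalIntegral.integral_const_mul]
  -- our cost
  have hcostP : (1 - α) * (∫ t in (0:ℝ)..T, (fun _ : ℝ => M) t) + α * T = lM * T := by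
    rw [intervalIntegral.integral_const]
    simp only [smul_eq_mul, sub_zero, hlMdef]
    ring
  refine ⟨T, (fun _ => M), P, hTpos, htrajP, le_of_eq hPT.symm, ?_⟩
  intro S v q hS htraj hqS
  obtain ⟨hvmeas, hvbd, hqcont, hq0, hqint⟩ := htraj
  rw [hcostP]
  set hraw : ℝ → ℝ := fun s => f (q s) + v s * g (q s) with hrawdef
  have hqS_eq : q S = ∫ s in (0:ℝ)..S, hraw s := hqint S ⟨hS.le, le_refl S⟩
  -- integrability of hraw
  have hraw_ii : IntervalIntegrable hraw volume 0 S := by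
    by_contra hcon
    have h0 : (∫ s in (0:ℝ)..S, hraw s) = 0 := intervalIntegral.integral_undef hcon
    rw [h0] at hqS_eq
    have : θ ≤ 0 := hqS_eq ▸ hqS
    linarith
  -- indicator function
  set h1 : ℝ → ℝ := fun s => if s ∈ Icc (0:ℝ) S then hraw s else 0 with hh1def
  have hh1ind : h1 = Set.indicator (Icc (0:ℝ) S) hraw := by
    funext s
    simp [hh1def, Set.indicator_apply]
  have hh1int : Integrable h1 volume := by
    rw [hh1ind]
    rw [integrable_indicator_iff measurableSet_Icc]
    have hIoc : IntegrableOn hraw (Ioc 0 S) volume :=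
      (intervalIntegrable_iff_integrableOn_Ioc_of_le hS.le).mp hraw_ii
    exact (integrableOn_Icc_iff_integrableOn_Ioc (f := hraw)).mpr hIoc
  have hqhat : ∀ t ∈ Icc (0:ℝ) S, (∫ s in (0:ℝ)..t, h1 s) = q t := by
    intro t ht
    have : (∫ s in (0:ℝ)..t, h1 s) = ∫ s in (0:ℝ)..t, hraw s := by
      apply intervalIntegral.integral_congr
      intro s hs
      rw [uIcc_of_le ht.1] at hs
      have hmem : s ∈ Icc (0:ℝ) S := ⟨hs.1, le_trans hs.2 ht.2⟩
      show h1 s = hraw s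
      simp only [hh1def]
      exact if_pos hmem
    rw [this, ← hqint t ht]
  -- integrability of integrands on [0,S]
  have hv_ii : IntervalIntegrable v volume 0 S := by
    rw [intervalIntegrable_iff, uIoc_of_le hS.le]
    apply Integrable.mono' (g := fun _ : ℝ => M)
    · exact integrableOn_const measure_Ioc_lt_top.ne
    · exact hvmeas.aestronglyMeasurable.restrict
    · apply Eventually.of_forall
      intro t
      rw [Real.norm_eq_abs, abs_le]
      exact ⟨by linarith [(hvbd t).1, hM0], (hvbd t).2⟩
  have hRHS_ii : IntervalIntegrable (fun t => (1 - α) * v t + α) volume 0 S :=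
    (hv_ii.const_mul (1 - α)).add intervalIntegrable_const
  have hLHS_ii : IntervalIntegrable (fun t => ec (q t) * hraw t) volume 0 S := by
    apply hraw_ii.continuousOn_mul
    rw [uIcc_of_le hS.le]
    exact hecc.comp_continuousOn hqcont
  -- the chain of inequalities
  have step1 : (1 - α) * (∫ t in (0:ℝ)..S, v t) + α * S
      = ∫ t in (0:ℝ)..S, ((1 - α) * v t + α) := by
    rw [intervalIntegral.integral_add (hv_ii.const_mul (1 - α)) intervalIntegrable_const]
    rw [intervalIntegral.integral_const_mul, intervalIntegral.integral_const]
    simp only [smul_eq_mul, sub_zero]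
    ring
  have step2 : (∫ t in (0:ℝ)..S, ec (q t) * hraw t) ≤ ∫ t in (0:ℝ)..S, ((1 - α) * v t + α) := by
    apply intervalIntegral.integral_mono_on hS.le hLHS_ii hRHS_ii
    intro t ht
    exact hkey (q t) (v t) (hvbd t).1 (hvbd t).2
  have step3 : (∫ t in (0:ℝ)..S, ec (q t) * hraw t)
      = ∫ t in (0:ℝ)..S, ec (∫ s in (0:ℝ)..t, h1 s) * h1 t := by
    apply intervalIntegral.integral_congr
    intro t ht
    rw [uIcc_of_le hS.le] at ht
    show ec (q t) * hraw t = ec (∫ s in (0:ℝ)..t, h1 s) * h1 t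
    rw [hqhat t ht]
    have he1 : h1 t = hraw t := by simp only [hh1def]; exact if_pos ht
    rw [he1]
  have step4 : (∫ t in (0:ℝ)..S, ec (∫ s in (0:ℝ)..t, h1 s) * h1 t)
      = ∫ y in (0:ℝ)..(∫ s in (0:ℝ)..S, h1 s), ec y :=
    lemA ec h1 S hS.le hecc hh1int
  have hqhatS : (∫ s in (0:ℝ)..S, h1 s) = q S := hqhat S ⟨hS.le, le_refl S⟩
  have step5 : Φ θ ≤ ∫ y in (0:ℝ)..(∫ s in (0:ℝ)..S, h1 s), ec y := by
    rw [hqhatS]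
    have hθqS : θ ≤ q S := hqS
    have h1' : (∫ y in (0:ℝ)..(q S), ec y) - (∫ y in (0:ℝ)..θ, ec y)
        = ∫ y in θ..(q S), ec y :=
      intervalIntegral.integral_interval_sub_left
        (hecc.intervalIntegrable _ _) (hecc.intervalIntegrable _ _)
    have h2' : 0 ≤ ∫ y in θ..(q S), ec y :=
      intervalIntegral.integral_nonneg hθqS (fun y _ => hecnn y)
    simp only [hΦdef]
    linarith
  calc lM * T = Φ θ := hΦθ.symm
    _ ≤ ∫ y in (0:ℝ)..(∫ s in (0:ℝ)..S, h1 s), ec y := step5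
    _ = ∫ t in (0:ℝ)..S, ec (∫ s in (0:ℝ)..t, h1 s) * h1 t := step4.symm
    _ = ∫ t in (0:ℝ)..S, ec (q t) * hraw t := step3.symm
    _ ≤ ∫ t in (0:ℝ)..S, ((1 - α) * v t + α) := step2
    _ = (1 - α) * (∫ t in (0:ℝ)..S, v t) + α * S := step1.symm
end
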